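/- arXiv:1111.2945 — 6 statements merged into one kernel-verified Lean document; each statement's English description precedes it below -/
import Mathlib

section
/- Let h ≥ 0. Then (1+q)·f_h(q) − μ(f_h)·q^{h/2+1} = f_{h+1}(q) as polynomials (where the middle term is understood to be 0 when h is odd, since then μ(f_h) = 0). -/
open Polynomial

/-- The polynomial `f_h(q)` whose coefficient of `q^j`, for `0 ≤ j ≤ ⌊h/2⌋`, is the
Catalan-triangle entry `binom(h,j) − binom(h,j−1)` (with `binom(h,−1) = 0`). -/
noncomputable def catalanF (h : ℕ) : Polynomial ℤ :=
  ∑ j ∈ Finset.range (h / 2 + 1),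
    C ((h.choose j : ℤ) - if j = 0 then 0 else (h.choose (j - 1) : ℤ)) * X ^ j

lemma coeff_catalanF (h n : ℕ) : (catalanF h).coeff n =
    if n ≤ h / 2 then ((h.choose n : ℤ) - if n = 0 then 0 else (h.choose (n - 1) : ℤ)) else 0 := by
  rw [catalanF, Polynomial.finset_sum_coeff]
  simp only [Polynomial.coeff_C_mul, Polynomial.coeff_X_pow, mul_ite, mul_one, mul_zero,
    Finset.sum_ite_eq, Finset.mem_range, Nat.lt_succ_iff]

theorem stmt0 (h : ℕ) :
    (1 + X) * catalanF h -
      (if Even h then C ((catalanF h).coeff (h / 2)) * X ^ (h / 2 + 1) else 0) =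
    catalanF (h + 1) := by
  ext n
  rw [Polynomial.coeff_sub, add_mul, one_mul, Polynomial.coeff_add,
    apply_ite (fun p : Polynomial ℤ => p.coeff n), Polynomial.coeff_zero,
    Polynomial.coeff_C_mul, Polynomial.coeff_X_pow]
  rcases Nat.even_or_odd h with ⟨m, rfl⟩ | ⟨m, rfl⟩
  · have hm : m + m = 2 * m := by ring
    rw [hm]
    have h1 : 2 * m / 2 = m := by omega
    have h2 : (2 * m + 1) / 2 = m := by omega
    simp only [if_pos (even_two_mul m), h1, h2]
    rcases n with _ | n
    · simp [coeff_catalanF, Polynomial.mul_coeff_zero]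
    · rw [Polynomial.coeff_X_mul]
      simp only [coeff_catalanF, h1, h2, Nat.add_sub_cancel]
      rcases Nat.lt_trichotomy n m with hn | hn | hn
      · rcases n with _ | k
        · simp only [if_pos (by omega : 1 ≤ m), if_pos (by omega : (0:ℕ) ≤ m),
            if_neg (by omega : ¬ (0:ℕ) + 1 = m + 1), if_neg (by omega : ¬ (1:ℕ) = 0), if_pos rfl]
          norm_num [Nat.choose_succ_succ]
        · simp only [if_pos (by omega : k + 1 + 1 ≤ m), if_pos (by omega : k + 1 ≤ m),
            if_neg (by omega : ¬ k + 1 + 1 = m + 1), if_neg (by omega : ¬ k + 1 + 1 = 0),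
            if_neg (by omega : ¬ k + 1 = 0), Nat.add_sub_cancel]
          rw [Nat.choose_succ_succ (2*m) (k+1), Nat.choose_succ_succ (2*m) k]
          push_cast
          ring
      · subst hn
        simp only [if_neg (by omega : ¬ n + 1 ≤ n), if_pos (le_refl n), if_pos rfl, if_true, mul_one]
        ring
      · simp only [if_neg (by omega : ¬ n + 1 ≤ m), if_neg (by omega : ¬ n ≤ m),
          if_neg (by omega : ¬ n + 1 = m + 1), mul_zero]
        ring
  · have hodd : ¬ Even (2 * m + 1) := by simp [parity_simps]
    have h1 : (2 * m + 1) / 2 = m := by omega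
    have h2 : (2 * m + 1 + 1) / 2 = m + 1 := by omega
    simp only [if_neg hodd, h1, h2]
    rcases n with _ | n
    · simp [coeff_catalanF, Polynomial.mul_coeff_zero, h1, h2]
    · rw [Polynomial.coeff_X_mul]
      simp only [coeff_catalanF, h1, h2, sub_zero, Nat.add_sub_cancel]
      rcases Nat.lt_trichotomy n m with hn | hn | hn
      · rcases n with _ | k
        · simp only [if_pos (by omega : 1 ≤ m), if_pos (by omega : (0:ℕ) ≤ m),
            if_pos (by omega : (0:ℕ) + 1 ≤ m + 1), if_neg (by omega : ¬ (1:ℕ) = 0), if_pos rfl]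
          norm_num [Nat.choose_succ_succ]
        · simp only [if_pos (by omega : k + 1 + 1 ≤ m), if_pos (by omega : k + 1 ≤ m),
            if_pos (by omega : k + 1 + 1 ≤ m + 1), if_neg (by omega : ¬ k + 1 + 1 = 0),
            if_neg (by omega : ¬ k + 1 = 0), Nat.add_sub_cancel]
          rw [Nat.choose_succ_succ (2*m+1) (k+1), Nat.choose_succ_succ (2*m+1) k]
          push_cast
          ring
      · subst hn
        rcases n with _ | k
        · norm_num
        · simp only [if_neg (by omega : ¬ k + 1 + 1 ≤ k + 1), if_pos (le_refl (k+1)),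
            if_pos (le_refl (k+1+1)), if_neg (by omega : ¬ k + 1 = 0),
            if_neg (by omega : ¬ k + 1 + 1 = 0), Nat.add_sub_cancel]
          rw [Nat.choose_succ_succ (2*(k+1)+1) (k+1), Nat.choose_succ_succ (2*(k+1)+1) k,
            Nat.choose_symm_half (k+1)]
          push_cast
          ring
      · simp only [if_neg (by omega : ¬ n + 1 ≤ m), if_neg (by omega : ¬ n ≤ m),
          if_neg (by omega : ¬ n + 1 ≤ m + 1)]
        ring
end

section
/- A permutation π ∈ S_{n+1} is boolean if and only if π is the product of some subsequence of the word (s_1, s_2, …, s_{n−1}, s_n, s_{n−1}, …, s_2, s_1); that is, the boolean elements of S_{n+1} are exactly the elements lying below the top transposition (1, n+1) in Bruhat order. -/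
/-- The `i`-th adjacent transposition `s_{i+1}` (1-indexed `s_1, …, s_n`) in the
symmetric group `S_{n+1}`, realized as permutations of `Fin (n+1)`. -/
def adjTransposition (n : ℕ) (i : Fin n) : Equiv.Perm (Fin (n + 1)) :=
  Equiv.swap i.castSucc i.succ

/-- The product of a word in the adjacent transpositions. -/
def wordProdA (n : ℕ) (w : List (Fin n)) : Equiv.Perm (Fin (n + 1)) :=
  (w.map (adjTransposition n)).prod

/-- A word in the generators is reduced if no shorter word has the same product. -/
def ReducedA (n : ℕ) (w : List (Fin n)) : Prop :=
  ∀ w' : List (Fin n), wordProdA n w' = wordProdA n w → w.length ≤ w'.length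

/-- An element is a boolean reflection if it admits a reduced expression of the form
`s_{j_1} ⋯ s_{j_{k-1}} s_{j_k} s_{j_{k-1}} ⋯ s_{j_1}` with `j_1, …, j_k` pairwise distinct. -/
def IsBooleanReflectionA (n : ℕ) (t : Equiv.Perm (Fin (n + 1))) : Prop :=
  ∃ (l : List (Fin n)) (c : Fin n), (l ++ [c]).Nodup ∧
    ReducedA n (l ++ [c] ++ l.reverse) ∧ wordProdA n (l ++ [c] ++ l.reverse) = t

/-- A permutation is boolean if it is the product of some subsequence of a
boolean expression. -/
def IsBooleanA (n : ℕ) (π : Equiv.Perm (Fin (n + 1))) : Prop :=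
  ∃ (l : List (Fin n)) (c : Fin n), (l ++ [c]).Nodup ∧
    ReducedA n (l ++ [c] ++ l.reverse) ∧
    ∃ w : List (Fin n), w.Sublist (l ++ [c] ++ l.reverse) ∧ wordProdA n w = π

/-- The top boolean word `s_1 s_2 ⋯ s_{n-1} s_n s_{n-1} ⋯ s_2 s_1`. -/
def topWordA (n : ℕ) : List (Fin n) :=
  List.finRange n ++ ((List.finRange n).dropLast).reverse

namespace BP

open List

/-- generator with ℕ index; `1` out of range -/
def genN (n : ℕ) (j : ℕ) : Equiv.Perm (Fin (n+1)) :=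
  if h : j < n then Equiv.swap ⟨j, by omega⟩ ⟨j+1, by omega⟩ else 1

def wp (n : ℕ) (w : List ℕ) : Equiv.Perm (Fin (n+1)) := (w.map (genN n)).prod

variable {n : ℕ}

@[simp] lemma wp_nil : wp n [] = 1 := rfl
@[simp] lemma wp_cons (j : ℕ) (w : List ℕ) : wp n (j :: w) = genN n j * wp n w := by
  simp [wp]
@[simp] lemma wp_append (u v : List ℕ) : wp n (u ++ v) = wp n u * wp n v := by
  simp [wp]
@[simp] lemma wp_singleton (j : ℕ) : wp n [j] = genN n j := by simp [wp]

lemma genN_invol (j : ℕ) : genN n j * genN n j = 1 := by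
  unfold genN; split_ifs <;> simp [Equiv.swap_mul_self]

lemma genN_inv (j : ℕ) : (genN n j)⁻¹ = genN n j :=
  inv_eq_of_mul_eq_one_right (genN_invol j)

lemma genN_conj_swap (j : ℕ) (x y : Fin (n+1)) :
    genN n j * Equiv.swap x y * genN n j = Equiv.swap (genN n j x) (genN n j y) := by
  rw [Equiv.swap_apply_apply, genN_inv]

lemma genN_apply (j : ℕ) (hj : j < n) (x : Fin (n+1)) :
    genN n j x = if x.val = j then ⟨j+1, by omega⟩ else if x.val = j+1 then ⟨j, by omega⟩
      else x := by
  simp only [genN, dif_pos hj, Equiv.swap_apply_def]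
  split_ifs <;> simp_all [Fin.ext_iff] <;> omega

def fn (n a : ℕ) : Fin (n+1) := ⟨min a n, by omega⟩

lemma fn_val (h : a ≤ n) : (fn n a : Fin (n+1)) = ⟨a, by omega⟩ := by
  simp [fn, Fin.ext_iff]; omega

def swapN (n a b : ℕ) : Equiv.Perm (Fin (n+1)) := Equiv.swap (fn n a) (fn n b)

lemma conj_extend_left (hab : a + 1 < b) (hb : b ≤ n) :
    genN n a * swapN n (a+1) b * genN n a = swapN n a b := by
  have ha : a < n := by omega
  rw [swapN, genN_conj_swap, swapN]
  congr 1
  · rw [fn_val (by omega), fn_val (by omega), genN_apply a ha]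
    simp
  · rw [fn_val (by omega), genN_apply a ha]
    simp only [Fin.ext_iff]
    split_ifs <;> simp_all <;> omega

lemma conj_extend_right (hab : a < b) (hb : b < n) :
    genN n b * swapN n a b * genN n b = swapN n a (b+1) := by
  rw [swapN, genN_conj_swap, swapN]
  congr 1
  · rw [fn_val (by omega), genN_apply b hb]
    simp only [Fin.ext_iff]
    split_ifs <;> simp_all <;> omega
  · rw [fn_val (by omega), fn_val (by omega), genN_apply b hb]
    simp

lemma conj_commute (j a b : ℕ) (hj : j < n) (hab : a < b) (hb : b ≤ n)
    (h : j + 1 < a ∨ b < j) : genN n j * swapN n a b * genN n j = swapN n a b := by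
  rw [swapN, genN_conj_swap]
  congr 1
  · rw [fn_val (by omega), genN_apply j hj]
    simp only [Fin.ext_iff]
    split_ifs <;> simp_all <;> omega
  · rw [fn_val (by omega), genN_apply j hj]
    simp only [Fin.ext_iff]
    split_ifs <;> simp_all <;> omega

lemma genN_comm (i j : ℕ) (h : i + 2 ≤ j) : genN n i * genN n j = genN n j * genN n i := by
  by_cases hj : j < n
  · have hi : i < n := by omega
    have h1 : genN n i * genN n j * genN n i = genN n j := by
      rw [show genN n j = Equiv.swap (⟨j, by omega⟩ : Fin (n+1)) ⟨j+1, by omega⟩ from by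
        simp [genN, dif_pos hj], genN_conj_swap]
      congr 1 <;> rw [genN_apply i hi] <;> simp only [Fin.ext_iff] <;>
        split_ifs <;> simp_all <;> omega
    calc genN n i * genN n j = genN n i * genN n j * genN n i * genN n i := by
          rw [mul_assoc, genN_invol, mul_one]
      _ = genN n j * genN n i := by rw [h1]
  · simp [show genN n j = 1 from by simp [genN, hj]]

set_option maxRecDepth 4000 in
lemma genN_braid (i : ℕ) (h : i + 1 < n) :
    genN n i * genN n (i+1) * genN n i = genN n (i+1) * genN n i * genN n (i+1) := by
  have hi : i < n := by omega
  have e1 : genN n i * genN n (i+1) * genN n i = swapN n i (i+2) := by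
    rw [show genN n (i+1) = Equiv.swap (⟨i+1, by omega⟩ : Fin (n+1)) ⟨i+2, by omega⟩ from by
      simp [genN, dif_pos h], genN_conj_swap, swapN]
    congr 1 <;> rw [fn_val (by omega), genN_apply i hi] <;> simp only [Fin.ext_iff] <;>
      split_ifs <;> simp_all <;> omega
  have e2 : genN n (i+1) * genN n i * genN n (i+1) = swapN n i (i+2) := by
    rw [show genN n i = Equiv.swap (⟨i, by omega⟩ : Fin (n+1)) ⟨i+1, by omega⟩ from by
      simp [genN, dif_pos hi], genN_conj_swap, swapN]
    congr 1 <;> rw [fn_val (by omega), genN_apply (i+1) h] <;> simp only [Fin.ext_iff] <;>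
      split_ifs <;> (simp; try omega)
  rw [e1, e2]

/-! ### inversion counting -/

lemma genN_lt {j : ℕ} (hj : j < n) (x y : Fin (n+1)) (hxy : x < y)
    (h : genN n j y < genN n j x) : x = ⟨j, by omega⟩ ∧ y = ⟨j+1, by omega⟩ := by
  rw [genN_apply j hj x, genN_apply j hj y] at h
  simp only [Fin.lt_def, Fin.ext_iff] at *
  split_ifs at h <;> simp_all <;> omega

def invCount (σ : Equiv.Perm (Fin (n+1))) : ℕ :=
  (Finset.univ.filter fun p : Fin (n+1) × Fin (n+1) => p.1 < p.2 ∧ σ p.2 < σ p.1).card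

lemma invCount_gen_mul (j : ℕ) (σ : Equiv.Perm (Fin (n+1))) :
    invCount (genN n j * σ) ≤ invCount σ + 1 := by
  by_cases hj : j < n
  · have key : (Finset.univ.filter fun p : Fin (n+1) × Fin (n+1) =>
        p.1 < p.2 ∧ (genN n j * σ) p.2 < (genN n j * σ) p.1) ⊆
        insert (σ⁻¹ ⟨j, by omega⟩, σ⁻¹ ⟨j+1, by omega⟩)
          (Finset.univ.filter fun p : Fin (n+1) × Fin (n+1) => p.1 < p.2 ∧ σ p.2 < σ p.1) := by
      intro p hp
      simp only [Finset.mem_filter, Finset.mem_univ, true_and] at hp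
      obtain ⟨h12, hinv⟩ := hp
      simp only [Finset.mem_insert, Finset.mem_filter, Finset.mem_univ, true_and]
      by_cases hs : σ p.2 < σ p.1
      · exact Or.inr ⟨h12, hs⟩
      · left
        have hne : σ p.1 ≠ σ p.2 := fun e => (ne_of_lt h12) (σ.injective e)
        have hlt : σ p.1 < σ p.2 := lt_of_le_of_ne (not_lt.mp hs) hne
        simp only [Equiv.Perm.mul_apply] at hinv
        have h1 : σ p.1 = ⟨j, by omega⟩ ∧ σ p.2 = ⟨j+1, by omega⟩ :=
          genN_lt hj _ _ hlt hinv
        have e1 : p.1 = σ⁻¹ ⟨j, by omega⟩ := by rw [← h1.1]; simp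
        have e2 : p.2 = σ⁻¹ ⟨j+1, by omega⟩ := by rw [← h1.2]; simp
        rw [Prod.ext_iff]; exact ⟨e1, e2⟩
    refine le_trans (Finset.card_le_card key) ?_
    refine le_trans (Finset.card_insert_le _ _) ?_
    simp [invCount]
  · simp [show genN n j = 1 from by simp [genN, hj], invCount]

lemma invCount_le_length (w : List ℕ) : invCount (wp n w) ≤ w.length := by
  induction w with
  | nil =>
      have h0 : (Finset.univ.filter fun p : Fin (n+1) × Fin (n+1) =>
          p.1 < p.2 ∧ p.2 < p.1) = ∅ :=
        Finset.filter_false_of_mem (fun p _ h => lt_asymm h.1 h.2)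
      simp [invCount]; exact Finset.filter_false_of_mem (fun p _ h => lt_asymm h.1 h.2)
  | cons j w ih =>
      rw [wp_cons]
      calc invCount (genN n j * wp n w) ≤ invCount (wp n w) + 1 := invCount_gen_mul j _
        _ ≤ w.length + 1 := by omega
        _ = (j :: w).length := by simp

/-! ### canonical words -/

def canon (a b : ℕ) : List ℕ := List.range' a (b-a) ++ (List.range' a (b-a-1)).reverse
def canon' (a b : ℕ) : List ℕ := (List.range' a (b-a)).reverse ++ List.range' (a+1) (b-a-1)

lemma canon_base (a : ℕ) : canon a (a+1) = [a] := by simp [canon]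
lemma canon'_base (a : ℕ) : canon' a (a+1) = [a] := by simp [canon']

lemma canon_cons {a b : ℕ} (h : a + 1 < b) : canon a b = a :: canon (a+1) b ++ [a] := by
  obtain ⟨k, rfl⟩ : ∃ k, b = a + k + 2 := ⟨b - a - 2, by omega⟩
  have h1 : a + k + 2 - a = k + 2 := by omega
  have h2 : a + k + 2 - a - 1 = k + 1 := by omega
  have h3 : a + k + 2 - (a+1) = k + 1 := by omega
  have h4 : a + k + 2 - (a+1) - 1 = k := by omega
  simp only [canon, h1, h3]
  rw [show k+2-1 = k+1 from rfl, show k+1-1 = k from rfl, List.range'_succ,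
    List.range'_succ (s := a) (n := k)]
  simp [List.range'_succ]

lemma canon'_concat {x y : ℕ} (h : x < y) : canon' x (y+1) = y :: canon' x y ++ [y] := by
  obtain ⟨k, rfl⟩ : ∃ k, y = x + k + 1 := ⟨y - x - 1, by omega⟩
  have h1 : x + k + 1 + 1 - x = k + 2 := by omega
  have h2 : x + k + 1 + 1 - x - 1 = k + 1 := by omega
  have h3 : x + k + 1 - x = k + 1 := by omega
  have h4 : x + k + 1 - x - 1 = k := by omega
  simp only [canon', h1, h3]
  rw [show k+2-1 = k+1 from rfl, show k+1-1 = k from rfl, List.range'_concat,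
    List.range'_concat (s := x+1) (n := k)]
  simp [List.range'_concat]
  omega

/-! ### subword-product domination -/

def SubEq (n : ℕ) (Z Z' : List ℕ) : Prop :=
  ∀ w, w <+ Z → ∃ v, v <+ Z' ∧ wp n v = wp n w

lemma SubEq.rfl (Z : List ℕ) : SubEq n Z Z := fun w hw => ⟨w, hw, _root_.rfl⟩

lemma SubEq.trans {X Y Z : List ℕ} (h1 : SubEq n X Y) (h2 : SubEq n Y Z) : SubEq n X Z :=
  fun w hw => by
    obtain ⟨v, hv, e⟩ := h1 w hw
    obtain ⟨u, hu, e'⟩ := h2 v hv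
    exact ⟨u, hu, e'.trans e⟩

lemma sub_wrap {α : Type*} {j : α} {M w : List α} (h : w <+ j :: M ++ [j]) :
    ∃ (w₁ : List α) (d e : Bool), w₁ <+ M ∧
      w = (cond d [j] []) ++ w₁ ++ (cond e [j] []) := by
  rcases List.sublist_cons_iff.mp h with h' | ⟨r, rfl, hr⟩
  · rcases List.sublist_append_iff.mp h' with ⟨r₁, r₂, rfl, h1, h2⟩
    rcases List.sublist_singleton.mp h2 with rfl | rfl
    · exact ⟨r₁, false, false, h1, by simp⟩
    · exact ⟨r₁, false, true, h1, by simp⟩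
  · rcases List.sublist_append_iff.mp hr with ⟨r₁, r₂, rfl, h1, h2⟩
    rcases List.sublist_singleton.mp h2 with rfl | rfl
    · exact ⟨r₁, true, false, h1, by simp⟩
    · exact ⟨r₁, true, true, h1, by simp⟩

lemma wrap_sub {α : Type*} {j : α} {M w₁ : List α} (h : w₁ <+ M) (d e : Bool) :
    (cond d [j] []) ++ w₁ ++ (cond e [j] []) <+ j :: M ++ [j] := by
  have h1 : cond d [j] [] <+ [j] := by cases d <;> simp
  have h2 : cond e [j] [] <+ [j] := by cases e <;> simp
  have := List.Sublist.append (List.Sublist.append h1 h) h2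
  simpa [List.append_assoc] using this

lemma wp_wrap (j : ℕ) (w : List ℕ) (d e : Bool) :
    wp n ((cond d [j] []) ++ w ++ (cond e [j] [])) =
      (cond d (genN n j) 1) * wp n w * (cond e (genN n j) 1) := by
  cases d <;> cases e <;> simp [mul_assoc]

lemma SubEq.close {Z Z' : List ℕ} (j : ℕ) (h : SubEq n Z Z') :
    SubEq n (j :: Z ++ [j]) (j :: Z' ++ [j]) := by
  intro w hw
  obtain ⟨w₁, d, e, hsub, rfl⟩ := sub_wrap hw
  obtain ⟨v₁, hv₁, hwp⟩ := h w₁ hsub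
  exact ⟨_, wrap_sub hv₁ d e, by rw [wp_wrap, wp_wrap, hwp]⟩

lemma swap_order (i j : ℕ) (Z : List ℕ) (hc : genN n i * genN n j = genN n j * genN n i) :
    SubEq n (i :: (j :: Z ++ [j]) ++ [i]) (j :: (i :: Z ++ [i]) ++ [j]) := by
  intro w hw
  obtain ⟨w₂, d, e, hs2, rfl⟩ := sub_wrap hw
  obtain ⟨w₁, d', e', hs1, rfl⟩ := sub_wrap hs2
  refine ⟨(cond d' [j] []) ++ ((cond d [i] []) ++ w₁ ++ (cond e [i] [])) ++ (cond e' [j] []),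
    wrap_sub (wrap_sub hs1 d e) d' e', ?_⟩
  rw [wp_wrap, wp_wrap, wp_wrap, wp_wrap]
  have hc' : ∀ p q : Bool, (cond p (genN n i) 1) * (cond q (genN n j) 1)
      = (cond q (genN n j) 1) * (cond p (genN n i) 1) := by
    intro p q; cases p <;> cases q <;> simp [hc]
  calc (cond d' (genN n j) 1) * ((cond d (genN n i) 1) * wp n w₁ * (cond e (genN n i) 1))
        * (cond e' (genN n j) 1)
      = ((cond d' (genN n j) 1) * (cond d (genN n i) 1)) * wp n w₁
          * ((cond e (genN n i) 1) * (cond e' (genN n j) 1)) := by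
        simp only [mul_assoc]
    _ = ((cond d (genN n i) 1) * (cond d' (genN n j) 1)) * wp n w₁
          * ((cond e' (genN n j) 1) * (cond e (genN n i) 1)) := by
        rw [← hc' d d', hc' e e']
    _ = (cond d (genN n i) 1) * ((cond d' (genN n j) 1) * wp n w₁ * (cond e' (genN n j) 1))
          * (cond e (genN n i) 1) := by
        simp only [mul_assoc]

lemma subeq_three (x y : ℕ)
    (hb : genN n x * genN n y * genN n x = genN n y * genN n x * genN n y) :
    SubEq n [x, y, x] [y, x, y] := by
  intro w hw
  have hw' : w <+ x :: [y] ++ [x] := by simpa using hw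
  obtain ⟨w₁, d, e, hs, rfl⟩ := sub_wrap hw'
  have t1 : [x] <+ [y, x, y] := .cons y (.cons₂ x (List.nil_sublist _))
  have t2 : [y] <+ [y, x, y] := .cons₂ y (List.nil_sublist _)
  have t3 : [x, y] <+ [y, x, y] := .cons y (.cons₂ x (.cons₂ y List.Sublist.slnil))
  have t4 : [y, x] <+ [y, x, y] := .cons₂ y (.cons₂ x (List.nil_sublist _))
  rcases List.sublist_singleton.mp hs with rfl | rfl <;> cases d <;> cases e
  · exact ⟨[], List.nil_sublist _, by simp⟩
  · exact ⟨[x], t1, by simp⟩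
  · exact ⟨[x], t1, by simp⟩
  · exact ⟨[], List.nil_sublist _, by simp [← mul_assoc, genN_invol]⟩
  · exact ⟨[y], t2, by simp⟩
  · exact ⟨[y, x], t4, by simp⟩
  · exact ⟨[x, y], t3, by simp⟩
  · refine ⟨[y, x, y], List.Sublist.refl _, ?_⟩
    simp only [wp_cons, wp_append, wp_singleton, wp_nil, cond, mul_one, one_mul, ← mul_assoc]
    exact hb.symm

lemma Elemma : ∀ k a b, b = a + k → 1 ≤ k → b ≤ n →
    SubEq n (canon a b) (canon' a b) ∧ SubEq n (canon' a b) (canon a b) := by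
  intro k
  induction k using Nat.strong_induction_on with
  | _ k IH =>
    intro a b hb1 hk hbn
    by_cases hk1 : k = 1
    · subst hk1; subst hb1
      rw [canon_base, canon'_base]
      exact ⟨SubEq.rfl _, SubEq.rfl _⟩
    by_cases hk2 : k = 2
    · subst hk2; subst hb1
      have ec : canon a (a+2) = [a, a+1, a] := by
        rw [show a + 2 = (a+1) + 1 by omega, canon_cons (by omega), canon_base]
        rfl
      have ec' : canon' a (a+2) = [a+1, a, a+1] := by
        rw [show a + 2 = (a+1) + 1 by omega, canon'_concat (by omega), canon'_base]
        rfl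
      have hbr := genN_braid (n := n) a (by omega)
      rw [ec, ec']
      exact ⟨subeq_three a (a+1) hbr, subeq_three (a+1) a hbr.symm⟩
    · -- k ≥ 3
      have hk3 : 3 ≤ k := by omega
      subst hb1
      set b := a + k with hbdef
      have IH1 := IH (k-1) (by omega) (a+1) b (by omega) (by omega) hbn
      have IH2 := IH (k-2) (by omega) (a+1) (b-1) (by omega) (by omega) (by omega)
      have IH3 := IH (k-1) (by omega) a (b-1) (by omega) (by omega) (by omega)
      have e1 : canon a b = a :: canon (a+1) b ++ [a] := canon_cons (by omega)
      have e2 : canon' (a+1) b = (b-1) :: canon' (a+1) (b-1) ++ [b-1] := by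
        have := canon'_concat (x := a+1) (y := b-1) (by omega)
        rwa [show b-1+1 = b by omega] at this
      have e3 : canon a (b-1) = a :: canon (a+1) (b-1) ++ [a] := canon_cons (by omega)
      have e4 : canon' a b = (b-1) :: canon' a (b-1) ++ [b-1] := by
        have := canon'_concat (x := a) (y := b-1) (by omega)
        rwa [show b-1+1 = b by omega] at this
      have hcomm : genN n a * genN n (b-1) = genN n (b-1) * genN n a :=
        genN_comm a (b-1) (by omega)
      constructor
      · -- canon a b → canon' a b
        have s1 : SubEq n (canon a b) (a :: canon' (a+1) b ++ [a]) := by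
          rw [e1]; exact SubEq.close a IH1.1
        rw [e2] at s1
        have s2 : SubEq n (a :: ((b-1) :: canon' (a+1) (b-1) ++ [b-1]) ++ [a])
            ((b-1) :: (a :: canon' (a+1) (b-1) ++ [a]) ++ [b-1]) :=
          swap_order a (b-1) _ hcomm
        have s3 : SubEq n (a :: canon' (a+1) (b-1) ++ [a]) (canon' a (b-1)) := by
          have t1 : SubEq n (a :: canon' (a+1) (b-1) ++ [a]) (canon a (b-1)) := by
            rw [e3]; exact SubEq.close a IH2.2
          exact t1.trans IH3.1
        have s4 : SubEq n ((b-1) :: (a :: canon' (a+1) (b-1) ++ [a]) ++ [b-1]) (canon' a b) := by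
          rw [e4]; exact SubEq.close (b-1) s3
        exact (s1.trans s2).trans s4
      · -- canon' a b → canon a b
        have s1 : SubEq n (canon' a b) ((b-1) :: canon a (b-1) ++ [b-1]) := by
          rw [e4]; exact SubEq.close (b-1) IH3.2
        rw [e3] at s1
        have s2 : SubEq n ((b-1) :: (a :: canon (a+1) (b-1) ++ [a]) ++ [b-1])
            (a :: ((b-1) :: canon (a+1) (b-1) ++ [b-1]) ++ [a]) :=
          swap_order (b-1) a _ hcomm.symm
        have s3 : SubEq n ((b-1) :: canon (a+1) (b-1) ++ [b-1]) (canon (a+1) b) := by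
          have t1 : SubEq n ((b-1) :: canon (a+1) (b-1) ++ [b-1]) (canon' (a+1) b) := by
            rw [e2]; exact SubEq.close (b-1) IH2.1
          exact t1.trans IH1.2
        have s4 : SubEq n (a :: ((b-1) :: canon (a+1) (b-1) ++ [b-1]) ++ [a]) (canon a b) := by
          rw [e1]; exact SubEq.close a s3
        exact (s1.trans s2).trans s4

/-! ### V-shaped boolean words -/

inductive Chain (n : ℕ) : ℕ → ℕ → List ℕ → Prop
  | base (c : ℕ) (h : c < n) : Chain n c (c+1) [c]
  | left (a b : ℕ) (w : List ℕ) (hw : Chain n (a+1) b w) : Chain n a b (a :: w ++ [a])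
  | right (a b : ℕ) (w : List ℕ) (hw : Chain n a b w) (hb : b < n) :
      Chain n a (b+1) (b :: w ++ [b])

lemma Chain.lt {a b : ℕ} {W : List ℕ} (h : Chain n a b W) : a < b ∧ b ≤ n := by
  induction h with
  | base c hc => omega
  | left a b w hw ih => omega
  | right a b w hw hb ih => omega

lemma Chain.prod {a b : ℕ} {W : List ℕ} (h : Chain n a b W) : wp n W = swapN n a b := by
  induction h with
  | base c hc =>
      rw [wp_singleton, swapN, fn_val (by omega), fn_val (by omega)]
      simp [genN, hc]
  | left a b w hw ih =>
      have hab := hw.lt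
      simp only [wp_append, wp_cons, wp_singleton, wp_nil, mul_one]
      rw [ih]
      exact conj_extend_left hab.1 hab.2
  | right a b w hw hb ih =>
      have hab := hw.lt
      simp only [wp_append, wp_cons, wp_singleton, wp_nil, mul_one]
      rw [ih]
      exact conj_extend_right hab.1 hb

lemma Chain.mem {a b : ℕ} {W : List ℕ} (h : Chain n a b W) :
    ∀ x, a ≤ x → x < b → x ∈ W := by
  induction h with
  | base c hc => intro x h1 h2; simp; omega
  | left a b w hw ih =>
      intro x h1 h2
      by_cases hx : x = a
      · simp [hx]
      · have := ih x (by omega) h2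
        simp [this]
  | right a b w hw hb ih =>
      intro x h1 h2
      by_cases hx : x = b
      · simp [hx]
      · have := ih x h1 (by omega)
        simp [this]

lemma chain_canon : ∀ k a, 1 ≤ k → a + k ≤ n → Chain n a (a+k) (canon a (a+k)) := by
  intro k
  induction k with
  | zero => omega
  | succ k ih =>
      intro a hk hb
      by_cases h0 : k = 0
      · subst h0
        rw [canon_base]
        exact Chain.base a (by omega)
      · rw [canon_cons (by omega)]
        have := ih (a+1) (by omega) (by omega)
        rw [show a+1+k = a+(k+1) by omega] at this
        exact Chain.left _ _ _ this

lemma chain_subeq {a b : ℕ} {W : List ℕ} (h : Chain n a b W) : SubEq n W (canon a b) := by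
  induction h with
  | base c hc => rw [canon_base]; exact SubEq.rfl _
  | left a b w hw ih =>
      rw [canon_cons hw.lt.1]
      exact SubEq.close a ih
  | right a b w hw hb ih =>
      have h1 := hw.lt
      have E1 := Elemma (n := n) (b - a) a b (by omega) (by omega) (by omega)
      have E2 := Elemma (n := n) (b + 1 - a) a (b+1) (by omega) (by omega) (by omega)
      have s1 : SubEq n (b :: w ++ [b]) (b :: canon' a b ++ [b]) :=
        SubEq.close b (ih.trans E1.1)
      have e4 : canon' a (b+1) = b :: canon' a b ++ [b] := canon'_concat h1.1
      rw [← e4] at s1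
      exact s1.trans E2.2

/-! ### the top word -/

def natTop (n : ℕ) : List ℕ := List.range' 0 n ++ (List.range' 0 (n-1)).reverse

lemma natTop_eq_canon : natTop n = canon 0 n := by simp [natTop, canon]

lemma range'_sub {a k m : ℕ} (h : a + k ≤ m) : List.range' a k <+ List.range' 0 m := by
  have e : List.range' 0 a ++ List.range' a (m-a) = List.range' 0 m := by
    have := List.range'_append (s := 0) (m := a) (n := m-a) (step := 1)
    simp only [one_mul, zero_add] at this
    rw [this, show a+(m-a) = m by omega]
  rw [← e]
  exact List.sublist_append_of_sublist_right (List.range'_sublist_right.mpr (by omega))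

lemma canon_sublist {a b : ℕ} (hab : a < b) (hb : b ≤ n) : canon a b <+ natTop n := by
  apply List.Sublist.append
  · exact range'_sub (by omega)
  · exact List.reverse_sublist.mpr (range'_sub (by omega))

/-! ### translation to `Fin` words -/

lemma genN_adj (j : Fin n) : genN n j.val = adjTransposition n j := by
  unfold genN adjTransposition
  rw [dif_pos j.isLt]
  congr 1 <;> simp [Fin.ext_iff]

lemma wordProdA_eq (w : List (Fin n)) : wordProdA n w = wp n (w.map Fin.val) := by
  induction w with
  | nil => rfl
  | cons j w ih =>
      simp only [wordProdA, List.map_cons, List.prod_cons, wp_cons] at *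
      rw [genN_adj, ih]

lemma SL : ∀ (l : List (Fin n)) (c : Fin n), (l ++ [c]).Nodup →
    ReducedA n (l ++ [c] ++ l.reverse) →
    ∃ a b, Chain n a b ((l ++ [c] ++ l.reverse).map Fin.val) := by
  intro l
  induction l with
  | nil =>
      intro c _ _
      exact ⟨c.val, c.val+1, by simpa using Chain.base (n := n) c.val c.isLt⟩
  | cons j l' ih =>
      intro c hnd hred
      have hndc : (j :: (l' ++ [c])).Nodup := by simpa using hnd
      have hnd' : (l' ++ [c]).Nodup := hndc.of_cons
      have hjnot : j ∉ l' ++ [c] := (List.nodup_cons.mp hndc).1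
      have hlenO : ((j :: l') ++ [c] ++ (j :: l').reverse).length = 2 * l'.length + 3 := by
        simp; omega
      have hlenI : (l' ++ [c] ++ l'.reverse).length = 2 * l'.length + 1 := by
        simp; omega
      have hmapshape : ((j :: l') ++ [c] ++ (j :: l').reverse).map Fin.val
          = j.val :: ((l' ++ [c] ++ l'.reverse).map Fin.val) ++ [j.val] := by
        simp
      have houter : ∀ w' : List ℕ,
          wp n (((j :: l') ++ [c] ++ (j :: l').reverse).map Fin.val)
            = genN n j.val * wp n ((l' ++ [c] ++ l'.reverse).map Fin.val) * genN n j.val := by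
        intro _
        rw [hmapshape]
        simp [mul_assoc]
      have hredInner : ReducedA n (l' ++ [c] ++ l'.reverse) := by
        intro w' hw'
        have h2 : wordProdA n (j :: (w' ++ [j]))
            = wordProdA n ((j :: l') ++ [c] ++ (j :: l').reverse) := by
          rw [wordProdA_eq, wordProdA_eq, houter []]
          rw [wordProdA_eq, wordProdA_eq] at hw'
          simp [mul_assoc, hw']
        have h3 := hred _ h2
        simp at h3 ⊢
        omega
      obtain ⟨a, b, hC⟩ := ih c hnd' hredInner
      have hlt := hC.lt
      by_cases hcase1 : a ≤ j.val ∧ j.val < b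
      · exfalso
        have hmem := hC.mem j.val hcase1.1 hcase1.2
        obtain ⟨x, hx, hxv⟩ := List.mem_map.mp hmem
        have hxj : x = j := Fin.ext hxv
        subst hxj
        rcases List.mem_append.mp hx with hx1 | hx2
        · exact hjnot hx1
        · exact hjnot (List.mem_append.mpr (Or.inl (List.mem_reverse.mp hx2)))
      by_cases hcase2 : j.val + 1 = a
      · refine ⟨j.val, b, ?_⟩
        rw [hmapshape]
        exact Chain.left j.val b _ (hcase2 ▸ hC)
      by_cases hcase3 : j.val = b
      · subst hcase3
        refine ⟨a, j.val + 1, ?_⟩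
        rw [hmapshape]
        exact Chain.right a _ _ hC j.isLt
      · exfalso
        have hor : j.val + 1 < a ∨ b < j.val := by omega
        have hcomm := conj_commute j.val a b j.isLt hlt.1 hlt.2 hor
        have heq : wordProdA n (l' ++ [c] ++ l'.reverse)
            = wordProdA n ((j :: l') ++ [c] ++ (j :: l').reverse) := by
          rw [wordProdA_eq, wordProdA_eq, houter [], hC.prod, hcomm]
        have h3 := hred _ heq
        rw [hlenO] at h3
        rw [hlenI] at h3
        omega

/-! ### topword facts -/

lemma topWordA_map (hn : 1 ≤ n) : (topWordA n).map Fin.val = natTop n := by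
  have e1 : List.range n = List.range' 0 n := List.range_eq_range' (n := n)
  have e2 : (List.range' 0 n).dropLast = List.range' 0 (n-1) := by
    have : List.range' 0 ((n-1)+1) = List.range' 0 (n-1) ++ [0 + 1*(n-1)] :=
      List.range'_concat (s := 0) (n := n-1)
    rw [show (n-1)+1 = n by omega] at this
    rw [this, List.dropLast_concat]
  simp only [topWordA, natTop, List.map_append, List.map_reverse, List.map_dropLast,
    List.map_coe_finRange_eq_range, e1, e2]

lemma invCount_lower (hn : 1 ≤ n) : 2*n - 1 ≤ invCount (n := n) (swapN n 0 n) := by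
  classical
  set T := swapN n 0 n with hT
  set z : Fin (n+1) := ⟨0, by omega⟩ with hz
  set m : Fin (n+1) := ⟨n, by omega⟩ with hm
  have hzfn : fn n 0 = z := by simp [fn, hz, Fin.ext_iff]
  have hmfn : fn n n = m := by simp [fn, hm, Fin.ext_iff]
  have hTz : T z = m := by rw [hT, swapN, hzfn, hmfn]; exact Equiv.swap_apply_left _ _
  have hTm : T m = z := by rw [hT, swapN, hzfn, hmfn]; exact Equiv.swap_apply_right _ _
  have hTx : ∀ x : Fin (n+1), x ≠ z → x ≠ m → T x = x := by
    intro x h1 h2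
    rw [hT, swapN, hzfn, hmfn]
    exact Equiv.swap_apply_of_ne_of_ne h1 h2
  set S1 : Finset (Fin (n+1) × Fin (n+1)) := (Finset.univ.erase z).image (fun y => (z, y)) with hS1
  set S2 : Finset (Fin (n+1) × Fin (n+1)) := (Finset.univ.erase m).image (fun x => (x, m)) with hS2
  have hS1card : S1.card = n := by
    rw [hS1, Finset.card_image_of_injective _ (fun y1 y2 h => ((Prod.mk.injEq _ _ _ _).mp h).2)]
    rw [Finset.card_erase_of_mem (Finset.mem_univ z)]
    simp
  have hS2card : S2.card = n := by
    rw [hS2, Finset.card_image_of_injective _ (fun y1 y2 h => ((Prod.mk.injEq _ _ _ _).mp h).1)]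
    rw [Finset.card_erase_of_mem (Finset.mem_univ m)]
    simp
  have hsub : S1 ∪ S2 ⊆ Finset.univ.filter (fun p => p.1 < p.2 ∧ T p.2 < T p.1) := by
    intro p hp
    simp only [Finset.mem_union, hS1, hS2, Finset.mem_image, Finset.mem_erase] at hp
    simp only [Finset.mem_filter, Finset.mem_univ, true_and]
    rcases hp with ⟨y, ⟨hy0, _⟩, rfl⟩ | ⟨x, ⟨hxm, _⟩, rfl⟩
    · constructor
      · rw [Fin.lt_def]
        have : y.val ≠ 0 := fun e => hy0 (Fin.ext (by simp [hz, e]))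
        simp only [hz]; omega
      · rw [hTz]
        by_cases hym : y = m
        · rw [hym, hTm, Fin.lt_def]; simp [hz, hm]; omega
        · rw [hTx y hy0 hym, Fin.lt_def]
          have : y.val ≠ n := fun e => hym (Fin.ext (by simp [hm, e]))
          simp [hm]; omega
    · constructor
      · rw [Fin.lt_def]
        have : x.val ≠ n := fun e => hxm (Fin.ext (by simp [hm, e]))
        simp [hm]; omega
      · rw [hTm]
        by_cases hxz : x = z
        · rw [hxz, hTz, Fin.lt_def]; simp [hz, hm]; omega
        · rw [hTx x hxz hxm, Fin.lt_def]
          have : x.val ≠ 0 := fun e => hxz (Fin.ext (by simp [hz, e]))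
          simp only [hz]; omega
  have hinter : S1 ∩ S2 ⊆ {(z, m)} := by
    intro p hp
    simp only [Finset.mem_inter, hS1, hS2, Finset.mem_image, Finset.mem_erase] at hp
    obtain ⟨⟨y, _, e1⟩, ⟨x, _, e2⟩⟩ := hp
    simp only [Finset.mem_singleton]
    rw [Prod.ext_iff]
    constructor
    · rw [← e1]
    · rw [← e2]
  have hcard : 2*n - 1 ≤ (S1 ∪ S2).card := by
    have hu := Finset.card_union_add_card_inter S1 S2
    have h1 : (S1 ∩ S2).card ≤ 1 :=
      le_trans (Finset.card_le_card hinter) (by simp)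
    omega
  calc 2*n - 1 ≤ (S1 ∪ S2).card := hcard
    _ ≤ _ := Finset.card_le_card hsub

lemma top_prod (hn : 1 ≤ n) : wordProdA n (topWordA n) = swapN n 0 n := by
  rw [wordProdA_eq, topWordA_map hn, natTop_eq_canon]
  have := (chain_canon (n := n) n 0 hn (by omega)).prod
  simpa using this

lemma top_reduced (hn : 1 ≤ n) : ReducedA n (topWordA n) := by
  intro w' hw'
  have hlen : (topWordA n).length = 2*n - 1 := by
    simp [topWordA]; omega
  have h1 : wordProdA n w' = swapN n 0 n := by rw [hw', top_prod hn]
  have h2 : invCount (n := n) (swapN n 0 n) ≤ w'.length := by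
    rw [← h1, wordProdA_eq]
    calc invCount _ ≤ (w'.map Fin.val).length := invCount_le_length _
      _ = w'.length := by simp
  have h3 := invCount_lower hn
  omega

end BP

theorem stmt2 (n : ℕ) (hn : 1 ≤ n) (π : Equiv.Perm (Fin (n + 1))) :
    IsBooleanA n π ↔ ∃ w : List (Fin n), w.Sublist (topWordA n) ∧ wordProdA n w = π := by
  constructor
  · rintro ⟨l, c, hnd, hred, w, hw, hwp⟩
    obtain ⟨a, b, hC⟩ := BP.SL l c hnd hred
    have hmap : (w.map Fin.val).Sublist ((l ++ [c] ++ l.reverse).map Fin.val) := hw.map _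
    obtain ⟨v, hv, hvwp⟩ := BP.chain_subeq hC _ hmap
    have hlt := hC.lt
    have hvt : v.Sublist (BP.natTop n) := hv.trans (BP.canon_sublist hlt.1 hlt.2)
    rw [← BP.topWordA_map hn] at hvt
    obtain ⟨v', hv', rfl⟩ := List.sublist_map_iff.mp hvt
    refine ⟨v', hv', ?_⟩
    rw [BP.wordProdA_eq, hvwp, ← BP.wordProdA_eq, hwp]
  · rintro ⟨w, hw, hwp⟩
    have hne : List.finRange n ≠ [] := by
      intro h
      have := congrArg List.length h
      simp at this
      omega
    have hsplit : (List.finRange n).dropLast ++ [(List.finRange n).getLast hne]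
        = List.finRange n := List.dropLast_append_getLast hne
    refine ⟨(List.finRange n).dropLast, (List.finRange n).getLast hne, ?_, ?_, w, ?_, hwp⟩
    · rw [hsplit]; exact List.nodup_finRange n
    · rw [hsplit]; exact BP.top_reduced hn
    · rw [hsplit]; exact hw
end

section
/- A permutation π ∈ S_{n+1} is boolean if and only if #( {π(1),…,π(i)} ∩ {1,…,i} ) ≥ i − 1 for every i with 1 ≤ i ≤ n. -/
namespace BoolAux
variable {n : ℕ}

@[simp] lemma wp_nil : wordProdA n [] = 1 := rfl

@[simp] lemma wp_cons (a : Fin n) (w : List (Fin n)) :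
    wordProdA n (a :: w) = adjTransposition n a * wordProdA n w := by
  simp [wordProdA]

@[simp] lemma wp_append (v w : List (Fin n)) :
    wordProdA n (v ++ w) = wordProdA n v * wordProdA n w := by
  simp [wordProdA]

@[simp] lemma wp_singleton (a : Fin n) : wordProdA n [a] = adjTransposition n a := by
  simp [wordProdA]

@[simp] lemma adj_mul_self (a : Fin n) :
    adjTransposition n a * adjTransposition n a = 1 := by
  simp [adjTransposition]

lemma wp_reverse (w : List (Fin n)) :
    wordProdA n w.reverse = (wordProdA n w)⁻¹ := by
  induction w with
  | nil => simp
  | cons a w ih =>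
    simp [ih, adjTransposition, mul_inv_rev]

lemma adj_val (j : Fin n) (x : Fin (n+1)) :
    ((adjTransposition n j) x).val =
      if x.val = j.val then j.val + 1 else if x.val = j.val + 1 then j.val else x.val := by
  rcases eq_or_ne x j.castSucc with h | h
  · subst h; simp [adjTransposition]
  rcases eq_or_ne x j.succ with h2 | h2
  · subst h2
    simp only [adjTransposition, Equiv.swap_apply_right, Fin.val_succ, Fin.coe_castSucc]
    have : (j : ℕ) ≠ j + 1 := by omega
    simp [this]
  · have hv : x.val ≠ j.val := fun hc => h (Fin.ext (by simpa using hc))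
    have hv2 : x.val ≠ j.val + 1 := fun hc => h2 (Fin.ext (by simpa using hc))
    simp [adjTransposition, Equiv.swap_apply_of_ne_of_ne h h2, hv, hv2]

end BoolAux

namespace BoolAux
variable {n : ℕ}

/-- A word with no letter of value `i-1` preserves the set `{x | x.val < i}`. -/
lemma sidePreserve {w : List (Fin n)} {i : ℕ}
    (h : ∀ a ∈ w, a.val + 1 ≠ i) (x : Fin (n+1)) :
    ((wordProdA n w) x).val < i ↔ x.val < i := by
  induction w generalizing x with
  | nil => simp
  | cons a w ih =>
    have ha := h a (by simp)
    have h' : ∀ b ∈ w, b.val + 1 ≠ i := fun b hb => h b (by simp [hb])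
    simp only [wp_cons, Equiv.Perm.mul_apply]
    rw [show ((adjTransposition n a) ((wordProdA n w) x)).val < i ↔
        ((wordProdA n w) x).val < i from ?_, ih h']
    rw [adj_val]
    split <;> rename_i h1
    · omega
    · split <;> omega

/-- A word with no letter of value `v` or `v-1` fixes the point with value `v`. -/
lemma pointFix {w : List (Fin n)} {x : Fin (n+1)}
    (h : ∀ a ∈ w, a.val ≠ x.val ∧ a.val + 1 ≠ x.val) :
    (wordProdA n w) x = x := by
  induction w with
  | nil => simp
  | cons a w ih =>
    have ha := h a (by simp)
    have h' : ∀ b ∈ w, b.val ≠ x.val ∧ b.val + 1 ≠ x.val := fun b hb => h b (by simp [hb])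
    simp only [wp_cons, Equiv.Perm.mul_apply, ih h']
    apply Fin.ext
    rw [adj_val]
    split <;> [omega; skip]
    split <;> omega

/-- number of points of `{x | x < i}` escaping above under `π`. -/
def esc (n i : ℕ) (π : Equiv.Perm (Fin (n+1))) : ℕ :=
  (Finset.univ.filter (fun x : Fin (n+1) => x.val < i ∧ i ≤ (π x).val)).card

lemma esc_mul_left {i : ℕ} {A : Equiv.Perm (Fin (n+1))}
    (hA : ∀ x : Fin (n+1), (A x).val < i ↔ x.val < i) (σ : Equiv.Perm (Fin (n+1))) :
    esc n i (A * σ) = esc n i σ := by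
  unfold esc
  congr 1
  apply Finset.filter_congr
  intro x _
  simp only [Equiv.Perm.mul_apply]
  constructor <;> rintro ⟨h1, h2⟩ <;>
    exact ⟨h1, by have h3 := (hA (σ x)).1; have h4 := (hA (σ x)).2; omega⟩

lemma esc_mul_right {i : ℕ} {C : Equiv.Perm (Fin (n+1))}
    (hC : ∀ x : Fin (n+1), (C x).val < i ↔ x.val < i) (σ : Equiv.Perm (Fin (n+1))) :
    esc n i (σ * C) = esc n i σ := by
  unfold esc
  apply Finset.card_bij (fun x _ => C x)
  · intro x hx
    simp only [Finset.mem_filter, Finset.mem_univ, true_and] at hx ⊢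
    exact ⟨(hC x).2 hx.1, hx.2⟩
  · intro x _ y _ hxy
    exact C.injective hxy
  · intro y hy
    simp only [Finset.mem_filter, Finset.mem_univ, true_and] at hy ⊢
    refine ⟨C⁻¹ y, ⟨?_, ?_⟩, by simp⟩
    · rw [← hC (C⁻¹ y)]; simpa using hy.1
    · simpa using hy.2

/-- crossing bound : `esc i (prod w) ≤` number of letters of value `i-1` in `w`. -/
lemma esc_le_count {i : ℕ} (hi : 1 ≤ i) (w : List (Fin n)) :
    esc n i (wordProdA n w) ≤ (w.filter (fun a => a.val + 1 = i)).length := by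
  induction w with
  | nil =>
    simp only [wp_nil]
    have : esc n i 1 = 0 := by
      unfold esc
      simp only [Finset.card_eq_zero, Finset.filter_eq_empty_iff]
      intro x _
      simp only [Equiv.Perm.one_apply]
      omega
    simp [this]
  | cons a w ih =>
    rw [wp_cons]
    rcases eq_or_ne (a.val + 1) i with ha | ha
    · -- esc (s_a * σ) ≤ esc σ + 1
      have key : esc n i (adjTransposition n a * wordProdA n w) ≤
          esc n i (wordProdA n w) + 1 := by
        unfold esc
        set σ := wordProdA n w
        have hsub : (Finset.univ.filter (fun x : Fin (n+1) =>
            x.val < i ∧ i ≤ ((adjTransposition n a * σ) x).val)) ⊆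
            (Finset.univ.filter (fun x : Fin (n+1) => x.val < i ∧ i ≤ (σ x).val))
              ∪ {σ⁻¹ ⟨i - 1, by omega⟩} := by
          intro x hx
          rw [Finset.mem_filter] at hx
          simp only [Finset.mem_filter, Finset.mem_univ, true_and, Equiv.Perm.mul_apply] at hx
          obtain ⟨h1, h2⟩ := hx
          rw [Finset.mem_union, Finset.mem_filter, Finset.mem_singleton]
          by_cases hc : i ≤ (σ x).val
          · exact Or.inl ⟨by simp, h1, hc⟩
          · right
        -- from h2 : i ≤ (s_a (σ x)).val but (σ x).val < i : forced (σ x).val = a.val = i-1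
            have hv := adj_val a (σ x)
            have hσ : (σ x).val = i - 1 := by
              by_contra hne
              rw [hv] at h2
              split at h2 <;> [omega; skip]
              split at h2 <;> omega
            have : σ x = ⟨i - 1, by omega⟩ := Fin.ext (by simpa using hσ)
            rw [← this]; simp
        calc _ ≤ _ := Finset.card_le_card hsub
        _ ≤ _ := (Finset.card_union_le _ _).trans (by simp)
      have : (List.filter (fun a => a.val + 1 = i) (a :: w)).length
          = (List.filter (fun b => b.val + 1 = i) w).length + 1 := by
        simp [List.filter_cons, ha]
      omega
    · have hside : ∀ x : Fin (n+1), ((adjTransposition n a) x).val < i ↔ x.val < i := by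
        intro x
        rw [adj_val]
        split <;> [omega; skip]
        split <;> omega
      rw [esc_mul_left hside]
      have : (List.filter (fun a => a.val + 1 = i) (a :: w)).length
          = (List.filter (fun b => b.val + 1 = i) w).length := by
        simp [List.filter_cons, ha]
      omega

end BoolAux

namespace BoolAux
variable {n : ℕ}

/-- number of inversions. -/
def nInv (π : Equiv.Perm (Fin (n+1))) : ℕ :=
  (Finset.univ.filter (fun p : Fin (n+1) × Fin (n+1) => p.1 < p.2 ∧ π p.2 < π p.1)).card

@[simp] lemma nInv_one : nInv (1 : Equiv.Perm (Fin (n+1))) = 0 := by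
  unfold nInv
  simp only [Finset.card_eq_zero, Finset.filter_eq_empty_iff]
  rintro ⟨x, y⟩ _
  simp only [Equiv.Perm.one_apply, Fin.lt_iff_val_lt_val]
  omega

lemma adj_strict {j : Fin n} {x y : Fin (n+1)} (hxy : x < y)
    (hne : ¬(x = j.castSucc ∧ y = j.succ)) :
    adjTransposition n j x < adjTransposition n j y := by
  have hx := adj_val j x
  have hy := adj_val j y
  rw [Fin.lt_iff_val_lt_val] at hxy ⊢
  have hne' : ¬(x.val = j.val ∧ y.val = j.val + 1) := by
    rintro ⟨h1, h2⟩
    exact hne ⟨Fin.ext (by simp [h1]), Fin.ext (by simp [h2])⟩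
  rw [hx, hy]
  split_ifs <;> omega

/-- key ±1 lemma (increase form). -/
lemma nInv_mul_adj_of_lt {π : Equiv.Perm (Fin (n+1))} {j : Fin n}
    (h : π j.castSucc < π j.succ) :
    nInv (π * adjTransposition n j) = nInv π + 1 := by
  classical
  set s := adjTransposition n j with hs
  set P : Fin (n+1) × Fin (n+1) := (j.castSucc, j.succ) with hP
  have hsc : s j.castSucc = j.succ := Equiv.swap_apply_left _ _
  have hss : s j.succ = j.castSucc := Equiv.swap_apply_right _ _
  have hcs : j.castSucc < j.succ := by
    rw [Fin.lt_iff_val_lt_val]; simp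
  have e1 : ∀ z : Fin (n+1), s (s z) = z := by
    intro z
    rw [← Equiv.Perm.mul_apply, hs, adj_mul_self, Equiv.Perm.one_apply]
  have common :
      ((Finset.univ.filter (fun p : Fin (n+1) × Fin (n+1) =>
          p.1 < p.2 ∧ (π * s) p.2 < (π * s) p.1)).erase P).card =
      ((Finset.univ.filter (fun p : Fin (n+1) × Fin (n+1) =>
          p.1 < p.2 ∧ π p.2 < π p.1)).erase P).card := by
    apply Finset.card_bij (fun p _ => (s p.1, s p.2))
    · rintro ⟨x, y⟩ hp
      rw [Finset.mem_erase, Finset.mem_filter] at hp ⊢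
      simp only [Finset.mem_erase, Finset.mem_filter, Finset.mem_univ, true_and,
        Equiv.Perm.mul_apply] at hp ⊢
      obtain ⟨hPne, hxy, hinv⟩ := hp
      have hne : ¬(x = j.castSucc ∧ y = j.succ) := by
        rintro ⟨rfl, rfl⟩; exact hPne rfl
      refine ⟨?_, adj_strict hxy hne, hinv⟩
      rintro hc
      have hx2 : x = j.succ := s.injective (by rw [hss]; exact congrArg Prod.fst hc)
      have hy2 : y = j.castSucc := s.injective (by rw [hsc]; exact congrArg Prod.snd hc)
      rw [hx2, hy2] at hxy
      exact absurd hxy (not_lt.2 (le_of_lt hcs))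
    · rintro ⟨x, y⟩ _ ⟨x', y'⟩ _ hxy
      exact Prod.ext (s.injective (congrArg Prod.fst hxy)) (s.injective (congrArg Prod.snd hxy))
    · rintro ⟨x, y⟩ hp
      simp only [Finset.mem_erase, Finset.mem_filter, Finset.mem_univ, true_and] at hp
      obtain ⟨hPne, hxy, hinv⟩ := hp
      have hne : ¬(x = j.castSucc ∧ y = j.succ) := by
        rintro ⟨rfl, rfl⟩; exact hPne rfl
      refine ⟨(s x, s y), ?_, Prod.ext (e1 x) (e1 y)⟩
      rw [Finset.mem_erase, Finset.mem_filter]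
      simp only [Finset.mem_erase, Finset.mem_filter, Finset.mem_univ, true_and,
        Equiv.Perm.mul_apply]
      refine ⟨?_, adj_strict hxy hne, by rw [e1, e1]; exact hinv⟩
      rintro hc
      have hx2 : x = j.succ := s.injective (by rw [hss]; exact congrArg Prod.fst hc)
      have hy2 : y = j.castSucc := s.injective (by rw [hsc]; exact congrArg Prod.snd hc)
      rw [hx2, hy2] at hxy
      exact absurd hxy (not_lt.2 (le_of_lt hcs))
  have memP1 : P ∈ (Finset.univ.filter (fun p : Fin (n+1) × Fin (n+1) =>
      p.1 < p.2 ∧ (π * s) p.2 < (π * s) p.1)) := by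
    rw [Finset.mem_filter]
    simp only [Finset.mem_filter, Finset.mem_univ, true_and, Equiv.Perm.mul_apply, hP]
    exact ⟨hcs, by rw [hsc, hss]; exact h⟩
  have memP2 : P ∉ (Finset.univ.filter (fun p : Fin (n+1) × Fin (n+1) =>
      p.1 < p.2 ∧ π p.2 < π p.1)) := by
    simp only [Finset.mem_filter, Finset.mem_univ, true_and, hP, not_and]
    intro _
    exact not_lt.2 (le_of_lt h)
  unfold nInv
  rw [← Finset.card_erase_add_one memP1, common, Finset.erase_eq_of_notMem memP2]

lemma nInv_mul_adj_of_gt {π : Equiv.Perm (Fin (n+1))} {j : Fin n}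
    (h : π j.succ < π j.castSucc) :
    nInv (π * adjTransposition n j) + 1 = nInv π := by
  have hsc : adjTransposition n j j.castSucc = j.succ := Equiv.swap_apply_left _ _
  have hss : adjTransposition n j j.succ = j.castSucc := Equiv.swap_apply_right _ _
  have h' : (π * adjTransposition n j) j.castSucc < (π * adjTransposition n j) j.succ := by
    simp only [Equiv.Perm.mul_apply, hsc, hss]; exact h
  have := nInv_mul_adj_of_lt h'
  rw [mul_assoc, adj_mul_self, mul_one] at this
  omega

lemma adj_ne_apply (π : Equiv.Perm (Fin (n+1))) (j : Fin n) :
    π j.castSucc ≠ π j.succ := by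
  intro hc
  have h2 := π.injective hc
  have : (j.castSucc : Fin (n+1)).val = j.succ.val := by rw [h2]
  simp at this

lemma nInv_mul_adj_le (π : Equiv.Perm (Fin (n+1))) (j : Fin n) :
    nInv (π * adjTransposition n j) ≤ nInv π + 1 := by
  rcases lt_trichotomy (π j.castSucc) (π j.succ) with h | h | h
  · rw [nInv_mul_adj_of_lt h]
  · exact absurd h (adj_ne_apply π j)
  · have := nInv_mul_adj_of_gt h; omega

lemma nInv_le_length (w : List (Fin n)) : nInv (wordProdA n w) ≤ w.length := by
  induction w using List.reverseRecOn with
  | nil => simp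
  | append_singleton w a ih =>
    rw [wp_append, wp_singleton]
    have := nInv_mul_adj_le (wordProdA n w) a
    simp only [List.length_append, List.length_singleton]
    omega

end BoolAux

namespace BoolAux
variable {n : ℕ}

lemma card_filter_lt {m : ℕ} (i : ℕ) (hi : i ≤ m) :
    (Finset.univ.filter (fun x : Fin m => x.val < i)).card = i := by
  rw [← Finset.card_range i]
  apply Finset.card_bij (fun (x : Fin m) _ => x.val)
  · intro x hx
    simp only [Finset.mem_filter] at hx
    simpa using hx.2
  · intro x hx y hy hxy
    exact Fin.ext hxy
  · intro b hb
    simp only [Finset.mem_range] at hb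
    exact ⟨⟨b, by omega⟩, by simp [hb], rfl⟩

lemma strictMono_perm_eq_one {π : Equiv.Perm (Fin (n+1))}
    (h : StrictMono (π : Fin (n+1) → Fin (n+1))) : π = 1 := by
  have key : ∀ σ : Equiv.Perm (Fin (n+1)), StrictMono (σ : Fin (n+1) → Fin (n+1)) →
      ∀ x : Fin (n+1), x.val ≤ (σ x).val := by
    intro σ hσ x
    have hsub : (Finset.univ.filter (fun y : Fin (n+1) => y.val < x.val)).image σ ⊆
        Finset.univ.filter (fun z : Fin (n+1) => z.val < (σ x).val) := by
      intro z hz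
      simp only [Finset.mem_image, Finset.mem_filter, Finset.mem_univ, true_and] at hz ⊢
      obtain ⟨y, hy, rfl⟩ := hz
      exact hσ (by rwa [Fin.lt_iff_val_lt_val])
    have h1 := Finset.card_le_card hsub
    rw [Finset.card_image_of_injective _ σ.injective,
      card_filter_lt _ (by omega), card_filter_lt _ (by omega)] at h1
    exact h1
  have hinv : StrictMono ((π⁻¹ : Equiv.Perm (Fin (n+1))) : Fin (n+1) → Fin (n+1)) := by
    intro a b hab
    rcases lt_trichotomy (π⁻¹ a) (π⁻¹ b) with hh | hh | hh
    · exact hh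
    · rw [← (show ∀ x, π (π⁻¹ x) = x from π.apply_symm_apply) a, ← (show ∀ x, π (π⁻¹ x) = x from π.apply_symm_apply) b, hh] at hab
      exact absurd hab (lt_irrefl _)
    · have h2 := h hh
      rw [(show ∀ x, π (π⁻¹ x) = x from π.apply_symm_apply), (show ∀ x, π (π⁻¹ x) = x from π.apply_symm_apply)] at h2
      exact absurd hab (not_lt.2 (le_of_lt h2))
  ext x
  have h1 := key π h x
  have h2 := key π⁻¹ hinv (π x)
  rw [show (π⁻¹ (π x)) = x from π.symm_apply_apply x] at h2
  simp only [Equiv.Perm.one_apply]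
  omega

lemma nInv_zero_eq_one {π : Equiv.Perm (Fin (n+1))} (h : nInv π = 0) : π = 1 := by
  apply strictMono_perm_eq_one
  rw [Fin.strictMono_iff_lt_succ]
  intro j
  unfold nInv at h
  rw [Finset.card_eq_zero, Finset.filter_eq_empty_iff] at h
  have := h (Finset.mem_univ (j.castSucc, j.succ))
  simp only [not_and] at this
  have hcs : j.castSucc < j.succ := by rw [Fin.lt_iff_val_lt_val]; simp
  have h2 := this hcs
  rcases lt_trichotomy (π j.castSucc) (π j.succ) with hh | hh | hh
  · exact hh
  · exact absurd hh (adj_ne_apply π j)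
  · exact absurd hh h2

/-- sorting: every permutation is the product of a word of length `nInv π`. -/
lemma exists_word_nInv (π : Equiv.Perm (Fin (n+1))) :
    ∃ w : List (Fin n), wordProdA n w = π ∧ w.length = nInv π := by
  generalize hk : nInv π = k
  induction k generalizing π with
  | zero => exact ⟨[], by rw [wp_nil, (nInv_zero_eq_one hk).symm], by simp⟩
  | succ k ih =>
    have hne : π ≠ 1 := by
      intro hc; rw [hc] at hk; simp at hk
    have hdesc : ∃ j : Fin n, π j.succ < π j.castSucc := by
      by_contra hc
      push_neg at hc
      apply hne
      apply strictMono_perm_eq_one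
      rw [Fin.strictMono_iff_lt_succ]
      intro j
      rcases lt_trichotomy (π j.castSucc) (π j.succ) with hh | hh | hh
      · exact hh
      · exact absurd hh (adj_ne_apply π j)
      · exact absurd hh (not_lt.2 (hc j))
    obtain ⟨j, hj⟩ := hdesc
    have hdec := nInv_mul_adj_of_gt hj
    have hk' : nInv (π * adjTransposition n j) = k := by omega
    obtain ⟨w, hw, hlen⟩ := ih _ hk'
    refine ⟨w ++ [j], ?_, by simp [hlen, hk']⟩
    rw [wp_append, wp_singleton, hw, mul_assoc, adj_mul_self, mul_one]

lemma reducedA_iff (w : List (Fin n)) :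
    ReducedA n w ↔ w.length = nInv (wordProdA n w) := by
  constructor
  · intro h
    obtain ⟨w', hw', hlen⟩ := exists_word_nInv (wordProdA n w)
    have := h w' hw'
    have h2 := nInv_le_length w
    omega
  · intro h w' hw'
    have := nInv_le_length w'
    rw [hw'] at this
    omega

end BoolAux

namespace BoolAux
variable {n : ℕ}

lemma nInv_inv (π : Equiv.Perm (Fin (n+1))) : nInv π⁻¹ = nInv π := by
  unfold nInv
  apply Finset.card_bij (fun (p : Fin (n+1) × Fin (n+1)) _ => (π⁻¹ p.2, π⁻¹ p.1))
  · rintro ⟨x, y⟩ hp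
    simp only [Finset.mem_filter, Finset.mem_univ, true_and] at hp ⊢
    obtain ⟨hxy, hinv⟩ := hp
    refine ⟨hinv, ?_⟩
    rw [(show ∀ x, π (π⁻¹ x) = x from π.apply_symm_apply), (show ∀ x, π (π⁻¹ x) = x from π.apply_symm_apply)]
    exact hxy
  · rintro ⟨x, y⟩ _ ⟨x', y'⟩ _ hxy
    have h1' : y = y' := by
      have := congrArg Prod.fst hxy
      simp only at this
      have := congrArg π this
      rwa [(show ∀ x, π (π⁻¹ x) = x from π.apply_symm_apply), (show ∀ x, π (π⁻¹ x) = x from π.apply_symm_apply)] at this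
    have h2' : x = x' := by
      have := congrArg Prod.snd hxy
      simp only at this
      have := congrArg π this
      rwa [(show ∀ x, π (π⁻¹ x) = x from π.apply_symm_apply), (show ∀ x, π (π⁻¹ x) = x from π.apply_symm_apply)] at this
    exact Prod.ext h2' h1'
  · rintro ⟨u, v⟩ hp
    simp only [Finset.mem_filter, Finset.mem_univ, true_and] at hp ⊢
    obtain ⟨huv, hinv⟩ := hp
    refine ⟨(π v, π u), ⟨hinv, by rw [(show ∀ x, π⁻¹ (π x) = x from π.symm_apply_apply), (show ∀ x, π⁻¹ (π x) = x from π.symm_apply_apply)]; exact huv⟩, ?_⟩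
    simp only
    rw [(show ∀ x, π⁻¹ (π x) = x from π.symm_apply_apply), (show ∀ x, π⁻¹ (π x) = x from π.symm_apply_apply)]

/-- `nInv` of a transposition. -/
lemma nInv_swap : ∀ (k : ℕ) (a b : Fin (n+1)), a.val < b.val → b.val - a.val = k + 1 →
    nInv (Equiv.swap a b) = 2 * k + 1 := by
  intro k
  induction k with
  | zero =>
    intro a b hab hk
    have ha : a.val < n := by omega
    set j : Fin n := ⟨a.val, ha⟩ with hj
    have h1 : a = j.castSucc := Fin.ext rfl
    have h2 : b = j.succ := Fin.ext (by simp only [Fin.val_succ, hj]; omega)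
    have heq : Equiv.swap a b = (1 : Equiv.Perm (Fin (n+1))) * adjTransposition n j := by
      rw [one_mul, adjTransposition, h1, h2]
    have hlt : (1 : Equiv.Perm (Fin (n+1))) j.castSucc < (1 : Equiv.Perm (Fin (n+1))) j.succ := by
      simp only [Equiv.Perm.one_apply]
      rw [Fin.lt_iff_val_lt_val]
      simp
    rw [heq, nInv_mul_adj_of_lt hlt, nInv_one]
  | succ k ih =>
    intro a b hab hk
    have hbn : b.val - 1 < n := by omega
    set j : Fin n := ⟨b.val - 1, hbn⟩ with hj
    have hjs : j.succ = b := Fin.ext (by simp only [Fin.val_succ, hj]; omega)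
    set b' : Fin (n+1) := j.castSucc with hb'
    have hb'v : b'.val = b.val - 1 := rfl
    have hab' : a.val < b'.val := by omega
    have hanb' : a ≠ b' := by intro hc; rw [hc] at hab'; omega
    have hanb : a ≠ b := by intro hc; rw [hc] at hab; omega
    have hb'nb : b' ≠ b := by intro hc; rw [hc] at hab'; omega
    have ihval := ih a b' hab' (by omega)
    set s := adjTransposition n j with hs
    have hsa : s a = a := by
      rw [hs, adjTransposition]
      apply Equiv.swap_apply_of_ne_of_ne hanb'
      rw [hjs]; exact hanb
    have hsb' : s b' = b := by rw [hs, adjTransposition, ← hjs]; exact Equiv.swap_apply_left _ _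
    have hsb : s b = b' := by rw [hs, adjTransposition, ← hjs]; exact Equiv.swap_apply_right _ _
    have hconj : Equiv.swap a b = s * Equiv.swap a b' * s⁻¹ := by
      have h0 := Equiv.swap_apply_apply s a b'
      rw [hsa, hsb'] at h0
      exact h0
    have hsinv : s⁻¹ = s := by rw [hs, adjTransposition]; exact Equiv.swap_inv _ _
    set τ : Equiv.Perm (Fin (n+1)) := Equiv.swap a b' * s with hτ
    have hτ1 : nInv τ = 2 * k + 2 := by
      rw [hτ, nInv_mul_adj_of_lt, ihval]
      rw [show (j.castSucc : Fin (n+1)) = b' from rfl, hjs,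
        Equiv.swap_apply_right, Equiv.swap_apply_of_ne_of_ne (Ne.symm hanb) (Ne.symm hb'nb)]
      rw [Fin.lt_iff_val_lt_val]
      exact hab
    have hτinv : τ⁻¹ = s * Equiv.swap a b' := by
      rw [hτ, mul_inv_rev, hsinv, Equiv.swap_inv]
    have habfin : Equiv.swap a b = s * τ := by rw [hconj, hsinv, hτ, mul_assoc]
    have hstep : nInv (τ⁻¹ * s) = nInv τ⁻¹ + 1 := by
      apply nInv_mul_adj_of_lt
      rw [hτinv]
      simp only [Equiv.Perm.mul_apply]
      rw [show (j.castSucc : Fin (n+1)) = b' from rfl, hjs,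
        Equiv.swap_apply_right, Equiv.swap_apply_of_ne_of_ne (Ne.symm hanb) (Ne.symm hb'nb),
        hsa, hsb]
      rw [Fin.lt_iff_val_lt_val]
      exact hab'
    have : nInv (Equiv.swap a b) = nInv (τ⁻¹ * s) := by
      rw [habfin, ← nInv_inv (s * τ), mul_inv_rev, hsinv]
    rw [this, hstep, nInv_inv, hτ1]
    omega
end BoolAux

namespace BoolAux
variable {n : ℕ}

lemma adj_dist (a : Fin n) (x y : Fin (n+1)) :
    Nat.dist ((adjTransposition n a) x).val ((adjTransposition n a) y).val ≤
      Nat.dist x.val y.val + 1 := by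
  have hx := adj_val a x
  have hy := adj_val a y
  simp only [Nat.dist] at *
  split_ifs at hx hy <;> omega

lemma geo_ineq (w : List (Fin n)) (x y : Fin (n+1)) :
    Nat.dist ((wordProdA n w) x).val ((wordProdA n w) y).val ≤
      Nat.dist x.val y.val + w.length := by
  induction w using List.reverseRecOn generalizing x y with
  | nil => simp
  | append_singleton w a ih =>
    rw [wp_append, wp_singleton]
    simp only [Equiv.Perm.mul_apply]
    calc Nat.dist ((wordProdA n w) ((adjTransposition n a) x)).val
          ((wordProdA n w) ((adjTransposition n a) y)).val
        ≤ Nat.dist ((adjTransposition n a) x).val ((adjTransposition n a) y).val + w.length :=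
          ih _ _
      _ ≤ Nat.dist x.val y.val + 1 + w.length := by have := adj_dist a x y; omega
      _ = Nat.dist x.val y.val + (w ++ [a]).length := by simp; omega

lemma geo_eq (w : List (Fin n)) (p q : Fin (n+1)) (hpq : p.val < q.val)
    (heq : Nat.dist ((wordProdA n w) p).val ((wordProdA n w) q).val
      = (q.val - p.val) + w.length) :
    ((wordProdA n w) p).val ≤ p.val ∧ q.val ≤ ((wordProdA n w) q).val ∧
    ∀ x ∈ w, ((wordProdA n w) p).val ≤ x.val ∧ x.val < ((wordProdA n w) q).val := by
  induction w using List.reverseRecOn generalizing p q with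
  | nil =>
    simp only [wp_nil, Equiv.Perm.one_apply, List.not_mem_nil]
    exact ⟨le_refl _, le_refl _, fun x hx => absurd hx (by simp)⟩
  | append_singleton w a ih =>
    rw [wp_append, wp_singleton] at heq ⊢
    simp only [Equiv.Perm.mul_apply] at heq ⊢
    set p' := (adjTransposition n a) p with hp'def
    set q' := (adjTransposition n a) q with hq'def
    have hp' : p'.val = if p.val = a.val then a.val + 1 else
        if p.val = a.val + 1 then a.val else p.val := adj_val a p
    have hq' : q'.val = if q.val = a.val then a.val + 1 else
        if q.val = a.val + 1 then a.val else q.val := adj_val a q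
    have hub := geo_ineq w p' q'
    have hmove : Nat.dist p'.val q'.val ≤ Nat.dist p.val q.val + 1 := adj_dist a p q
    have hlen : (w ++ [a]).length = w.length + 1 := by simp
    have hdist : Nat.dist p'.val q'.val = (q.val - p.val) + 1 := by
      simp only [Nat.dist] at *
      omega
    have hcase : (p'.val + 1 = p.val ∧ q'.val = q.val ∧ a.val + 1 = p.val) ∨
        (p'.val = p.val ∧ q'.val = q.val + 1 ∧ a.val = q.val) := by
      simp only [Nat.dist] at hdist
      split_ifs at hp' hq' <;> omega
    have hpq' : p'.val < q'.val := by omega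
    have hd2 : Nat.dist ((wordProdA n w) p').val ((wordProdA n w) q').val
        = (q'.val - p'.val) + w.length := by
      simp only [Nat.dist] at *
      omega
    obtain ⟨c1, c2, c3⟩ := ih p' q' hpq' hd2
    refine ⟨by omega, by omega, ?_⟩
    intro x hx
    rw [List.mem_append] at hx
    rcases hx with hx | hx
    · exact c3 x hx
    · simp only [List.mem_singleton] at hx
      subst hx
      omega

lemma geo_split (l1 l2 : List (Fin n)) (j : Fin n) (p q : Fin (n+1)) (hpq : p.val < q.val)
    (hmax : Nat.dist ((wordProdA n (l1 ++ j :: l2)) p).val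
        ((wordProdA n (l1 ++ j :: l2)) q).val = (q.val - p.val) + (l1 ++ j :: l2).length) :
    Nat.dist ((wordProdA n l2) p).val ((wordProdA n l2) q).val = (q.val - p.val) + l2.length ∧
    Nat.dist ((adjTransposition n j) ((wordProdA n l2) p)).val
      ((adjTransposition n j) ((wordProdA n l2) q)).val = (q.val - p.val) + l2.length + 1 := by
  have hsplit : wordProdA n (l1 ++ j :: l2) = wordProdA n l1 * (adjTransposition n j * wordProdA n l2) := by
    rw [show l1 ++ j :: l2 = l1 ++ ([j] ++ l2) from rfl, wp_append, wp_append, wp_singleton]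
  rw [hsplit] at hmax
  simp only [Equiv.Perm.mul_apply] at hmax
  have h1 := geo_ineq l1 ((adjTransposition n j) ((wordProdA n l2) p))
    ((adjTransposition n j) ((wordProdA n l2) q))
  have h2 := adj_dist j ((wordProdA n l2) p) ((wordProdA n l2) q)
  have h3 := geo_ineq l2 p q
  have hlen : (l1 ++ j :: l2).length = l1.length + l2.length + 1 := by simp; omega
  have hdpq : Nat.dist p.val q.val = q.val - p.val := by simp [Nat.dist]; omega
  simp only [Nat.dist] at *
  omega

/-- structure of reduced palindromic words: no letter has both neighbours occurring
after it. -/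
lemma neighbor (l1 l2 : List (Fin n)) (j c : Fin n)
    (hmax : Nat.dist ((wordProdA n (l1 ++ j :: l2)) c.castSucc).val
        ((wordProdA n (l1 ++ j :: l2)) c.succ).val = 1 + (l1 ++ j :: l2).length)
    (x1 : Fin n) (hx1 : x1 ∈ l2 ++ [c]) (hv1 : x1.val + 1 = j.val)
    (x2 : Fin n) (hx2 : x2 ∈ l2 ++ [c]) (hv2 : x2.val = j.val + 1) : False := by
  have hcv : (c.castSucc : Fin (n+1)).val = c.val := rfl
  have hcv' : (c.succ : Fin (n+1)).val = c.val + 1 := rfl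
  have hpq : (c.castSucc : Fin (n+1)).val < (c.succ : Fin (n+1)).val := by omega
  have hmax' : Nat.dist ((wordProdA n (l1 ++ j :: l2)) c.castSucc).val
      ((wordProdA n (l1 ++ j :: l2)) c.succ).val
      = ((c.succ : Fin (n+1)).val - (c.castSucc : Fin (n+1)).val) + (l1 ++ j :: l2).length := by
    rw [hmax]; omega
  obtain ⟨hd2, hstep⟩ := geo_split l1 l2 j _ _ hpq hmax'
  obtain ⟨e1, e2, e3⟩ := geo_eq l2 _ _ hpq hd2
  set P2 := ((wordProdA n l2) c.castSucc).val with hP2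
  set Q2 := ((wordProdA n l2) c.succ).val with hQ2
  have hbound : ∀ x : Fin n, x ∈ l2 ++ [c] → P2 ≤ x.val ∧ x.val < Q2 := by
    intro x hx
    rw [List.mem_append, List.mem_singleton] at hx
    rcases hx with hx | hx
    · exact e3 x hx
    · subst hx; omega
  have hb1 := hbound x1 hx1
  have hb2 := hbound x2 hx2
  have hp' := adj_val j ((wordProdA n l2) c.castSucc)
  have hq' := adj_val j ((wordProdA n l2) c.succ)
  rw [← hP2] at hp'
  rw [← hQ2] at hq'
  simp only [Nat.dist] at hstep hd2
  split_ifs at hp' hq' <;> omega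

end BoolAux

namespace BoolAux
variable {n : ℕ}

lemma esc_one_def {i : ℕ} (π : Equiv.Perm (Fin (n+1)))
    (z : Fin (n+1)) (hz : ∀ x : Fin (n+1), x.val < i → i ≤ (π x).val → x = z) :
    esc n i π ≤ 1 := by
  unfold esc
  rw [Finset.card_le_one]
  intro a ha b hb
  simp only [Finset.mem_filter, Finset.mem_univ, true_and] at ha hb
  rw [hz a ha.1 ha.2, hz b hb.1 hb.2]

/-- the wire lemma for two occurrences. -/
lemma esc_two_occ {i : ℕ} (hi1 : 1 ≤ i) (hi2 : i ≤ n) (j : Fin n) (hj : j.val + 1 = i)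
    (w1 w2 w3 : List (Fin n))
    (h1 : ∀ a ∈ w1, a ≠ j) (h2 : ∀ a ∈ w2, a ≠ j) (h3 : ∀ a ∈ w3, a ≠ j)
    (hside : (∀ a ∈ w2, a.val ≠ j.val + 1) ∨ (∀ a ∈ w2, a.val + 1 ≠ j.val)) :
    esc n i (wordProdA n (w1 ++ [j] ++ w2 ++ [j] ++ w3)) ≤ 1 := by
  have hval : ∀ (u : List (Fin n)), (∀ a ∈ u, a ≠ j) → ∀ a ∈ u, a.val + 1 ≠ i := by
    intro u hu a ha hc
    exact hu a ha (Fin.ext (by omega))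
  have hprod : wordProdA n (w1 ++ [j] ++ w2 ++ [j] ++ w3)
      = wordProdA n w1 * ((adjTransposition n j * wordProdA n w2 * adjTransposition n j)
        * wordProdA n w3) := by
    simp only [wp_append, wp_singleton]
    group
  rw [hprod, esc_mul_left (sidePreserve (hval w1 h1)),
    esc_mul_right (sidePreserve (hval w3 h3))]
  set B := wordProdA n w2 with hB
  set s := adjTransposition n j with hs
  have hBside : ∀ x : Fin (n+1), (B x).val < i ↔ x.val < i := sidePreserve (hval w2 h2)
  have hjc : (j.castSucc : Fin (n+1)).val = i - 1 := by
    simp only [Fin.coe_castSucc]; omega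
  rcases hside with hfix | hfix
  · -- B fixes the point with value i
    have hBi : B ⟨i, by omega⟩ = ⟨i, by omega⟩ := by
      apply pointFix
      intro a ha
      exact ⟨by simpa using fun hc => hfix a ha (by omega), by
        simpa using fun hc => hval w2 h2 a ha (by omega)⟩
    apply esc_one_def _ (B⁻¹ j.castSucc)
    intro x hx hesc
    simp only [Equiv.Perm.mul_apply] at hesc
    have hxne : x.val ≠ i - 1 := by
      intro hc
      have hxj : x = j.castSucc := Fin.ext (by omega)
      rw [hxj] at hesc
      have hsx : s j.castSucc = j.succ := Equiv.swap_apply_left _ _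
      have hjsv : (j.succ : Fin (n+1)) = ⟨i, by omega⟩ := Fin.ext (by simp; omega)
      rw [hsx, hjsv, hBi] at hesc
      have : s ⟨i, by omega⟩ = j.castSucc := by
        rw [← hjsv]; exact Equiv.swap_apply_right _ _
      rw [this] at hesc
      omega
    have hsx : s x = x := by
      apply Fin.ext
      rw [hs, adj_val]
      have : x.val ≠ j.val := by omega
      have : x.val ≠ j.val + 1 := by omega
      simp_all
    rw [hsx] at hesc
    have hBx : (B x).val < i := (hBside x).2 hx
    have hBxj : B x = j.castSucc := by
      apply Fin.ext
      have := adj_val j (B x)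
      rw [← hs] at this
      rw [this] at hesc
      split_ifs at hesc <;> simp <;> omega
    rw [← hBxj, (show ∀ x, B⁻¹ (B x) = x from B.symm_apply_apply)]
  · -- B fixes the point with value i-1 = j.val
    have hBi : B j.castSucc = j.castSucc := by
      apply pointFix
      intro a ha
      refine ⟨fun hc => hval w2 h2 a ha (by simp only [Fin.coe_castSucc] at hc; omega), ?_⟩
      intro hc
      exact hfix a ha (by simp only [Fin.coe_castSucc] at hc; omega)
    apply esc_one_def _ j.castSucc
    intro x hx hesc
    simp only [Equiv.Perm.mul_apply] at hesc
    by_contra hxne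
    have hxv : x.val ≠ j.val := fun hc => hxne (Fin.ext (by simpa using hc))
    have hsx : s x = x := by
      apply Fin.ext
      rw [hs, adj_val]
      have h4 : x.val ≠ j.val + 1 := by omega
      simp_all
    rw [hsx] at hesc
    have hBx : (B x).val < i := (hBside x).2 hx
    have hBxj : B x = j.castSucc := by
      apply Fin.ext
      have h5 := adj_val j (B x)
      rw [← hs] at h5
      rw [h5] at hesc
      split_ifs at hesc <;> simp <;> omega
    have hxx : x = j.castSucc := by
      rw [← hBi] at hBxj
      exact B.injective hBxj
    exact hxne hxx

end BoolAux

namespace BoolAux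
variable {n : ℕ}

lemma filter_i_len_le_one {i : ℕ} {L : List (Fin n)} (hnd : L.Nodup) :
    (L.filter (fun a => a.val + 1 = i)).length ≤ 1 := by
  have hFnd : (L.filter (fun a => a.val + 1 = i)).Nodup :=
    List.Nodup.sublist (List.filter_sublist (l := L)) hnd
  have hall : ∀ x ∈ L.filter (fun a => a.val + 1 = i), x.val + 1 = i := by
    intro x hx
    have := List.of_mem_filter hx
    simpa using this
  match hF : L.filter (fun a => a.val + 1 = i) with
  | [] => rw [hF]; simp
  | [x] => rw [hF]; simp
  | x :: y :: F =>
    exfalso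
    rw [hF] at hFnd hall
    have h1 := hall x (by simp)
    have h2 := hall y (by simp)
    have : x = y := Fin.ext (by omega)
    rw [List.nodup_cons] at hFnd
    exact hFnd.1 (by simp [this])

lemma filter_i_nil {i : ℕ} {L : List (Fin n)} {j : Fin n} (hj : j.val + 1 = i)
    (hnot : j ∉ L) : L.filter (fun a => a.val + 1 = i) = [] := by
  rw [List.filter_eq_nil_iff]
  intro a ha hc
  simp only [decide_eq_true_eq] at hc
  exact hnot (by rwa [show a = j from Fin.ext (by omega)] at ha)

lemma forward_esc (l : List (Fin n)) (c : Fin n) (hnd : (l ++ [c]).Nodup)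
    (hred : ReducedA n (l ++ [c] ++ l.reverse))
    (w : List (Fin n)) (hsub : w.Sublist (l ++ [c] ++ l.reverse))
    (i : ℕ) (hi1 : 1 ≤ i) (hi2 : i ≤ n) :
    esc n i (wordProdA n w) ≤ 1 := by
  classical
  have hlnd : l.Nodup := (List.nodup_append.1 hnd).1
  have hcl : c ∉ l := by
    have := (List.nodup_append.1 hnd).2.2
    intro hc
    exact this c hc c (by simp) rfl
  -- step A : maximal growth
  have hprod : wordProdA n (l ++ [c] ++ l.reverse)
      = Equiv.swap ((wordProdA n l) c.castSucc) ((wordProdA n l) c.succ) := by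
    rw [Equiv.swap_apply_apply]
    rw [wp_append, wp_append, wp_singleton, wp_reverse]
    rfl
  set P := (wordProdA n l) c.castSucc with hP
  set Q := (wordProdA n l) c.succ with hQ
  have hPQ : P ≠ Q := by
    intro hc
    have := (wordProdA n l).injective hc
    have : (c.castSucc : Fin (n+1)).val = c.succ.val := by rw [this]
    simp at this
  have hdist1 : 1 ≤ Nat.dist P.val Q.val := by
    rcases Nat.eq_or_lt_of_le (Nat.zero_le (Nat.dist P.val Q.val)) with h | h
    · exfalso
      have := Nat.eq_of_dist_eq_zero h.symm
      exact hPQ (Fin.ext this)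
    · omega
  have hninv : nInv (Equiv.swap P Q) = 2 * (Nat.dist P.val Q.val - 1) + 1 := by
    rcases lt_trichotomy P.val Q.val with h | h | h
    · have hd : Nat.dist P.val Q.val = Q.val - P.val := by simp [Nat.dist]; omega
      exact nInv_swap _ P Q h (by omega)
    · exact absurd (Fin.ext h) hPQ
    · have hd : Nat.dist P.val Q.val = P.val - Q.val := by simp [Nat.dist]; omega
      rw [Equiv.swap_comm]
      exact nInv_swap _ Q P h (by omega)
  have hlen : (l ++ [c] ++ l.reverse).length = 2 * l.length + 1 := by simp; omega
  have hredlen := (reducedA_iff _).1 hred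
  rw [hprod] at hredlen
  rw [hninv, hlen] at hredlen
  have hmax : Nat.dist P.val Q.val = 1 + l.length := by omega
  -- step B : decompose the sublist
  obtain ⟨v1, u3, hw1, hv1, hu3⟩ := List.sublist_append_iff.1 hsub
  obtain ⟨u1, u2, hv12, hu1, hu2⟩ := List.sublist_append_iff.1 hv1
  set j : Fin n := ⟨i - 1, by omega⟩ with hjdef
  have hjv : j.val + 1 = i := by simp [hjdef]; omega
  have hwdecomp : w = u1 ++ u2 ++ u3 := by rw [hw1, hv12]
  by_cases hj1 : j ∈ u1
  · by_cases hj3 : j ∈ u3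
    · -- two occurrences
      have hjc : j ≠ c := by
        intro hc
        exact hcl (hc ▸ hu1.subset hj1)
      obtain ⟨l1, l2, hl⟩ := List.append_of_mem (hu1.subset hj1)
      have hlnd' := hl ▸ hlnd
      rw [List.nodup_append] at hlnd'
      have hjl1 : j ∉ l1 := fun hc => hlnd'.2.2 j hc j (by simp) rfl
      have hjl2 : j ∉ l2 := by
        have := hlnd'.2.1
        rw [List.nodup_cons] at this
        exact this.1
      -- decompose u1
      rw [hl] at hu1
      obtain ⟨d1, d2, hu1eq, hd1, hd2⟩ := List.sublist_append_iff.1 hu1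
      have hjd2 : j ∈ d2 := by
        rcases List.mem_append.1 (hu1eq ▸ hj1) with h | h
        · exact absurd (hd1.subset h) hjl1
        · exact h
      have hd2' : ∃ d2', d2 = j :: d2' ∧ d2'.Sublist l2 := by
        rcases List.sublist_cons_iff.1 hd2 with h | ⟨r, hr, hrs⟩
        · exact absurd (h.subset hjd2) hjl2
        · exact ⟨r, hr, hrs⟩
      obtain ⟨d2', hd2eq, hd2'⟩ := hd2'
      -- decompose u3
      have hrev : l.reverse = l2.reverse ++ j :: l1.reverse := by
        rw [hl]
        simp
      rw [hrev] at hu3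
      obtain ⟨g1, g2, hu3eq, hg1, hg2⟩ := List.sublist_append_iff.1 hu3
      have hjg2 : j ∈ g2 := by
        rcases List.mem_append.1 (hu3eq ▸ hj3) with h | h
        · exact absurd (by simpa using hg1.subset h) hjl2
        · exact h
      have hg2' : ∃ g2', g2 = j :: g2' ∧ g2'.Sublist l1.reverse := by
        rcases List.sublist_cons_iff.1 hg2 with h | ⟨r, hr, hrs⟩
        · exact absurd (by simpa using h.subset hjg2) hjl1
        · exact ⟨r, hr, hrs⟩
      obtain ⟨g2', hg2eq, hg2'⟩ := hg2'
      have hwfin : w = d1 ++ [j] ++ (d2' ++ u2 ++ g1) ++ [j] ++ g2' := by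
        rw [hwdecomp, hu1eq, hd2eq, hu3eq, hg2eq]
        simp [List.append_assoc]
      have hmem2 : ∀ a ∈ d2' ++ u2 ++ g1, a ∈ l2 ++ [c] := by
        intro a ha
        rcases List.mem_append.1 ha with ha | ha
        · rcases List.mem_append.1 ha with ha | ha
          · exact List.mem_append.2 (Or.inl (hd2'.subset ha))
          · have hac := List.mem_singleton.1 (hu2.subset ha)
            rw [hac]
            exact List.mem_append.2 (Or.inr (by simp))
        · exact List.mem_append.2 (Or.inl (by simpa using hg1.subset ha))
      rw [hwfin]
      apply esc_two_occ hi1 hi2 j hjv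
      · intro a ha hc
        exact hjl1 (hc ▸ hd1.subset ha)
      · intro a ha hc
        rcases List.mem_append.1 (hmem2 a ha) with h | h
        · exact hjl2 (hc ▸ h)
        · exact hjc (hc ▸ List.mem_singleton.1 h)
      · intro a ha hc
        have hmem := hg2'.subset ha
        rw [List.mem_reverse] at hmem
        exact hjl1 (hc ▸ hmem)
      · by_contra hcon
        push_neg at hcon
        obtain ⟨⟨a1, ha1, hv1'⟩, ⟨a2, ha2, hv2'⟩⟩ := hcon
        have hmaxl : Nat.dist ((wordProdA n (l1 ++ j :: l2)) c.castSucc).val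
            ((wordProdA n (l1 ++ j :: l2)) c.succ).val = 1 + (l1 ++ j :: l2).length := by
          rw [← hl, ← hP, ← hQ]
          exact hmax
        exact neighbor l1 l2 j c hmaxl a2 (hmem2 a2 ha2) hv2' a1 (hmem2 a1 ha1) hv1'
    · -- j ∉ u3 : at most one occurrence
      refine le_trans (esc_le_count hi1 w) ?_
      rw [hwdecomp, List.filter_append, List.filter_append]
      have h3 : u3.filter (fun a => a.val + 1 = i) = [] := filter_i_nil hjv hj3
      have h2 : (u2.filter (fun a => a.val + 1 = i)).length ≤ u2.length :=
        List.length_filter_le _ _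
      have hu2len : u2.length ≤ 1 := by
        have := hu2.length_le
        simpa using this
      have h1 : (u1.filter (fun a => a.val + 1 = i)).length ≤ 1 :=
        filter_i_len_le_one (List.Nodup.sublist hu1 hlnd)
      -- need: if j ∈ u1 then u2 has no letter j (c ≠ j)
      have hjc : j ≠ c := by
        intro hc
        exact hcl (hc ▸ hu1.subset hj1)
      have h2' : u2.filter (fun a => a.val + 1 = i) = [] := by
        apply filter_i_nil hjv
        intro hc
        exact hjc (List.mem_singleton.1 (hu2.subset hc))
      rw [h3, h2']
      simpa using h1
  · -- j ∉ u1
    refine le_trans (esc_le_count hi1 w) ?_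
    rw [hwdecomp, List.filter_append, List.filter_append]
    have h1 : u1.filter (fun a => a.val + 1 = i) = [] := filter_i_nil hjv hj1
    have h3 : (u3.filter (fun a => a.val + 1 = i)).length ≤ 1 :=
      filter_i_len_le_one (List.Nodup.sublist hu3 (by simpa using hlnd))
    have hu2f : (u2.filter (fun a => a.val + 1 = i)).length ≤ u2.length :=
      List.length_filter_le _ _
    have hu2len : u2.length ≤ 1 := by
      have := hu2.length_le
      simpa using this
    by_cases hj3 : j ∈ u3
    · -- then c ≠ j? no : c could equal j only if j ∉ l... but j ∈ u3 ⊆ l.reverse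
      have hjc : j ≠ c := by
        intro hc
        exact hcl (hc ▸ (by simpa using hu3.subset hj3))
      have h2' : u2.filter (fun a => a.val + 1 = i) = [] := by
        apply filter_i_nil hjv
        intro hc
        exact hjc (List.mem_singleton.1 (hu2.subset hc))
      rw [h1, h2']
      simpa using h3
    · have h3' : u3.filter (fun a => a.val + 1 = i) = [] := filter_i_nil hjv hj3
      rw [h1, h3']
      simpa using (le_trans hu2f hu2len)

end BoolAux

namespace BoolAux
variable {n : ℕ}

/-- extend a permutation of `Fin (m+1)` to `Fin (m+2)` fixing `0`. -/
def emb {m : ℕ} (σ : Equiv.Perm (Fin (m+1))) : Equiv.Perm (Fin (m+2)) :=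
  Equiv.Perm.decomposeFin.symm (0, σ)

@[simp] lemma emb_zero {m : ℕ} (σ : Equiv.Perm (Fin (m+1))) : emb σ 0 = 0 :=
  Equiv.Perm.decomposeFin_symm_apply_zero 0 σ

@[simp] lemma emb_succ {m : ℕ} (σ : Equiv.Perm (Fin (m+1))) (x : Fin (m+1)) :
    emb σ x.succ = (σ x).succ := by
  rw [emb, Equiv.Perm.decomposeFin_symm_apply_succ, Equiv.swap_self]
  rfl

lemma emb_mul {m : ℕ} (σ τ : Equiv.Perm (Fin (m+1))) :
    emb (σ * τ) = emb σ * emb τ := by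
  ext x
  induction x using Fin.cases with
  | zero => simp
  | succ y => simp

lemma emb_swap {m : ℕ} (a b : Fin (m+1)) :
    emb (Equiv.swap a b) = Equiv.swap a.succ b.succ := by
  ext x
  induction x using Fin.cases with
  | zero =>
    rw [emb_zero, Equiv.swap_apply_of_ne_of_ne]
    · exact (Fin.succ_ne_zero a).symm
    · exact (Fin.succ_ne_zero b).symm
  | succ y =>
    rw [emb_succ, Fin.succ_injective _ |>.swap_apply]

lemma emb_adj {m : ℕ} (j : Fin m) :
    emb (adjTransposition m j) = adjTransposition (m+1) j.succ := by
  rw [adjTransposition, adjTransposition, emb_swap, Fin.succ_castSucc]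

lemma emb_wp {m : ℕ} (w : List (Fin m)) :
    wordProdA (m+1) (w.map Fin.succ) = emb (wordProdA m w) := by
  induction w with
  | nil =>
    simp only [List.map_nil, wp_nil]
    ext x
    induction x using Fin.cases with
    | zero => simp
    | succ y => simp
  | cons a w ih =>
    simp only [List.map_cons, wp_cons, emb_mul, ih, emb_adj]

lemma esc_emb {m : ℕ} (σ : Equiv.Perm (Fin (m+1))) (i : ℕ) :
    esc m i σ = esc (m+1) (i+1) (emb σ) := by
  unfold esc
  apply Finset.card_bij (fun (x : Fin (m+1)) _ => x.succ)
  · intro x hx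
    simp only [Finset.mem_filter, Finset.mem_univ, true_and] at hx ⊢
    rw [emb_succ]
    simp only [Fin.val_succ]
    omega
  · intro x _ y _ h
    exact Fin.succ_injective _ h
  · intro y hy
    simp only [Finset.mem_filter, Finset.mem_univ, true_and] at hy
    have hy0 : y ≠ 0 := by
      intro hc
      rw [hc] at hy
      simp only [emb_zero] at hy
      omega
    obtain ⟨x, rfl⟩ := Fin.exists_succ_eq.2 hy0
    refine ⟨x, ?_, rfl⟩
    simp only [Finset.mem_filter, Finset.mem_univ, true_and]
    rw [emb_succ] at hy
    simp only [Fin.val_succ] at hy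
    omega

lemma top_succ {m : ℕ} (hm : 1 ≤ m) :
    topWordA (m+1) = (0 : Fin (m+1)) :: (topWordA m).map Fin.succ ++ [(0 : Fin (m+1))] := by
  have hfr : List.finRange (m+1) = 0 :: (List.finRange m).map Fin.succ :=
    List.finRange_succ
  have hne : (List.finRange m).map Fin.succ ≠ [] := by
    simp only [ne_eq, List.map_eq_nil_iff]
    intro hc
    have := congrArg List.length hc
    simp at this
    omega
  unfold topWordA
  rw [hfr, List.dropLast_cons_of_ne_nil hne, ← List.map_dropLast]
  simp [List.map_append, List.map_reverse, List.append_assoc]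

lemma wp_top : ∀ (m : ℕ), 1 ≤ m → wordProdA m (topWordA m) = Equiv.swap 0 (Fin.last m) := by
  intro m
  induction m with
  | zero => omega
  | succ k ih =>
    intro _
    rcases Nat.eq_zero_or_pos k with hk | hk
    · subst hk
      have : topWordA 1 = [(0 : Fin 1)] := rfl
      rw [this, wp_singleton, adjTransposition]
      congr 1
    · rw [top_succ hk]
      have hsplit : wordProdA (k+1) ((0 : Fin (k+1)) :: (topWordA k).map Fin.succ ++ [0])
          = adjTransposition (k+1) 0 * wordProdA (k+1) ((topWordA k).map Fin.succ)
            * adjTransposition (k+1) 0 := by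
        rw [show ((0 : Fin (k+1)) :: (topWordA k).map Fin.succ ++ [(0:Fin (k+1))])
          = [(0 : Fin (k+1))] ++ (topWordA k).map Fin.succ ++ [0] from rfl]
        rw [wp_append, wp_append]
        rw [wp_singleton]
      rw [hsplit, emb_wp, ih hk, emb_swap]
      have h1 : (0 : Fin (k+1)).succ = (1 : Fin (k+2)) := rfl
      have h2 : (Fin.last k).succ = Fin.last (k+1) := rfl
      rw [h1, h2]
      have hs0 : adjTransposition (k+1) 0 = Equiv.swap (0 : Fin (k+2)) 1 := by
        rw [adjTransposition]
        congr 1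
      have hconj := Equiv.swap_apply_apply (Equiv.swap (0 : Fin (k+2)) 1) 1 (Fin.last (k+1))
      rw [Equiv.swap_apply_right] at hconj
      have hlast : Equiv.swap (0 : Fin (k+2)) 1 (Fin.last (k+1)) = Fin.last (k+1) := by
        apply Equiv.swap_apply_of_ne_of_ne
        · intro hc
          have := congrArg Fin.val hc
          simp [Fin.last] at this
        · intro hc
          have := congrArg Fin.val hc
          simp [Fin.last, Fin.ext_iff] at this
          omega
      rw [hlast, Equiv.swap_inv] at hconj
      rw [hs0]
      exact hconj.symm

end BoolAux

namespace BoolAux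

lemma perm_fin_two (π : Equiv.Perm (Fin 2)) : π = 1 ∨ π = Equiv.swap 0 1 := by
  have h2 : ∀ x : Fin 2, x = 0 ∨ x = 1 := by
    intro x
    have hx := x.isLt
    have : x.val = 0 ∨ x.val = 1 := by omega
    rcases this with h | h
    · exact Or.inl (Fin.ext h)
    · exact Or.inr (Fin.ext h)
  by_cases h0 : π 0 = 0
  · left
    have h1 : π 1 = 1 := by
      rcases h2 (π 1) with h | h
      · exact absurd (π.injective (h.trans h0.symm)) (by
          intro hc
          exact absurd (congrArg Fin.val hc) (by simp))
      · exact h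
    ext x
    rcases h2 x with rfl | rfl
    · simp [h0]
    · simp [h1]
  · right
    have h0' : π 0 = 1 := (h2 (π 0)).resolve_left h0
    have h1 : π 1 = 0 := by
      rcases h2 (π 1) with h | h
      · exact h
      · exact absurd (π.injective (h.trans h0'.symm)) (by
          intro hc
          exact absurd (congrArg Fin.val hc) (by simp))
    ext x
    rcases h2 x with rfl | rfl
    · simp [h0', Equiv.swap_apply_left]
    · simp [h1, Equiv.swap_apply_right]

lemma s0_side {m : ℕ} {i : ℕ} (hi : 2 ≤ i) (x : Fin (m+2)) :
    ((adjTransposition (m+1) 0 x : Fin (m+2))).val < i ↔ x.val < i := by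
  have := adj_val (0 : Fin (m+1)) x
  rw [this]
  have h0v : ((0 : Fin (m+1)) : ℕ) = 0 := rfl
  split_ifs <;> omega

lemma backward : ∀ (m : ℕ) (π : Equiv.Perm (Fin (m+1))),
    (∀ i, 1 ≤ i → i ≤ m → esc m i π ≤ 1) →
    ∃ w : List (Fin m), w.Sublist (topWordA m) ∧ wordProdA m w = π := by
  intro m
  induction m with
  | zero =>
    intro π _
    refine ⟨[], List.nil_sublist _, ?_⟩
    rw [wp_nil]
    apply Equiv.ext
    intro x
    apply Fin.ext
    have h1 := (π x).isLt
    have h2 := ((1 : Equiv.Perm (Fin (0+1))) x).isLt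
    omega
  | succ k ih =>
    rcases Nat.eq_zero_or_pos k with hk | hk
    · subst hk
      intro π _
      rcases perm_fin_two π with rfl | rfl
      · exact ⟨[], List.nil_sublist _, wp_nil⟩
      · refine ⟨[0], ?_, ?_⟩
        · have : topWordA 1 = [(0 : Fin 1)] := rfl
          rw [this]
        · rw [wp_singleton, adjTransposition]
          congr 1
    · intro π hesc
      set s0 := adjTransposition (k+1) 0 with hs0def
      have hs00 : s0 (0 : Fin (k+2)) = 1 := by
        rw [hs0def, adjTransposition]
        exact Equiv.swap_apply_left _ _
      have hs01 : s0 (1 : Fin (k+2)) = 0 := by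
        rw [hs0def, adjTransposition]
        exact Equiv.swap_apply_right _ _
      have hs0inv : s0 * s0 = 1 := adj_mul_self _
      -- find π' fixing 0 with same esc for i ≥ 2
      have hmain : ∃ (π' : Equiv.Perm (Fin (k+2))) (pre post : List (Fin (k+1))),
          π' 0 = 0 ∧ (∀ i, 2 ≤ i → i ≤ k+1 → esc (k+1) i π' ≤ 1) ∧
          (pre = [] ∨ pre = [0]) ∧ (post = [] ∨ post = [0]) ∧
          wordProdA (k+1) pre * π' * wordProdA (k+1) post = π := by
        have hesc_preserve : ∀ (π'' : Equiv.Perm (Fin (k+2))) (i : ℕ), 2 ≤ i →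
            esc (k+1) i (s0 * π'') = esc (k+1) i π'' ∧
            esc (k+1) i (π'' * s0) = esc (k+1) i π'' := by
          intro π'' i hi
          exact ⟨esc_mul_left (s0_side hi) _, esc_mul_right (s0_side hi) _⟩
        by_cases h0 : π 0 = 0
        · exact ⟨π, [], [], h0, fun i hi hik => hesc i (by omega) hik, Or.inl rfl,
            Or.inl rfl, by simp⟩
        · by_cases h1 : π 1 = 0
          · refine ⟨π * s0, [], [0], by
              simp only [Equiv.Perm.mul_apply, hs00, h1], fun i hi hik => by
                rw [(hesc_preserve π i hi).2]; exact hesc i (by omega) hik,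
              Or.inl rfl, Or.inr rfl, ?_⟩
            rw [wp_nil, wp_singleton, ← hs0def, one_mul, mul_assoc, hs0inv, mul_one]
          · by_cases h0' : π 0 = 1
            · refine ⟨s0 * π, [0], [], by
                simp only [Equiv.Perm.mul_apply, h0', hs01], fun i hi hik => by
                  rw [(hesc_preserve π i hi).1]; exact hesc i (by omega) hik,
                Or.inr rfl, Or.inl rfl, ?_⟩
              rw [wp_nil, wp_singleton, ← hs0def, mul_one, ← mul_assoc, hs0inv, one_mul]
            · -- π 0 ∉ {0,1}, π 1 ≠ 0 : then π 1 = 1 by esc at i = 2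
              have hk2 : 2 ≤ k + 1 := by omega
              have he2 := hesc 2 (by omega) hk2
              have h0v : 2 ≤ (π 0).val := by
                rcases Nat.lt_or_ge (π 0).val 2 with h | h
                · exfalso
                  have : (π 0).val = 0 ∨ (π 0).val = 1 := by omega
                  rcases this with hv | hv
                  · exact h0 (Fin.ext (by simpa using hv))
                  · exact h0' (Fin.ext (by simpa using hv))
                · exact h
              have h1v : (π 1).val = 1 := by
                by_contra hc
                have h1v2 : 2 ≤ (π 1).val := by
                  rcases Nat.lt_or_ge (π 1).val 2 with h | h
                  · exfalso
                    have : (π 1).val = 0 ∨ (π 1).val = 1 := by omega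
                    rcases this with hv | hv
                    · exact h1 (Fin.ext (by simpa using hv))
                    · exact hc hv
                  · exact h
                have hsub : ({(0 : Fin (k+2)), 1} : Finset (Fin (k+2))) ⊆
                    Finset.univ.filter (fun x : Fin (k+2) => x.val < 2 ∧ 2 ≤ (π x).val) := by
                  intro x hx
                  simp only [Finset.mem_insert, Finset.mem_singleton] at hx
                  rcases hx with rfl | rfl
                  · simp only [Finset.mem_filter, Finset.mem_univ, true_and]
                    exact ⟨by simp, h0v⟩
                  · simp only [Finset.mem_filter, Finset.mem_univ, true_and]
                    exact ⟨by simp, h1v2⟩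
                have hcard : ({(0 : Fin (k+2)), 1} : Finset (Fin (k+2))).card = 2 := by
                  rw [Finset.card_insert_of_notMem (by simp), Finset.card_singleton]
                have hge : 2 ≤ esc (k+1) 2 π := by
                  rw [← hcard]
                  unfold esc
                  exact Finset.card_le_card hsub
                omega
              refine ⟨s0 * π * s0, [0], [0], by
                simp only [Equiv.Perm.mul_apply, hs00]
                rw [show π 1 = 1 from Fin.ext (by simpa using h1v), hs01], fun i hi hik => by
                  rw [(hesc_preserve (s0 * π) i hi).2, (hesc_preserve π i hi).1]
                  exact hesc i (by omega) hik,
                Or.inr rfl, Or.inr rfl, ?_⟩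
              rw [wp_singleton, ← hs0def]
              calc s0 * (s0 * π * s0) * s0 = (s0 * s0) * π * (s0 * s0) := by group
              _ = π := by rw [hs0inv]; simp
      obtain ⟨π', pre, post, hπ'0, hesc', hpre, hpost, hprod⟩ := hmain
      -- decompose π'
      set σ := (Equiv.Perm.decomposeFin π').2 with hσdef
      have hsymm : Equiv.Perm.decomposeFin.symm ((Equiv.Perm.decomposeFin π').1, σ) = π' := by
        rw [hσdef]
        exact Equiv.Perm.decomposeFin.symm_apply_apply π'
      have hp : (Equiv.Perm.decomposeFin π').1 = 0 := by
        have hz := Equiv.Perm.decomposeFin_symm_apply_zero (Equiv.Perm.decomposeFin π').1 σ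
        rw [hsymm] at hz
        rw [← hπ'0, hz]
      have hembσ : emb σ = π' := by
        rw [emb, ← hp]
        exact hsymm
      have hσesc : ∀ i, 1 ≤ i → i ≤ k → esc k i σ ≤ 1 := by
        intro i hi hik
        rw [esc_emb, hembσ]
        exact hesc' (i+1) (by omega) (by omega)
      obtain ⟨w', hw'sub, hw'prod⟩ := ih σ hσesc
      have hw'' : wordProdA (k+1) (w'.map Fin.succ) = π' := by
        rw [emb_wp, hw'prod, hembσ]
      set T := (topWordA k).map Fin.succ with hT
      have hsubT : (w'.map Fin.succ).Sublist T := List.Sublist.map _ hw'sub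
      have htop : topWordA (k+1) = (0 : Fin (k+1)) :: T ++ [0] := top_succ hk
      refine ⟨pre ++ w'.map Fin.succ ++ post, ?_, ?_⟩
      · rw [htop]
        have hmid : (w'.map Fin.succ).Sublist (T ++ [(0:Fin (k+1))]) :=
          hsubT.trans (List.sublist_append_left _ _)
        rcases hpre with rfl | rfl <;> rcases hpost with rfl | rfl
        · simp only [List.append_nil, List.nil_append]
          exact hmid.cons _
        · simp only [List.nil_append]
          exact (hsubT.append (List.Sublist.refl _)).cons _
        · simp only [List.append_nil]
          rw [show ((0:Fin (k+1)) :: T ++ [0]) = (0:Fin (k+1)) :: (T ++ [0]) from rfl]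
          exact List.Sublist.cons₂ _ hmid
        · rw [show ((0:Fin (k+1)) :: T ++ [0]) = (0:Fin (k+1)) :: (T ++ [0]) from rfl,
            show ([(0:Fin (k+1))] ++ w'.map Fin.succ ++ [0])
              = (0:Fin (k+1)) :: (w'.map Fin.succ ++ [0]) from rfl]
          exact List.Sublist.cons₂ _ (hsubT.append (List.Sublist.refl _))
      · rw [wp_append, wp_append, hw'', hprod]

end BoolAux

namespace BoolAux
variable {n : ℕ}

lemma cond_iff (π : Equiv.Perm (Fin (n+1))) (i : ℕ) (hi1 : 1 ≤ i) (hi2 : i ≤ n) :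
    (i - 1 ≤ ((Finset.univ.filter (fun x : Fin (n + 1) => x.val < i)).image (fun x => π x) ∩
      Finset.univ.filter (fun x : Fin (n + 1) => x.val < i)).card) ↔ esc n i π ≤ 1 := by
  classical
  set S := Finset.univ.filter (fun x : Fin (n + 1) => x.val < i) with hSdef
  set A := S.image (fun x => π x) with hAdef
  have hS : S.card = i := card_filter_lt i (by omega)
  have hA : A.card = i := by
    rw [hAdef, Finset.card_image_of_injective S π.injective, hS]
  have hsd := Finset.card_sdiff_add_card_inter A S
  have hescc : (A \ S).card = esc n i π := by
    symm
    unfold esc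
    apply Finset.card_bij (fun x _ => π x)
    · intro x hx
      simp only [Finset.mem_filter, Finset.mem_univ, true_and] at hx
      rw [Finset.mem_sdiff]
      constructor
      · rw [hAdef]
        apply Finset.mem_image_of_mem
        rw [hSdef, Finset.mem_filter]
        exact ⟨Finset.mem_univ _, hx.1⟩
      · rw [hSdef, Finset.mem_filter]
        simp only [Finset.mem_univ, true_and, not_lt]
        exact hx.2
    · intro x _ y _ h
      exact π.injective h
    · intro y hy
      rw [Finset.mem_sdiff] at hy
      obtain ⟨hyA, hyS⟩ := hy
      rw [hAdef, Finset.mem_image] at hyA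
      obtain ⟨x, hxS, hxy⟩ := hyA
      rw [hSdef, Finset.mem_filter] at hxS hyS
      simp only [Finset.mem_univ, true_and, not_lt] at hxS hyS
      refine ⟨x, ?_, hxy⟩
      simp only [Finset.mem_filter, Finset.mem_univ, true_and]
      exact ⟨hxS, by rw [hxy]; exact hyS⟩
  omega

lemma topWordA_spec (hn : 1 ≤ n) :
    ∃ (l : List (Fin n)) (c : Fin n), (l ++ [c]).Nodup ∧
      ReducedA n (l ++ [c] ++ l.reverse) ∧ l ++ [c] ++ l.reverse = topWordA n := by
  have hne : List.finRange n ≠ [] := by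
    intro hc
    have := congrArg List.length hc
    simp at this
    omega
  refine ⟨(List.finRange n).dropLast, (List.finRange n).getLast hne, ?_, ?_, ?_⟩
  · rw [List.dropLast_append_getLast hne]
    exact List.nodup_finRange n
  · rw [List.dropLast_append_getLast hne]
    show ReducedA n (topWordA n)
    rw [reducedA_iff]
    rw [wp_top n hn]
    have hlen : (topWordA n).length = 2 * (n - 1) + 1 := by
      unfold topWordA
      simp
      omega
    have hval : (0 : Fin (n+1)).val < (Fin.last n).val := by
      simp [Fin.last]
      omega
    rw [hlen, nInv_swap (n-1) 0 (Fin.last n) hval (by simp [Fin.last]; omega)]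
  · rw [List.dropLast_append_getLast hne]
    rfl

lemma main_theorem (hn : 1 ≤ n) (π : Equiv.Perm (Fin (n + 1))) :
    IsBooleanA n π ↔
      ∀ i : ℕ, 1 ≤ i → i ≤ n →
        i - 1 ≤
          ((Finset.univ.filter (fun x : Fin (n + 1) => x.val < i)).image (fun x => π x) ∩
            Finset.univ.filter (fun x : Fin (n + 1) => x.val < i)).card := by
  constructor
  · rintro ⟨l, c, hnd, hred, w, hsub, hw⟩ i hi1 hi2
    rw [cond_iff π i hi1 hi2]
    rw [← hw]
    exact forward_esc l c hnd hred w hsub i hi1 hi2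
  · intro h
    obtain ⟨w, hsub, hw⟩ := backward n π (fun i h1 h2 => (cond_iff π i h1 h2).1 (h i h1 h2))
    obtain ⟨l, c, hnd, hred, heq⟩ := topWordA_spec hn
    exact ⟨l, c, hnd, hred, w, by rw [heq]; exact hsub, hw⟩

end BoolAux

theorem stmt3 (n : ℕ) (hn : 1 ≤ n) (π : Equiv.Perm (Fin (n + 1))) :
    IsBooleanA n π ↔
      ∀ i : ℕ, 1 ≤ i → i ≤ n →
        i - 1 ≤
          ((Finset.univ.filter (fun x : Fin (n + 1) => x.val < i)).image (fun x => π x) ∩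
            Finset.univ.filter (fun x : Fin (n + 1) => x.val < i)).card :=
  BoolAux.main_theorem hn π
end

section
/- Let π ∈ S_{n+1} be boolean and let w be any reduced expression of π that is a subsequence of the word (s_1, …, s_{n−1}, s_n, s_{n−1}, …, s_1). Then for each 1 ≤ i ≤ n: the generator s_i occurs 0 times in w if and only if π({1,…,i}) = {1,…,i}; and s_i occurs exactly 2 times in w if and only if π(i+1) = i+1 and π({1,…,i}) ≠ {1,…,i}. -/
namespace Stmt4Aux

variable {n : ℕ}

lemma wordProdA_append (l₁ l₂ : List (Fin n)) :
    wordProdA n (l₁ ++ l₂) = wordProdA n l₁ * wordProdA n l₂ := by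
  simp [wordProdA]

lemma wordProdA_cons (i : Fin n) (l : List (Fin n)) :
    wordProdA n (i :: l) = adjTransposition n i * wordProdA n l := by
  simp [wordProdA]

lemma adjT_fix {i : Fin n} {x : Fin (n+1)} (h1 : x.val ≠ i.val) (h2 : x.val ≠ i.val + 1) :
    adjTransposition n i x = x := by
  apply Equiv.swap_apply_of_ne_of_ne
  · intro h; apply h1; rw [h]; rfl
  · intro h; apply h2; rw [h]; simp [Fin.val_succ]

lemma adjT_left (i : Fin n) : adjTransposition n i i.castSucc = i.succ :=
  Equiv.swap_apply_left _ _

lemma adjT_right (i : Fin n) : adjTransposition n i i.succ = i.castSucc :=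
  Equiv.swap_apply_right _ _

lemma wordProdA_fix {l : List (Fin n)} {x : Fin (n+1)}
    (h : ∀ i ∈ l, adjTransposition n i x = x) : wordProdA n l x = x := by
  induction l with
  | nil => rfl
  | cons a t ih =>
    rw [wordProdA_cons]
    simp only [Equiv.Perm.mul_apply]
    rw [ih (fun i hi => h i (List.mem_cons_of_mem a hi)), h a (List.mem_cons_self)]

lemma adjT_le_iff {i g : Fin n} (hig : i.val ≠ g.val) (x : Fin (n+1)) :
    ((adjTransposition n i) x).val ≤ g.val ↔ x.val ≤ g.val := by
  unfold adjTransposition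
  rw [Equiv.swap_apply_def]
  split_ifs with h1 h2
  · have hx : x.val = i.val := by rw [h1]; rfl
    simp only [Fin.val_succ]
    omega
  · have hx : x.val = i.val + 1 := by rw [h2]; rfl
    simp only [Fin.coe_castSucc]
    omega
  · exact Iff.rfl

lemma wordProdA_le_iff {l : List (Fin n)} {g : Fin n} (h : ∀ i ∈ l, i.val ≠ g.val)
    (x : Fin (n+1)) : ((wordProdA n l) x).val ≤ g.val ↔ x.val ≤ g.val := by
  induction l with
  | nil => exact Iff.rfl
  | cons a t ih =>
    rw [wordProdA_cons]
    simp only [Equiv.Perm.mul_apply]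
    rw [adjT_le_iff (h a (List.mem_cons_self)), ih (fun i hi => h i (List.mem_cons_of_mem a hi))]

lemma wordProd_inc_apply {l : List (Fin n)} (hs : l.Pairwise (· < ·)) {g : Fin n} (hg : g ∈ l) :
    wordProdA n l g.castSucc = g.succ := by
  obtain ⟨a, b, rfl⟩ := List.append_of_mem hg
  rw [List.pairwise_append] at hs
  obtain ⟨ha, hb, hab⟩ := hs
  have hbg : ∀ e ∈ b, g < e := (List.pairwise_cons.mp hb).1
  have hag : ∀ e ∈ a, e < g := fun e he => hab e he g (List.mem_cons_self)
  rw [wordProdA_append, wordProdA_cons]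
  simp only [Equiv.Perm.mul_apply]
  rw [wordProdA_fix (x := g.castSucc) (fun i hi => adjT_fix
      (by have := hbg i hi; rw [Fin.lt_def] at this; simp only [Fin.coe_castSucc]; omega)
      (by have := hbg i hi; rw [Fin.lt_def] at this; simp only [Fin.coe_castSucc]; omega))]
  rw [adjT_left]
  exact wordProdA_fix (fun i hi => adjT_fix
      (by have := hag i hi; rw [Fin.lt_def] at this; simp only [Fin.val_succ]; omega)
      (by have := hag i hi; rw [Fin.lt_def] at this; simp only [Fin.val_succ]; omega))

lemma wordProd_dec_apply {l : List (Fin n)} (hs : l.Pairwise (· > ·)) {g : Fin n} (hg : g ∈ l) :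
    wordProdA n l g.succ = g.castSucc := by
  obtain ⟨a, b, rfl⟩ := List.append_of_mem hg
  rw [List.pairwise_append] at hs
  obtain ⟨ha, hb, hab⟩ := hs
  have hbg : ∀ e ∈ b, e < g := (List.pairwise_cons.mp hb).1
  have hag : ∀ e ∈ a, g < e := fun e he => hab e he g (List.mem_cons_self)
  rw [wordProdA_append, wordProdA_cons]
  simp only [Equiv.Perm.mul_apply]
  rw [wordProdA_fix (x := g.succ) (fun i hi => adjT_fix
      (by have := hbg i hi; rw [Fin.lt_def] at this; simp only [Fin.val_succ]; omega)
      (by have := hbg i hi; rw [Fin.lt_def] at this; simp only [Fin.val_succ]; omega))]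
  rw [adjT_right]
  exact wordProdA_fix (fun i hi => adjT_fix
      (by have := hag i hi; rw [Fin.lt_def] at this; simp only [Fin.coe_castSucc]; omega)
      (by have := hag i hi; rw [Fin.lt_def] at this; simp only [Fin.coe_castSucc]; omega))

lemma adjT_commute {i k : Fin n} (h : i.val + 2 ≤ k.val) :
    Commute (adjTransposition n i) (adjTransposition n k) := by
  apply Equiv.Perm.Disjoint.commute
  intro x
  rcases le_or_gt x.val (i.val + 1) with hx | hx
  · right
    apply Equiv.swap_apply_of_ne_of_ne
    · intro hh; rw [hh] at hx; simp only [Fin.coe_castSucc] at hx; omega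
    · intro hh; rw [hh] at hx; simp only [Fin.val_succ] at hx; omega
  · left
    apply Equiv.swap_apply_of_ne_of_ne
    · intro hh; rw [hh] at hx; simp only [Fin.coe_castSucc] at hx; omega
    · intro hh; rw [hh] at hx; simp only [Fin.val_succ] at hx; omega

lemma wordProdA_shorten (X Y Z : List (Fin n)) (j : Fin n)
    (hY : ∀ e ∈ Y, Commute (adjTransposition n j) (adjTransposition n e)) :
    wordProdA n (X ++ j :: (Y ++ j :: Z)) = wordProdA n (X ++ (Y ++ Z)) := by
  have hc : Commute (adjTransposition n j) (wordProdA n Y) :=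
    Commute.list_prod_right _ _ (by
      intro y hy
      obtain ⟨e, he, rfl⟩ := List.mem_map.mp hy
      exact hY e he)
  have hs : adjTransposition n j * adjTransposition n j = 1 := Equiv.swap_mul_self _ _
  rw [wordProdA_append, wordProdA_cons, wordProdA_append, wordProdA_cons,
    wordProdA_append, wordProdA_append]
  rw [← mul_assoc (adjTransposition n j), hc.eq, mul_assoc, ← mul_assoc (adjTransposition n j), hs, one_mul]

lemma chain_setup {d : ℕ} {g : Fin n} {l : List (Fin n)} (hs : l.Pairwise (· > ·))
    (hgt : ∀ e ∈ l, g.val < e.val)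
    (hrun : ∀ v : Fin n, g.val < v.val → v.val ≤ g.val + (d+1) → v ∈ l)
    (hlt : g.val + (d + 1) < n) :
    ∃ (g' : Fin n) (c : List (Fin n)), g'.val = g.val + 1 ∧ l = c ++ [g'] ∧
      c.Pairwise (· > ·) ∧ (∀ e ∈ c, g'.val < e.val) ∧
      wordProdA n l g.succ = wordProdA n c g'.succ := by
  have hg1n : g.val + 1 < n := by omega
  let g' : Fin n := ⟨g.val + 1, hg1n⟩
  have hg'v0 : g'.val = g.val + 1 := rfl
  have hg'm : g' ∈ l := hrun g' (by omega) (by omega)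
  obtain ⟨c, e, rfl⟩ := List.append_of_mem hg'm
  rw [List.pairwise_append] at hs
  obtain ⟨hc, hge, hce⟩ := hs
  have hce' : ∀ x ∈ c, g' < x := fun x hx => hce x hx g' (List.mem_cons_self)
  have hes : ∀ x ∈ e, x < g' := (List.pairwise_cons.mp hge).1
  have he : e = [] := by
    rw [List.eq_nil_iff_forall_not_mem]
    intro x hx
    have h1 := hgt x (by simp [hx])
    have h2 := hes x hx
    rw [Fin.lt_def, hg'v0] at h2
    omega
  subst he
  refine ⟨g', c, hg'v0, rfl, hc, fun x hx => (Fin.lt_def.mp (hce' x hx)), ?_⟩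
  rw [wordProdA_append, wordProdA_cons]
  simp only [Equiv.Perm.mul_apply]
  have h1 : g.succ = g'.castSucc := by
    apply Fin.ext; simp [Fin.val_succ, hg'v0]
  have h2 : wordProdA n ([] : List (Fin n)) g'.castSucc = g'.castSucc := wordProdA_fix (by simp)
  rw [h1, h2, adjT_left]

lemma chainD_eq : ∀ (d : ℕ) (g : Fin n) (l : List (Fin n)), l.Pairwise (· > ·) →
    (∀ e ∈ l, g.val < e.val) →
    (∀ v : Fin n, g.val < v.val → v.val ≤ g.val + d → v ∈ l) →
    (∀ e ∈ l, e.val ≠ g.val + d + 1) →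
    g.val + d < n →
    (wordProdA n l g.succ).val = g.val + d + 1 := by
  intro d
  induction d with
  | zero =>
    intro g l _ hgt _ havoid _
    rw [wordProdA_fix (fun i hi => adjT_fix
      (by have := hgt i hi; have := havoid i hi; simp only [Fin.val_succ]; omega)
      (by have := hgt i hi; have := havoid i hi; simp only [Fin.val_succ]; omega))]
    simp [Fin.val_succ]
  | succ d ih =>
    intro g l hs hgt hrun havoid hlt
    obtain ⟨g', c, hg'v, rfl, hc, hcgt, heq⟩ := chain_setup hs hgt hrun hlt
    rw [heq]
    have := ih g' c hc hcgt ?_ ?_ (by omega)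
    · omega
    · intro v hv1 hv2
      have hvl : v ∈ c ++ [g'] := hrun v (by omega) (by omega)
      rcases List.mem_append.mp hvl with h | h
      · exact h
      · exfalso; simp at h; subst h; omega
    · intro e he
      have := havoid e (by simp [he])
      omega

lemma chainD_lb : ∀ (d : ℕ) (g : Fin n) (l : List (Fin n)), l.Pairwise (· > ·) →
    (∀ e ∈ l, g.val < e.val) →
    (∀ v : Fin n, g.val < v.val → v.val ≤ g.val + d → v ∈ l) →
    g.val + d < n →
    g.val + d < (wordProdA n l g.succ).val := by
  intro d
  induction d with
  | zero =>
    intro g l _ hgt _ _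
    have := (wordProdA_le_iff (g := g) (fun i hi => by have := hgt i hi; omega) g.succ)
    simp only [Fin.val_succ] at this
    by_contra hcon
    push_neg at hcon
    exact absurd (this.mp (by omega)) (by omega)
  | succ d ih =>
    intro g l hs hgt hrun hlt
    obtain ⟨g', c, hg'v, rfl, hc, hcgt, heq⟩ := chain_setup hs hgt hrun (by omega)
    rw [heq]
    have := ih g' c hc hcgt ?_ (by omega)
    · omega
    · intro v hv1 hv2
      have hvl : v ∈ c ++ [g'] := hrun v (by omega) (by omega)
      rcases List.mem_append.mp hvl with h | h
      · exact h
      · exfalso; simp at h; subst h; omega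

lemma Qsetup {w2 : List (Fin n)} (s2 : w2.Pairwise (· > ·)) {g : Fin n} (hg : g ∈ w2) :
    ∃ (x₀ : Fin (n+1)) (a' : List (Fin n)), x₀.val ≤ g.val ∧
      a'.Pairwise (· > ·) ∧ (∀ e ∈ a', g.val < e.val) ∧
      (∀ e : Fin n, e ∈ w2 → g.val < e.val → e ∈ a') ∧
      (∀ e ∈ a', e ∈ w2) ∧
      wordProdA n w2 x₀ = wordProdA n a' g.succ := by
  obtain ⟨a', b', rfl⟩ := List.append_of_mem hg
  rw [List.pairwise_append] at s2
  obtain ⟨ha, hb, hab⟩ := s2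
  have hbg : ∀ e ∈ b', e < g := (List.pairwise_cons.mp hb).1
  have hag : ∀ e ∈ a', g < e := fun e he => hab e he g (List.mem_cons_self)
  set x₀ : Fin (n+1) := (wordProdA n b').symm g.castSucc with hx₀
  have hb'av : ∀ i ∈ b', i.val ≠ g.val := fun i hi => by
    have := Fin.lt_def.mp (hbg i hi); omega
  have hx₀le : x₀.val ≤ g.val := by
    have := (wordProdA_le_iff (g := g) hb'av x₀)
    rw [hx₀] at this ⊢
    rw [Equiv.apply_symm_apply] at this
    exact this.mp (by simp [Fin.coe_castSucc])
  refine ⟨x₀, a', hx₀le, ha, fun e he => Fin.lt_def.mp (hag e he), ?_, ?_, ?_⟩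
  · intro e he hgt
    rcases List.mem_append.mp he with h | h
    · exact h
    · rcases List.mem_cons.mp h with h | h
      · exfalso; subst h; omega
      · exfalso; have := Fin.lt_def.mp (hbg e h); omega
  · intro e he; exact List.mem_append.mpr (Or.inl he)
  · rw [wordProdA_append, wordProdA_cons]
    simp only [Equiv.Perm.mul_apply]
    rw [hx₀, Equiv.apply_symm_apply, adjT_left]

lemma image_eq_of_pres {π : Equiv.Perm (Fin (n+1))} {g : Fin n}
    (h : ∀ x : Fin (n+1), (π x).val ≤ g.val ↔ x.val ≤ g.val) :
    (Finset.univ.filter (fun x : Fin (n + 1) => x.val ≤ g.val)).image (fun x => π x) =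
      Finset.univ.filter (fun x : Fin (n + 1) => x.val ≤ g.val) := by
  ext y
  simp only [Finset.mem_image, Finset.mem_filter, Finset.mem_univ, true_and]
  constructor
  · rintro ⟨x, hx, rfl⟩; exact (h x).mpr hx
  · intro hy
    exact ⟨π.symm y, (h (π.symm y)).mp (by rwa [Equiv.apply_symm_apply]),
      Equiv.apply_symm_apply _ _⟩

lemma image_ne_of_ex {π : Equiv.Perm (Fin (n+1))} {g : Fin n} (x : Fin (n+1))
    (hx : x.val ≤ g.val) (hpx : ¬ (π x).val ≤ g.val) :
    (Finset.univ.filter (fun x : Fin (n + 1) => x.val ≤ g.val)).image (fun x => π x) ≠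
      Finset.univ.filter (fun x : Fin (n + 1) => x.val ≤ g.val) := by
  intro h
  have hmem : π x ∈ Finset.univ.filter (fun x : Fin (n + 1) => x.val ≤ g.val) := by
    rw [← h]
    exact Finset.mem_image_of_mem _ (Finset.mem_filter.mpr ⟨Finset.mem_univ _, hx⟩)
  exact hpx (Finset.mem_filter.mp hmem).2

lemma caseD (g : Fin n) (w1 w2 : List (Fin n))
    (s1 : w1.Pairwise (· < ·)) (s2 : w2.Pairwise (· > ·))
    (hred : ReducedA n (w1 ++ w2)) (hgw2 : g ∈ w2)
    (hpres : ∀ x : Fin (n+1), x.val ≤ g.val → ((wordProdA n (w1 ++ w2)) x).val ≤ g.val) :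
    ∀ (d : ℕ) (j : Fin n), n ≤ j.val + d → g.val ≤ j.val →
    (∀ v : Fin n, g.val ≤ v.val → v.val ≤ j.val → v ∈ w1) →
    (∀ v : Fin n, g.val ≤ v.val → v.val ≤ j.val → v ∈ w2) → False := by
  obtain ⟨x₀, a', hx₀le, ha's, ha'gt, ha'of, ha'to, hq⟩ := Qsetup s2 hgw2
  intro d
  induction d with
  | zero =>
    intro j hd _ _ _
    have := j.isLt; omega
  | succ d ih =>
    intro j hd hgj hA hB
    by_cases hX1 : ∃ e : Fin n, e ∈ w1 ∧ e.val = j.val + 1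
    · by_cases hX2 : ∃ e : Fin n, e ∈ w2 ∧ e.val = j.val + 1
      · obtain ⟨j₁, hj₁w, hj₁v⟩ := hX1
        obtain ⟨j₂, hj₂w, hj₂v⟩ := hX2
        refine ih j₁ (by omega) (by omega) ?_ ?_
        · intro v hv1 hv2
          rcases Nat.lt_or_ge j.val v.val with h | h
          · have : v = j₁ := Fin.ext (by omega)
            subst this; exact hj₁w
          · exact hA v hv1 h
        · intro v hv1 hv2
          rcases Nat.lt_or_ge j.val v.val with h | h
          · have : v = j₂ := Fin.ext (by omega)
            subst this; exact hj₂w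
          · exact hB v hv1 h
      · -- j+1 in w1 only
        obtain ⟨j₁, hj₁w, hj₁v⟩ := hX1
        have hm : (wordProdA n a' g.succ).val = g.val + (j.val - g.val) + 1 := by
          refine chainD_eq _ g a' ha's ha'gt ?_ ?_ (by omega)
          · intro v hv1 hv2
            exact ha'of v (hB v (by omega) (by omega)) hv1
          · intro e he
            intro hcon
            exact hX2 ⟨e, ha'to e he, by omega⟩
        have hmfin : wordProdA n a' g.succ = j₁.castSucc := by
          apply Fin.ext
          simp only [Fin.coe_castSucc]
          omega
        have hπ : (wordProdA n (w1 ++ w2)) x₀ = j₁.succ := by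
          rw [wordProdA_append]
          simp only [Equiv.Perm.mul_apply]
          rw [hq, hmfin, wordProd_inc_apply s1 hj₁w]
        have hple := hpres x₀ hx₀le
        rw [hπ] at hple
        simp only [Fin.val_succ] at hple
        omega
    · -- hX1 false
      by_cases hX2 : ∃ e : Fin n, e ∈ w2 ∧ e.val = j.val + 1
      · -- j+1 in w2 only
        obtain ⟨j₂, hj₂w, hj₂v⟩ := hX2
        have hm : g.val + (j.val + 1 - g.val) < (wordProdA n a' g.succ).val := by
          refine chainD_lb _ g a' ha's ha'gt ?_ (by omega)
          · intro v hv1 hv2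
            rcases Nat.lt_or_ge j.val v.val with h | h
            · have : v = j₂ := Fin.ext (by omega)
              subst this; exact ha'of v hj₂w hv1
            · exact ha'of v (hB v (by omega) h) hv1
        have hw1av : ∀ i ∈ w1, i.val ≠ j₂.val := by
          intro i hi hcon
          exact hX1 ⟨i, hi, by omega⟩
        have hple := hpres x₀ hx₀le
        rw [wordProdA_append] at hple
        simp only [Equiv.Perm.mul_apply] at hple
        rw [hq] at hple
        have := (wordProdA_le_iff (g := j₂) hw1av (wordProdA n a' g.succ)).mp
          (by omega)
        omega
      · -- neither: commutation trick
        have hjw1 : j ∈ w1 := hA j hgj le_rfl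
        have hjw2 : j ∈ w2 := hB j hgj le_rfl
        obtain ⟨a, b, hw1⟩ := List.append_of_mem hjw1
        obtain ⟨c, e, hw2⟩ := List.append_of_mem hjw2
        have hbgt : ∀ x ∈ b, j < x := by
          rw [hw1, List.pairwise_append] at s1
          exact (List.pairwise_cons.mp s1.2.1).1
        have hcgt : ∀ x ∈ c, j < x := by
          rw [hw2, List.pairwise_append] at s2
          exact fun x hx => s2.2.2 x hx j (List.mem_cons_self)
        have hcomm : ∀ x ∈ b ++ c, Commute (adjTransposition n j) (adjTransposition n x) := by
          intro x hx
          apply adjT_commute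
          rcases List.mem_append.mp hx with h | h
          · have h1 := Fin.lt_def.mp (hbgt x h)
            have h2 : x.val ≠ j.val + 1 := fun hcon => hX1 ⟨x, by rw [hw1]; simp [h], hcon⟩
            omega
          · have h1 := Fin.lt_def.mp (hcgt x h)
            have h2 : x.val ≠ j.val + 1 := fun hcon => hX2 ⟨x, by rw [hw2]; simp [h], hcon⟩
            omega
        have hlist : w1 ++ w2 = a ++ j :: ((b ++ c) ++ j :: e) := by
          rw [hw1, hw2]; simp
        have heq := wordProdA_shorten a (b ++ c) e j hcomm
        have hlen := hred (a ++ ((b ++ c) ++ e)) (by rw [← hlist] at heq; exact heq.symm)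
        rw [hlist] at hlen
        simp only [List.length_append, List.length_cons] at hlen
        omega


end Stmt4Aux

open Stmt4Aux in
theorem stmt4 (n : ℕ) (hn : 1 ≤ n) (π : Equiv.Perm (Fin (n + 1)))
    (hbool : IsBooleanA n π)
    (w : List (Fin n)) (hsub : w.Sublist (topWordA n)) (hred : ReducedA n w)
    (hprod : wordProdA n w = π) (g : Fin n) :
    (w.count g = 0 ↔
      (Finset.univ.filter (fun x : Fin (n + 1) => x.val ≤ g.val)).image (fun x => π x) =
        Finset.univ.filter (fun x : Fin (n + 1) => x.val ≤ g.val)) ∧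
    (w.count g = 2 ↔
      (π g.succ = g.succ ∧
        (Finset.univ.filter (fun x : Fin (n + 1) => x.val ≤ g.val)).image (fun x => π x) ≠
          Finset.univ.filter (fun x : Fin (n + 1) => x.val ≤ g.val))) := by
  subst hprod
  unfold topWordA at hsub
  obtain ⟨w1, w2, rfl, h1, h2⟩ := List.sublist_append_iff.mp hsub
  have s1 : w1.Pairwise (· < ·) := List.Pairwise.sublist h1 (List.pairwise_lt_finRange n)
  have s2 : w2.Pairwise (· > ·) := by
    refine List.Pairwise.sublist h2 ?_
    rw [List.pairwise_reverse]
    exact List.Pairwise.sublist (List.dropLast_sublist _) (List.pairwise_lt_finRange n)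
  have n1 : w1.Nodup := h1.nodup (List.nodup_finRange n)
  have n2 : w2.Nodup := h2.nodup (by
    rw [List.nodup_reverse]
    exact (List.dropLast_sublist _).nodup (List.nodup_finRange n))
  by_cases hg1 : g ∈ w1 <;> by_cases hg2 : g ∈ w2
  · -- both: count 2
    have hcnt : (w1 ++ w2).count g = 2 := by
      rw [List.count_append, List.count_eq_one_of_mem n1 hg1, List.count_eq_one_of_mem n2 hg2]
    have hfix : wordProdA n (w1 ++ w2) g.succ = g.succ := by
      rw [wordProdA_append]
      simp only [Equiv.Perm.mul_apply]
      rw [wordProd_dec_apply s2 hg2, wordProd_inc_apply s1 hg1]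
    have hne : (Finset.univ.filter (fun x : Fin (n + 1) => x.val ≤ g.val)).image
          (fun x => (wordProdA n (w1 ++ w2)) x) ≠
        Finset.univ.filter (fun x : Fin (n + 1) => x.val ≤ g.val) := by
      intro himg
      refine caseD g w1 w2 s1 s2 hred hg2 ?_ n g (by omega) le_rfl ?_ ?_
      · intro x hx
        have hmem : (wordProdA n (w1 ++ w2)) x ∈
            Finset.univ.filter (fun x : Fin (n + 1) => x.val ≤ g.val) := by
          rw [← himg]
          exact Finset.mem_image_of_mem _ (Finset.mem_filter.mpr ⟨Finset.mem_univ _, hx⟩)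
        exact (Finset.mem_filter.mp hmem).2
      · intro v hv1 hv2
        have : v = g := Fin.ext (by omega)
        subst this; exact hg1
      · intro v hv1 hv2
        have : v = g := Fin.ext (by omega)
        subst this; exact hg2
    refine ⟨⟨fun h => by omega, fun h => absurd h hne⟩, ⟨fun _ => ⟨hfix, hne⟩, fun _ => hcnt⟩⟩
  · -- g ∈ w1 only: count 1
    have hcnt : (w1 ++ w2).count g = 1 := by
      rw [List.count_append, List.count_eq_one_of_mem n1 hg1, List.count_eq_zero.mpr hg2]
    have hav2 : ∀ i ∈ w2, i.val ≠ g.val := by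
      intro i hi hcon
      exact hg2 (by have : i = g := Fin.ext hcon; rwa [this] at hi)
    set x₀ : Fin (n+1) := (wordProdA n w2).symm g.castSucc with hx₀def
    have hx₀ : x₀.val ≤ g.val := by
      have := (wordProdA_le_iff (g := g) hav2 x₀)
      rw [hx₀def, Equiv.apply_symm_apply] at this
      exact this.mp (by simp)
    have hπx : wordProdA n (w1 ++ w2) x₀ = g.succ := by
      rw [wordProdA_append]
      simp only [Equiv.Perm.mul_apply]
      rw [hx₀def, Equiv.apply_symm_apply, wordProd_inc_apply s1 hg1]
    have hne := image_ne_of_ex (π := wordProdA n (w1 ++ w2)) x₀ hx₀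
      (by rw [hπx]; simp only [Fin.val_succ]; omega)
    have hfixne : wordProdA n (w1 ++ w2) g.succ ≠ g.succ := by
      intro hcon
      rw [wordProdA_append] at hcon
      simp only [Equiv.Perm.mul_apply] at hcon
      have hP : wordProdA n w1 g.castSucc = g.succ := wordProd_inc_apply s1 hg1
      have hQ : wordProdA n w2 g.succ = g.castSucc := by
        apply (wordProdA n w1).injective
        rw [hcon, hP]
      have h2' := (wordProdA_le_iff (g := g) hav2 g.succ).mp (by rw [hQ]; simp)
      simp only [Fin.val_succ] at h2'
      omega
    exact ⟨⟨fun h => by omega, fun h => absurd h hne⟩,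
      ⟨fun h => by omega, fun h => absurd h.1 hfixne⟩⟩
  · -- g ∈ w2 only: count 1
    have hcnt : (w1 ++ w2).count g = 1 := by
      rw [List.count_append, List.count_eq_zero.mpr hg1, List.count_eq_one_of_mem n2 hg2]
    have hav1 : ∀ i ∈ w1, i.val ≠ g.val := by
      intro i hi hcon
      exact hg1 (by have : i = g := Fin.ext hcon; rwa [this] at hi)
    have hfixne : wordProdA n (w1 ++ w2) g.succ ≠ g.succ := by
      intro hcon
      rw [wordProdA_append] at hcon
      simp only [Equiv.Perm.mul_apply] at hcon
      rw [wordProd_dec_apply s2 hg2] at hcon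
      have hle : ((wordProdA n w1) g.castSucc).val ≤ g.val :=
        (wordProdA_le_iff (g := g) hav1 _).mpr (by simp)
      rw [hcon] at hle
      simp only [Fin.val_succ] at hle
      omega
    obtain ⟨x₀, a', hx₀le, ha's, ha'gt, _, _, hq⟩ := Qsetup s2 hg2
    have hne := image_ne_of_ex (π := wordProdA n (w1 ++ w2)) x₀ hx₀le (by
      rw [wordProdA_append]
      simp only [Equiv.Perm.mul_apply]
      rw [hq, wordProdA_le_iff (g := g) hav1,
        wordProdA_le_iff (g := g) (fun i hi => by have := ha'gt i hi; omega)]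
      simp only [Fin.val_succ]
      omega)
    exact ⟨⟨fun h => by omega, fun h => absurd h hne⟩,
      ⟨fun h => by omega, fun h => absurd h.1 hfixne⟩⟩
  · -- neither: count 0
    have hcnt : (w1 ++ w2).count g = 0 := by
      rw [List.count_eq_zero]
      intro hmem
      rcases List.mem_append.mp hmem with h | h
      exacts [hg1 h, hg2 h]
    have hav : ∀ i ∈ w1 ++ w2, i.val ≠ g.val := by
      intro i hi hcon
      have : i = g := Fin.ext hcon
      subst this
      rcases List.mem_append.mp hi with h | h
      exacts [hg1 h, hg2 h]
    have heq := image_eq_of_pres (π := wordProdA n (w1 ++ w2)) (g := g)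
      (fun x => wordProdA_le_iff hav x)
    exact ⟨⟨fun _ => heq, fun _ => hcnt⟩,
      ⟨fun h => by omega, fun h => absurd heq h.2⟩⟩
end

section
/- Let π ∈ S_{n+1} be boolean and let w be any reduced expression of π that is a subsequence of the word (s_1, …, s_{n−1}, s_n, s_{n−1}, …, s_1). Then for each 1 ≤ i ≤ n: the generator s_i occurs exactly once in w if and only if π(i+1) ≠ i+1 and π({1,…,i}) ≠ {1,…,i}; and in that case i+1 is a top excedance of π or a top excedance of π^{-1}. -/
section Helpers

variable {n : ℕ}

lemma wordProdA_append' (l₁ l₂ : List (Fin n)) :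
    wordProdA n (l₁ ++ l₂) = wordProdA n l₁ * wordProdA n l₂ := by
  simp [wordProdA]

lemma adjT_le_iff {i g : Fin n} (hi : i ≠ g) (x : Fin (n + 1)) :
    ((adjTransposition n i) x).val ≤ g.val ↔ x.val ≤ g.val := by
  have hig : i.val ≠ g.val := fun h => hi (Fin.ext h)
  unfold adjTransposition
  rcases eq_or_ne x i.castSucc with rfl | h1
  · rw [Equiv.swap_apply_left]
    simp only [Fin.val_succ, Fin.coe_castSucc]
    omega
  rcases eq_or_ne x i.succ with rfl | h2
  · rw [Equiv.swap_apply_right]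
    simp only [Fin.val_succ, Fin.coe_castSucc]
    omega
  · rw [Equiv.swap_apply_of_ne_of_ne h1 h2]

lemma wordProd_le_iff {l : List (Fin n)} {g : Fin n} (h : ∀ i ∈ l, i ≠ g) (x : Fin (n + 1)) :
    ((wordProdA n l) x).val ≤ g.val ↔ x.val ≤ g.val := by
  induction l with
  | nil => simp [wordProdA]
  | cons a l ih =>
    have : wordProdA n (a :: l) x = adjTransposition n a (wordProdA n l x) := by
      simp [wordProdA]
    rw [this, adjT_le_iff (h a (by simp))]
    exact ih fun i hi => h i (List.mem_cons_of_mem _ hi)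

lemma wordProd_fix {l : List (Fin n)} {p : Fin (n + 1)}
    (h : ∀ i ∈ l, adjTransposition n i p = p) : wordProdA n l p = p := by
  induction l with
  | nil => simp [wordProdA]
  | cons a l ih =>
    have : wordProdA n (a :: l) p = adjTransposition n a (wordProdA n l p) := by
      simp [wordProdA]
    rw [this, ih (fun i hi => h i (List.mem_cons_of_mem _ hi)), h a (by simp)]

lemma adjT_fix_of_lt {i g : Fin n} (h : i.val < g.val) :
    adjTransposition n i g.succ = g.succ := by
  unfold adjTransposition
  apply Equiv.swap_apply_of_ne_of_ne
  · intro he; have := congrArg Fin.val he; simp at this; omega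
  · intro he; have := congrArg Fin.val he; simp at this; omega

lemma adjT_fix_of_gt {i g : Fin n} (h : g.val < i.val) :
    adjTransposition n i g.castSucc = g.castSucc := by
  unfold adjTransposition
  apply Equiv.swap_apply_of_ne_of_ne
  · intro he; have := congrArg Fin.val he; simp at this; omega
  · intro he; have := congrArg Fin.val he; simp at this; omega

/-- If `a` fixes `q`, `s_g p = q`, `b` fixes `p`, then `wordProd (a ++ g :: b) p = q`. -/
lemma wordProd_split {a b : List (Fin n)} {g : Fin n} {p q : Fin (n + 1)}
    (ha : wordProdA n a q = q) (hg : adjTransposition n g p = q)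
    (hb : wordProdA n b p = p) :
    wordProdA n (a ++ g :: b) p = q := by
  have h1 : (g :: b) = [g] ++ b := rfl
  rw [h1, ← List.append_assoc, wordProdA_append', Equiv.Perm.mul_apply, hb,
    wordProdA_append', Equiv.Perm.mul_apply]
  have : wordProdA n [g] p = q := by
    simpa [wordProdA] using hg
  rw [this, ha]

/-- For an increasing word `u` containing `g`, `wordProd u` maps `g` to `g+1`. -/
lemma wordProd_asc_apply {u : List (Fin n)} {g : Fin n}
    (hp : u.Pairwise (· < ·)) (hg : g ∈ u) :
    wordProdA n u g.castSucc = g.succ := by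
  obtain ⟨u1, u2, rfl⟩ := List.append_of_mem hg
  rw [List.pairwise_append] at hp
  obtain ⟨-, hp2, hp12⟩ := hp
  rw [List.pairwise_cons] at hp2
  apply wordProd_split
  · exact wordProd_fix fun i hi => adjT_fix_of_lt (hp12 i hi g (by simp))
  · exact Equiv.swap_apply_left _ _
  · exact wordProd_fix fun i hi => adjT_fix_of_gt (hp2.1 i hi)

/-- For a decreasing word `v` containing `g`, `wordProd v` maps `g+1` to `g`. -/
lemma wordProd_desc_apply {v : List (Fin n)} {g : Fin n}
    (hp : v.Pairwise (· > ·)) (hg : g ∈ v) :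
    wordProdA n v g.succ = g.castSucc := by
  obtain ⟨v1, v2, rfl⟩ := List.append_of_mem hg
  rw [List.pairwise_append] at hp
  obtain ⟨-, hp2, hp12⟩ := hp
  rw [List.pairwise_cons] at hp2
  apply wordProd_split
  · exact wordProd_fix fun i hi => adjT_fix_of_gt (hp12 i hi g (by simp))
  · exact Equiv.swap_apply_right _ _
  · exact wordProd_fix fun i hi => adjT_fix_of_lt (hp2.1 i hi)

end Helpers

theorem stmt5 (n : ℕ) (hn : 1 ≤ n) (π : Equiv.Perm (Fin (n + 1)))
    (hbool : IsBooleanA n π)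
    (w : List (Fin n)) (hsub : w.Sublist (topWordA n)) (hred : ReducedA n w)
    (hprod : wordProdA n w = π) (g : Fin n) :
    (w.count g = 1 ↔
      (π g.succ ≠ g.succ ∧
        (Finset.univ.filter (fun x : Fin (n + 1) => x.val ≤ g.val)).image (fun x => π x) ≠
          Finset.univ.filter (fun x : Fin (n + 1) => x.val ≤ g.val))) ∧
    (w.count g = 1 → (π.symm g.succ < g.succ ∨ π g.succ < g.succ)) := by
  clear hbool hred hn
  subst hprod
  unfold topWordA at hsub
  obtain ⟨u, v, rfl, hu, hv⟩ := List.sublist_append_iff.mp hsub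
  set S : Finset (Fin (n + 1)) := Finset.univ.filter (fun x => x.val ≤ g.val) with hSdef
  have hmemS : ∀ x : Fin (n + 1), x ∈ S ↔ x.val ≤ g.val := by
    intro x; simp [hSdef]
  have hup : u.Pairwise (· < ·) := List.Pairwise.sublist hu (List.pairwise_lt_finRange n)
  have hvp : v.Pairwise (fun a b => b < a) := by
    have h1 : ((List.finRange n).dropLast).Pairwise (· < ·) :=
      List.Pairwise.sublist (List.dropLast_sublist _) (List.pairwise_lt_finRange n)
    exact List.Pairwise.sublist hv (List.pairwise_reverse.mpr h1)
  have hun : u.Nodup := List.Nodup.sublist hu (List.nodup_finRange n)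
  have hvn : v.Nodup := List.Nodup.sublist hv
    (List.nodup_reverse.mpr (List.Nodup.sublist (List.dropLast_sublist _) (List.nodup_finRange n)))
  have hUV : wordProdA n (u ++ v) = wordProdA n u * wordProdA n v := wordProdA_append' u v
  by_cases hgu : g ∈ u <;> by_cases hgv : g ∈ v
  · -- g in both: count = 2, π fixes g+1
    have hc : (u ++ v).count g = 2 := by
      rw [List.count_append, List.count_eq_one_of_mem hun hgu, List.count_eq_one_of_mem hvn hgv]
    have hfix : wordProdA n (u ++ v) g.succ = g.succ := by
      rw [hUV, Equiv.Perm.mul_apply, wordProd_desc_apply hvp hgv, wordProd_asc_apply hup hgu]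
    refine ⟨⟨fun h => ?_, fun h => absurd hfix h.1⟩, fun h => ?_⟩ <;> omega
  · -- g in u only: count = 1, π⁻¹(g+1) ≤ g
    have hc : (u ++ v).count g = 1 := by
      rw [List.count_append, List.count_eq_one_of_mem hun hgu, List.count_eq_zero.mpr hgv]
    have hU : wordProdA n u g.castSucc = g.succ := wordProd_asc_apply hup hgu
    have hVle : ∀ x : Fin (n + 1), ((wordProdA n v) x).val ≤ g.val ↔ x.val ≤ g.val :=
      wordProd_le_iff (fun i hi he => hgv (he ▸ hi))
    have hsymm : (wordProdA n (u ++ v)).symm g.succ = (wordProdA n v).symm g.castSucc := by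
      rw [hUV]
      have hUs : (wordProdA n u).symm g.succ = g.castSucc := by
        rw [Equiv.symm_apply_eq]; exact hU.symm
      calc ((wordProdA n u) * (wordProdA n v)).symm g.succ
          = (wordProdA n v).symm ((wordProdA n u).symm g.succ) := rfl
        _ = (wordProdA n v).symm g.castSucc := by rw [hUs]
    have hle : ((wordProdA n (u ++ v)).symm g.succ).val ≤ g.val := by
      rw [hsymm]
      have := (hVle ((wordProdA n v).symm g.castSucc)).mp
        (by rw [Equiv.apply_symm_apply]; simp)
      exact this
    have hne : wordProdA n (u ++ v) g.succ ≠ g.succ := by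
      intro he
      have h2 : (wordProdA n (u ++ v)).symm g.succ = g.succ :=
        (Equiv.symm_apply_eq _).mpr he.symm
      rw [h2] at hle; simp [Fin.val_succ] at hle
    have himg : S.image (fun x => wordProdA n (u ++ v) x) ≠ S := by
      intro he
      have hx : (wordProdA n (u ++ v)).symm g.succ ∈ S := (hmemS _).mpr hle
      have : g.succ ∈ S.image (fun x => wordProdA n (u ++ v) x) :=
        Finset.mem_image.mpr ⟨_, hx, Equiv.apply_symm_apply _ _⟩
      rw [he, hmemS] at this
      simp [Fin.val_succ] at this
    refine ⟨⟨fun _ => ⟨hne, himg⟩, fun _ => hc⟩, fun _ => Or.inl ?_⟩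
    rw [Fin.lt_def, Fin.val_succ]
    omega
  · -- g in v only: count = 1, π(g+1) ≤ g
    have hc : (u ++ v).count g = 1 := by
      rw [List.count_append, List.count_eq_one_of_mem hvn hgv, List.count_eq_zero.mpr hgu]
    have hV : wordProdA n v g.succ = g.castSucc := wordProd_desc_apply hvp hgv
    have hUle : ∀ x : Fin (n + 1), ((wordProdA n u) x).val ≤ g.val ↔ x.val ≤ g.val :=
      wordProd_le_iff (fun i hi he => hgu (he ▸ hi))
    have hle : (wordProdA n (u ++ v) g.succ).val ≤ g.val := by
      rw [hUV, Equiv.Perm.mul_apply, hV]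
      exact (hUle _).mpr (by simp)
    have hne : wordProdA n (u ++ v) g.succ ≠ g.succ := by
      intro he; rw [he] at hle; simp [Fin.val_succ] at hle
    have himg : S.image (fun x => wordProdA n (u ++ v) x) ≠ S := by
      intro he
      have h1 : wordProdA n (u ++ v) g.succ ∈ S := (hmemS _).mpr hle
      rw [← he] at h1
      obtain ⟨y, hy, hyeq⟩ := Finset.mem_image.mp h1
      have : y = g.succ := (wordProdA n (u ++ v)).injective hyeq
      rw [this, hmemS] at hy
      simp [Fin.val_succ] at hy
    refine ⟨⟨fun _ => ⟨hne, himg⟩, fun _ => hc⟩, fun _ => Or.inr ?_⟩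
    rw [Fin.lt_def, Fin.val_succ]
    omega
  · -- g in neither: count = 0, π preserves S
    have hc : (u ++ v).count g = 0 := by
      rw [List.count_append, List.count_eq_zero.mpr hgu, List.count_eq_zero.mpr hgv]
    have hiff : ∀ x : Fin (n + 1), ((wordProdA n (u ++ v)) x).val ≤ g.val ↔ x.val ≤ g.val := by
      apply wordProd_le_iff
      intro i hi he
      rcases List.mem_append.mp hi with h | h
      · exact hgu (he ▸ h)
      · exact hgv (he ▸ h)
    have himg : S.image (fun x => wordProdA n (u ++ v) x) = S := by
      apply Finset.eq_of_subset_of_card_le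
      · intro y hy
        obtain ⟨x, hx, rfl⟩ := Finset.mem_image.mp hy
        exact (hmemS _).mpr ((hiff x).mpr ((hmemS x).mp hx))
      · rw [Finset.card_image_of_injective _ (wordProdA n (u ++ v)).injective]
    refine ⟨⟨fun h => ?_, fun h => absurd himg h.2⟩, fun h => ?_⟩ <;> omega
end

section
/- In B_n (n ≥ 2), the words s_0·s_1·⋯·s_{n−2}·s_{n−1}·s_{n−2}·⋯·s_1·s_0 and s_{n−1}·s_{n−2}·⋯·s_1·s_0·s_1·⋯·s_{n−2}·s_{n−1} are reduced (their common length 2n−1 is minimal among words in the generators with the same product); their products t_1 and t_2 are distinct boolean reflections; and every boolean reflection of B_n of length 2n−1 equals t_1 or t_2. -/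
/-- The Coxeter generators of the hyperoctahedral group `B_n`, realized as permutations
of `ℤ`: `s_0` exchanges `1` and `-1`; for `1 ≤ i ≤ n-1`, `s_i` exchanges `i` with `i+1`
and `-i` with `-(i+1)`. -/
def genB (n : ℕ) (i : Fin n) : Equiv.Perm ℤ :=
  if i.val = 0 then Equiv.swap 1 (-1)
  else Equiv.swap (i.val : ℤ) ((i.val : ℤ) + 1) * Equiv.swap (-(i.val : ℤ)) (-((i.val : ℤ) + 1))

/-- The product of a word in the generators of `B_n`. -/
def wordProdB (n : ℕ) (w : List (Fin n)) : Equiv.Perm ℤ :=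
  (w.map (genB n)).prod

/-- A word in the generators is reduced if no shorter word has the same product. -/
def ReducedB (n : ℕ) (w : List (Fin n)) : Prop :=
  ∀ w' : List (Fin n), wordProdB n w' = wordProdB n w → w.length ≤ w'.length

/-- A reflection of `B_n`: a conjugate (by an element of the group) of a generator. -/
def IsReflectionB (n : ℕ) (t : Equiv.Perm ℤ) : Prop :=
  ∃ (v : List (Fin n)) (g : Fin n), t = wordProdB n v * genB n g * (wordProdB n v)⁻¹

/-- A boolean reflection of `B_n`: a reflection admitting a reduced expression of the form
`s_{j_1} ⋯ s_{j_{k-1}} s_{j_k} s_{j_{k-1}} ⋯ s_{j_1}` with `j_1, …, j_k` pairwise distinct. -/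
def IsBooleanReflectionB (n : ℕ) (t : Equiv.Perm ℤ) : Prop :=
  IsReflectionB n t ∧
    ∃ (l : List (Fin n)) (c : Fin n), (l ++ [c]).Nodup ∧
      ReducedB n (l ++ [c] ++ l.reverse) ∧ wordProdB n (l ++ [c] ++ l.reverse) = t

/-- The word `s_0 s_1 ⋯ s_{n-2} s_{n-1} s_{n-2} ⋯ s_1 s_0`. -/
def wordOneB (n : ℕ) : List (Fin n) :=
  List.finRange n ++ ((List.finRange n).dropLast).reverse

/-- The word `s_{n-1} s_{n-2} ⋯ s_1 s_0 s_1 ⋯ s_{n-2} s_{n-1}`. -/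
def wordTwoB (n : ℕ) : List (Fin n) :=
  (List.finRange n).reverse ++ (List.finRange n).tail

-- ℕ-indexed generators
def gg (i : ℕ) : Equiv.Perm ℤ :=
  if i = 0 then Equiv.swap 1 (-1)
  else Equiv.swap (i : ℤ) ((i : ℤ) + 1) * Equiv.swap (-(i : ℤ)) (-((i : ℤ) + 1))

lemma genB_eq (n : ℕ) (i : Fin n) : genB n i = gg i.val := rfl

lemma gg_apply (i : ℕ) (x : ℤ) :
    gg i x = if i = 0 then (if x = 1 then -1 else if x = -1 then 1 else x)
      else (if x = (i:ℤ) then (i:ℤ)+1 else if x = (i:ℤ)+1 then (i:ℤ)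
        else if x = -(i:ℤ) then -(i:ℤ)-1 else if x = -(i:ℤ)-1 then -(i:ℤ) else x) := by
  rcases Nat.eq_zero_or_pos i with h | h
  · subst h; simp [gg, Equiv.swap_apply_def]
  · have h0 : i ≠ 0 := h.ne'
    have hi : (1:ℤ) ≤ (i:ℤ) := by exact_mod_cast h
    simp only [gg, if_neg h0, Equiv.Perm.mul_apply, Equiv.swap_apply_def]
    split_ifs <;> first | exact False.elim ‹False› | omega

lemma gg_invol (i : ℕ) : gg i * gg i = 1 := by
  ext x
  simp only [Equiv.Perm.mul_apply, Equiv.Perm.one_apply, gg_apply]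
  split_ifs <;> first | exact False.elim ‹False› | omega

lemma gg_inv (i : ℕ) : (gg i)⁻¹ = gg i := by
  rw [inv_eq_iff_mul_eq_one, gg_invol]

lemma gg_odd (i : ℕ) (x : ℤ) : gg i (-x) = -(gg i x) := by
  simp only [gg_apply]; split_ifs <;> first | exact False.elim ‹False› | omega

def prodG (l : List ℕ) : Equiv.Perm ℤ := (l.map gg).prod

lemma wordProdB_eq (n : ℕ) (w : List (Fin n)) : wordProdB n w = prodG (w.map Fin.val) := by
  simp [wordProdB, prodG, List.map_map]; rfl

lemma prodG_nil : prodG [] = 1 := rfl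

lemma prodG_cons (a : ℕ) (l : List ℕ) : prodG (a :: l) = gg a * prodG l := by
  simp [prodG]

lemma prodG_append (l l' : List ℕ) : prodG (l ++ l') = prodG l * prodG l' := by
  simp [prodG]

lemma prodG_reverse (l : List ℕ) : prodG l.reverse = (prodG l)⁻¹ := by
  simp only [prodG, List.map_reverse, List.prod_reverse_noncomm, List.map_map]
  congr 1
  simp only [Function.comp_def, gg_inv]

lemma prodG_odd (l : List ℕ) (x : ℤ) : prodG l (-x) = -(prodG l x) := by
  induction l generalizing x with
  | nil => simp [prodG_nil]
  | cons a l ih => simp only [prodG_cons, Equiv.Perm.mul_apply, ih, gg_odd]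

def upP (k : ℕ) : Equiv.Perm ℤ := prodG (List.range k)
def downP (a m : ℕ) : Equiv.Perm ℤ := prodG (List.range' a m).reverse

lemma upP_succ (k : ℕ) : upP (k+1) = upP k * gg k := by
  simp [upP, List.range_succ, prodG_append, prodG]

lemma gg_fix_of_gt (i : ℕ) (x : ℤ) (hx : (i:ℤ) + 1 < x) : gg i x = x := by
  rw [gg_apply]; split_ifs <;> first | exact False.elim ‹False› | omega

lemma upP_fix (k : ℕ) (x : ℤ) (hx : (k:ℤ) < x) : upP k x = x := by
  induction k with
  | zero => rfl
  | succ k ih =>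
    rw [upP_succ, Equiv.Perm.mul_apply, gg_fix_of_gt k x (by push_cast at hx ⊢; omega),
      ih (by push_cast at hx; omega)]

lemma upP_top (k : ℕ) (hk : 1 ≤ k) : upP k (k:ℤ) = -1 := by
  induction k with
  | zero => omega
  | succ k ih =>
    rcases Nat.eq_zero_or_pos k with h | h
    · subst h
      show upP 1 1 = -1
      rw [show upP 1 = gg 0 from by simp [upP, prodG, List.range_succ]]
      rw [gg_apply]; norm_num
    · rw [upP_succ, Equiv.Perm.mul_apply,
        show gg k ((k+1:ℕ):ℤ) = (k:ℤ) from by rw [gg_apply]; split_ifs <;> push_cast <;> omega]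
      exact ih h

lemma downP_succ (a m : ℕ) : downP a (m+1) = gg (a+m) * downP a m := by
  simp [downP, List.range'_concat, prodG_append, prodG_cons, prodG]

lemma downP_start (a m : ℕ) (ha : 1 ≤ a) : downP a m (a:ℤ) = (a:ℤ) + m := by
  induction m with
  | zero => simp [downP, prodG_nil]
  | succ m ih =>
    rw [downP_succ, Equiv.Perm.mul_apply, ih,
      show gg (a+m) ((a:ℤ)+m) = (a:ℤ)+m+1 from by rw [gg_apply]; split_ifs <;> push_cast <;> omega]
    push_cast; ring

lemma downP_fix_low (a m : ℕ) (x : ℤ) (h1 : 1 ≤ x) (h2 : x < a) : downP a m x = x := by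
  induction m with
  | zero => simp [downP, prodG_nil]
  | succ m ih =>
    rw [downP_succ, Equiv.Perm.mul_apply, ih,
      show gg (a+m) x = x from by rw [gg_apply]; split_ifs <;> push_cast <;> omega]

lemma upP_odd (k : ℕ) (x : ℤ) : upP k (-x) = -(upP k x) := prodG_odd _ x
lemma downP_odd (a m : ℕ) (x : ℤ) : downP a m (-x) = -(downP a m x) := prodG_odd _ x

lemma conj_gg0 (σ : Equiv.Perm ℤ) : σ * gg 0 * σ⁻¹ = Equiv.swap (σ 1) (σ (-1)) := by
  rw [Equiv.swap_apply_apply]; rfl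

lemma conj_gg (σ : Equiv.Perm ℤ) (i : ℕ) (hi : 1 ≤ i) :
    σ * gg i * σ⁻¹ =
      Equiv.swap (σ (i:ℤ)) (σ ((i:ℤ)+1)) * Equiv.swap (σ (-(i:ℤ))) (σ (-((i:ℤ)+1))) := by
  rw [Equiv.swap_apply_apply, Equiv.swap_apply_apply]
  have : gg i = Equiv.swap (i:ℤ) ((i:ℤ)+1) * Equiv.swap (-(i:ℤ)) (-((i:ℤ)+1)) := by
    rw [gg, if_neg (by omega)]
  rw [this]; group

lemma signWord (k : ℕ) (hk : 1 ≤ k) :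
    prodG ((List.range k).reverse ++ (List.range k).tail) = Equiv.swap (k:ℤ) (-(k:ℤ)) := by
  obtain ⟨m, rfl⟩ := Nat.exists_eq_add_of_le hk
  have hcons : List.range (1+m) = 0 :: (List.range (1+m)).tail := by
    rw [Nat.add_comm, List.range_succ_eq_map]; rfl
  have htail : prodG ((List.range (1+m)).tail) = gg 0 * upP (1+m) := by
    have : gg 0 * (gg 0 * prodG ((List.range (1+m)).tail)) = gg 0 * upP (1+m) := by
      rw [← prodG_cons, ← hcons]; rfl
    rwa [← mul_assoc, gg_invol, one_mul] at this
  rw [prodG_append, prodG_reverse, htail]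
  have : upP (1+m) = ((upP (1+m))⁻¹)⁻¹ := by rw [inv_inv]
  rw [show (prodG (List.range (1+m)))⁻¹ * (gg 0 * upP (1+m))
      = (upP (1+m))⁻¹ * gg 0 * ((upP (1+m))⁻¹)⁻¹ from by rw [inv_inv, mul_assoc]; rfl]
  rw [conj_gg0]
  have h1 : (upP (1+m))⁻¹ 1 = -((1+m:ℕ):ℤ) := by
    rw [Equiv.Perm.inv_eq_iff_eq, upP_odd, upP_top _ hk]; ring
  have h2 : (upP (1+m))⁻¹ (-1) = ((1+m:ℕ):ℤ) := by
    rw [Equiv.Perm.inv_eq_iff_eq, upP_top _ hk]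
  rw [h1, h2, Equiv.swap_comm]

lemma transWord (a m : ℕ) (ha : 1 ≤ a) (hm : 1 ≤ m) :
    prodG ((List.range' a m).reverse ++ (List.range' a m).tail) =
      Equiv.swap (a:ℤ) ((a:ℤ)+m) * Equiv.swap (-(a:ℤ)) (-((a:ℤ)+m)) := by
  obtain ⟨m', rfl⟩ := Nat.exists_eq_add_of_le hm
  have hsp : List.range' a (1+m') = a :: List.range' (a+1) m' := by
    rw [Nat.add_comm 1 m', List.range'_succ]
  rw [hsp]
  show prodG (List.reverse (a :: List.range' (a+1) m') ++ List.range' (a+1) m') = _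
  rw [List.reverse_cons, prodG_append, prodG_append]
  have hE : prodG (List.range' (a+1) m') = (downP (a+1) m')⁻¹ := by
    rw [← inv_inv (prodG _), ← prodG_reverse]; rfl
  rw [hE, show prodG [a] = gg a from by simp [prodG]]
  rw [show prodG (List.range' (a+1) m').reverse = downP (a+1) m' from rfl, conj_gg _ a ha]
  have e1 : (downP (a+1) m') (a:ℤ) = (a:ℤ) := downP_fix_low _ _ _ (by exact_mod_cast ha) (by push_cast; omega)
  have e2 : (downP (a+1) m') ((a:ℤ)+1) = (a:ℤ) + ((1+m':ℕ):ℤ) := by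
    have h := downP_start (a+1) m' (by omega)
    push_cast at h ⊢
    rw [h]; ring
  have e3 : (downP (a+1) m') (-(a:ℤ)) = -(a:ℤ) := by rw [downP_odd, e1]
  have e4 : (downP (a+1) m') (-((a:ℤ)+1)) = -((a:ℤ) + ((1+m':ℕ):ℤ)) := by rw [downP_odd, e2]
  rw [e1, e2, e3, e4]


lemma negWord (b : ℕ) (hb : 2 ≤ b) :
    prodG ((0 :: List.range' 2 (b-2)).reverse ++ [1] ++ (0 :: List.range' 2 (b-2))) =
      Equiv.swap (-1 : ℤ) (b:ℤ) * Equiv.swap (1:ℤ) (-(b:ℤ)) := by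
  set m := b - 2 with hm
  have hb2 : (b:ℤ) = 2 + (m:ℕ) := by omega
  set F : Equiv.Perm ℤ := downP 2 m * gg 0 with hF
  have hrev : prodG ((0 :: List.range' 2 m).reverse) = F := by
    rw [List.reverse_cons, prodG_append, show prodG [0] = gg 0 from by simp [prodG]]
    rfl
  have hfwd : prodG (0 :: List.range' 2 m) = F⁻¹ := by
    rw [prodG_cons, hF, mul_inv_rev, gg_inv]
    congr 1
    rw [← inv_inv (prodG _), ← prodG_reverse]; rfl
  rw [prodG_append, prodG_append, hrev, hfwd, mul_assoc,
    show prodG [1] = gg 1 from by simp [prodG], ← mul_assoc, conj_gg F 1 le_rfl]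
  norm_num
  have g01 : gg 0 (1:ℤ) = -1 := by rw [gg_apply]; norm_num
  have g0m1 : gg 0 (-1:ℤ) = 1 := by rw [gg_apply]; norm_num
  have g02 : gg 0 (2:ℤ) = 2 := by rw [gg_apply]; norm_num
  have e1 : F (1:ℤ) = -1 := by
    rw [hF, Equiv.Perm.mul_apply, g01, downP_odd, downP_fix_low 2 m 1 le_rfl (by norm_num)]
  have hds : (downP 2 m) (2:ℤ) = (b:ℤ) := by
    have h := downP_start 2 m (by norm_num)
    push_cast at h
    rw [h, hb2]
  have e2 : F (2:ℤ) = (b:ℤ) := by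
    rw [hF, Equiv.Perm.mul_apply, g02, hds]
  have e3 : F (-(1:ℤ)) = 1 := by
    rw [hF, Equiv.Perm.mul_apply, g0m1, downP_fix_low 2 m 1 le_rfl (by norm_num)]
  have e4 : F (-2:ℤ) = -(b:ℤ) := by
    rw [hF, Equiv.Perm.mul_apply,
      show gg 0 (-2:ℤ) = -2 from by rw [gg_apply]; norm_num,
      show (-2:ℤ) = -(2:ℤ) from by norm_num, downP_odd, hds]
  rw [e1, e2, e3, e4]

lemma map_val_wordOne (n : ℕ) (hn : 1 ≤ n) :
    (wordOneB n).map Fin.val = List.range n ++ (List.range (n-1)).reverse := by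
  obtain ⟨m, rfl⟩ := Nat.exists_eq_add_of_le hn
  simp only [wordOneB, List.map_append, List.map_reverse, List.map_dropLast,
    List.map_coe_finRange_eq_range]
  congr 2
  rw [Nat.add_comm 1 m, List.range_succ, List.dropLast_concat, Nat.add_sub_cancel]

lemma t1_eq (n : ℕ) (hn : 2 ≤ n) :
    wordProdB n (wordOneB n) = Equiv.swap (-1 : ℤ) (n:ℤ) * Equiv.swap (1:ℤ) (-(n:ℤ)) := by
  rw [wordProdB_eq, map_val_wordOne n (by omega), prodG_append, prodG_reverse]
  have hsp : List.range n = List.range (n-1) ++ [n-1] := by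
    conv_lhs => rw [show n = (n-1)+1 from by omega, List.range_succ]
  rw [hsp, prodG_append, show prodG [n-1] = gg (n-1) from by simp [prodG], mul_assoc,
    ← mul_assoc]
  rw [show prodG (List.range (n-1)) = upP (n-1) from rfl, conj_gg _ (n-1) (by omega)]
  have c1 : ((n-1:ℕ):ℤ) = (n:ℤ) - 1 := by push_cast [show 1 ≤ n from by omega]; ring
  have e1 : upP (n-1) ((n-1:ℕ):ℤ) = -1 := upP_top _ (by omega)
  have e2 : upP (n-1) (((n-1:ℕ):ℤ)+1) = (n:ℤ) := by
    rw [upP_fix _ _ (by rw [c1]; omega), c1]; ring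
  have e3 : upP (n-1) (-((n-1:ℕ):ℤ)) = 1 := by rw [upP_odd, e1]; norm_num
  have e4 : upP (n-1) (-(((n-1:ℕ):ℤ)+1)) = -(n:ℤ) := by rw [upP_odd, e2]
  rw [e1, e2, e3, e4]

lemma map_val_wordTwo (n : ℕ) :
    (wordTwoB n).map Fin.val = (List.range n).reverse ++ (List.range n).tail := by
  simp only [wordTwoB, List.map_append, List.map_reverse, List.map_tail, List.map_coe_finRange_eq_range]

lemma t2_eq (n : ℕ) (hn : 1 ≤ n) :
    wordProdB n (wordTwoB n) = Equiv.swap (n:ℤ) (-(n:ℤ)) := by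
  rw [wordProdB_eq, map_val_wordTwo, signWord n hn]

noncomputable def invSet (n : ℕ) (π : Equiv.Perm ℤ) : Finset (ℤ × ℤ) :=
  (Finset.Icc (-(n:ℤ)) n ×ˢ Finset.Icc (-(n:ℤ)) n).filter
    fun p => p.1 ≠ 0 ∧ p.2 ≠ 0 ∧ p.1 < p.2 ∧ π p.2 < π p.1

noncomputable def negSet (n : ℕ) (π : Equiv.Perm ℤ) : Finset ℤ :=
  (Finset.Icc (1:ℤ) n).filter fun j => π j < 0

noncomputable def NN (n : ℕ) (π : Equiv.Perm ℤ) : ℕ := (invSet n π).card + (negSet n π).card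

lemma gg_cross (i : ℕ) (hi : 1 ≤ i) (x y : ℤ) (hxy : x < y) (h : gg i y < gg i x) :
    (x = (i:ℤ) ∧ y = (i:ℤ)+1) ∨ (x = -(i:ℤ)-1 ∧ y = -(i:ℤ)) := by
  have hi' : (1:ℤ) ≤ (i:ℤ) := by exact_mod_cast hi
  rw [gg_apply, gg_apply, if_neg (by omega), if_neg (by omega)] at h
  split_ifs at h <;> first | exact False.elim ‹False› | omega

lemma gg0_cross (x y : ℤ) (hx : x ≠ 0) (hy : y ≠ 0) (hxy : x < y) (h : gg 0 y < gg 0 x) : x = -1 ∧ y = 1 := by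
  rw [gg_apply, gg_apply, if_pos rfl, if_pos rfl] at h
  split_ifs at h <;> first | exact False.elim ‹False› | omega

lemma gg_sign (i : ℕ) (hi : 1 ≤ i) (x : ℤ) (h : gg i x < 0) : x < 0 := by
  have hi' : (1:ℤ) ≤ (i:ℤ) := by exact_mod_cast hi
  rw [gg_apply, if_neg (by omega)] at h
  split_ifs at h <;> omega

lemma gg0_sign (x : ℤ) (h : gg 0 x < 0) : x < 0 ∨ x = 1 := by
  rw [gg_apply, if_pos rfl] at h
  split_ifs at h <;> omega

lemma gg_fix0 (i : ℕ) : gg i 0 = 0 := by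
  rw [gg_apply]
  rcases Nat.eq_zero_or_pos i with h | h
  · simp [h]
  · have : (1:ℤ) ≤ (i:ℤ) := by exact_mod_cast h
    rw [if_neg h.ne']
    split_ifs <;> first | exact False.elim ‹False› | omega

lemma prodG_fix0 (L : List ℕ) : prodG L 0 = 0 := by
  induction L with
  | nil => rfl
  | cons a L ih => rw [prodG_cons, Equiv.Perm.mul_apply, ih, gg_fix0]

lemma NN_step (n : ℕ) (i : ℕ) (π : Equiv.Perm ℤ) (hπ : π 0 = 0) : NN n (gg i * π) ≤ NN n π + 2 := by
  have hval : ∀ x : ℤ, x ≠ 0 → π x ≠ 0 := by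
    intro x hx hc
    exact hx (π.injective (by rw [hπ, hc]))
  rcases Nat.eq_zero_or_pos i with hi | hi
  · subst hi
    have hinv : invSet n (gg 0 * π) ⊆ insert (π⁻¹ (-1), π⁻¹ 1) (invSet n π) := by
      intro p hp
      simp only [invSet, Finset.mem_filter, Finset.mem_product] at hp
      obtain ⟨hmem, h1, h2, hlt, hv⟩ := hp
      rw [Equiv.Perm.mul_apply, Equiv.Perm.mul_apply] at hv
      rcases lt_or_gt_of_ne (π.injective.ne (ne_of_lt hlt)) with hc | hc
      · have := gg0_cross _ _ (hval _ h1) (hval _ h2) hc hv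
        have hp1 : p.1 = π⁻¹ (-1) := by
          rw [Equiv.Perm.eq_inv_iff_eq]; exact this.1
        have hp2 : p.2 = π⁻¹ 1 := by
          rw [Equiv.Perm.eq_inv_iff_eq]; exact this.2
        rw [show p = (π⁻¹ (-1), π⁻¹ 1) from Prod.ext hp1 hp2]
        exact Finset.mem_insert_self _ _
      · apply Finset.mem_insert_of_mem
        simp only [invSet, Finset.mem_filter, Finset.mem_product]
        exact ⟨hmem, h1, h2, hlt, hc⟩
    have hneg : negSet n (gg 0 * π) ⊆ insert (π⁻¹ 1) (negSet n π) := by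
      intro j hj
      simp only [negSet, Finset.mem_filter] at hj
      obtain ⟨hmem, hv⟩ := hj
      rw [Equiv.Perm.mul_apply] at hv
      rcases gg0_sign _ hv with hc | hc
      · exact Finset.mem_insert_of_mem (by simp [negSet, Finset.mem_filter, hmem, hc])
      · have : j = π⁻¹ 1 := by rw [Equiv.Perm.eq_inv_iff_eq]; exact hc
        simp [this]
    calc NN n (gg 0 * π) ≤ (insert (π⁻¹ (-1), π⁻¹ 1) (invSet n π)).card
          + (insert (π⁻¹ 1) (negSet n π)).card :=
        Nat.add_le_add (Finset.card_le_card hinv) (Finset.card_le_card hneg)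
      _ ≤ ((invSet n π).card + 1) + ((negSet n π).card + 1) :=
        Nat.add_le_add (Finset.card_insert_le _ _) (Finset.card_insert_le _ _)
      _ = NN n π + 2 := by rw [NN]; ring
  · have hinv : invSet n (gg i * π) ⊆
        insert (π⁻¹ (i:ℤ), π⁻¹ ((i:ℤ)+1)) (insert (π⁻¹ (-(i:ℤ)-1), π⁻¹ (-(i:ℤ))) (invSet n π)) := by
      intro p hp
      simp only [invSet, Finset.mem_filter, Finset.mem_product] at hp
      obtain ⟨hmem, h1, h2, hlt, hv⟩ := hp
      rw [Equiv.Perm.mul_apply, Equiv.Perm.mul_apply] at hv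
      rcases lt_or_gt_of_ne (π.injective.ne (ne_of_lt hlt)) with hc | hc
      · rcases gg_cross i hi _ _ hc hv with ⟨ha, hb⟩ | ⟨ha, hb⟩
        · have hp1 : p.1 = π⁻¹ (i:ℤ) := by rw [Equiv.Perm.eq_inv_iff_eq]; exact ha
          have hp2 : p.2 = π⁻¹ ((i:ℤ)+1) := by rw [Equiv.Perm.eq_inv_iff_eq]; exact hb
          rw [show p = (π⁻¹ (i:ℤ), π⁻¹ ((i:ℤ)+1)) from Prod.ext hp1 hp2]
          exact Finset.mem_insert_self _ _
        · apply Finset.mem_insert_of_mem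
          have hp1 : p.1 = π⁻¹ (-(i:ℤ)-1) := by rw [Equiv.Perm.eq_inv_iff_eq]; exact ha
          have hp2 : p.2 = π⁻¹ (-(i:ℤ)) := by rw [Equiv.Perm.eq_inv_iff_eq]; exact hb
          rw [show p = (π⁻¹ (-(i:ℤ)-1), π⁻¹ (-(i:ℤ))) from Prod.ext hp1 hp2]
          exact Finset.mem_insert_self _ _
      · apply Finset.mem_insert_of_mem
        apply Finset.mem_insert_of_mem
        simp only [invSet, Finset.mem_filter, Finset.mem_product]
        exact ⟨hmem, h1, h2, hlt, hc⟩
    have hneg : negSet n (gg i * π) ⊆ negSet n π := by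
      intro j hj
      simp only [negSet, Finset.mem_filter] at hj ⊢
      exact ⟨hj.1, gg_sign i hi _ (by rw [← Equiv.Perm.mul_apply]; exact hj.2)⟩
    calc NN n (gg i * π)
        ≤ (insert (π⁻¹ (i:ℤ), π⁻¹ ((i:ℤ)+1))
            (insert (π⁻¹ (-(i:ℤ)-1), π⁻¹ (-(i:ℤ))) (invSet n π))).card + (negSet n π).card :=
        Nat.add_le_add (Finset.card_le_card hinv) (Finset.card_le_card hneg)
      _ ≤ ((invSet n π).card + 1 + 1) + (negSet n π).card := by
        have h1 := Finset.card_insert_le (π⁻¹ (i:ℤ), π⁻¹ ((i:ℤ)+1))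
          (insert (π⁻¹ (-(i:ℤ)-1), π⁻¹ (-(i:ℤ))) (invSet n π))
        have h2 := Finset.card_insert_le (π⁻¹ (-(i:ℤ)-1), π⁻¹ (-(i:ℤ))) (invSet n π)
        omega
      _ ≤ NN n π + 2 := by rw [NN]; omega

lemma NN_one (n : ℕ) : NN n 1 = 0 := by
  rw [NN]
  have h1 : invSet n 1 = ∅ := by
    ext p
    simp only [invSet, Finset.mem_filter, Finset.mem_product, Equiv.Perm.one_apply,
      Finset.notMem_empty, iff_false]
    intro hp; have := (Finset.mem_filter.mp hp).2; omega
  have h2 : negSet n 1 = ∅ := by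
    ext j
    simp only [negSet, Finset.mem_filter, Finset.mem_Icc, Equiv.Perm.one_apply,
      Finset.notMem_empty, iff_false]
    intro hp; have h := Finset.mem_filter.mp hp; have := Finset.mem_Icc.mp h.1; omega
  simp [h1, h2]

lemma NN_prodG_le (n : ℕ) (L : List ℕ) : NN n (prodG L) ≤ 2 * L.length := by
  induction L with
  | nil => simp [prodG_nil, NN_one]
  | cons a L ih =>
    rw [prodG_cons]
    calc NN n (gg a * prodG L) ≤ NN n (prodG L) + 2 := NN_step n a _ (prodG_fix0 L)
      _ ≤ 2 * L.length + 2 := by omega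
      _ = 2 * (a :: L).length := by simp [List.length_cons]; ring

lemma mem_invSet (n : ℕ) (π : Equiv.Perm ℤ) (p : ℤ × ℤ) :
    p ∈ invSet n π ↔ (-(n:ℤ) ≤ p.1 ∧ p.1 ≤ n ∧ -(n:ℤ) ≤ p.2 ∧ p.2 ≤ n ∧
      p.1 ≠ 0 ∧ p.2 ≠ 0 ∧ p.1 < p.2 ∧ π p.2 < π p.1) := by
  simp only [invSet, Finset.mem_filter, Finset.mem_product, Finset.mem_Icc]
  tauto

lemma T2_apply (n : ℕ) (x : ℤ) :
    (Equiv.swap (n:ℤ) (-(n:ℤ))) x = if x = n then -(n:ℤ) else if x = -(n:ℤ) then n else x := by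
  rw [Equiv.swap_apply_def]

lemma T1_apply (n : ℕ) (hn : 2 ≤ n) (x : ℤ) :
    (Equiv.swap (-1 : ℤ) (n:ℤ) * Equiv.swap (1:ℤ) (-(n:ℤ))) x =
      if x = 1 then -(n:ℤ) else if x = -(n:ℤ) then 1 else
      if x = -1 then (n:ℤ) else if x = n then -1 else x := by
  have hn' : (2:ℤ) ≤ (n:ℤ) := by exact_mod_cast hn
  simp only [Equiv.Perm.mul_apply, Equiv.swap_apply_def]
  split_ifs <;> first | exact False.elim ‹False› | omega

lemma NN_t2_ge (n : ℕ) (hn : 1 ≤ n) : 4 * n - 2 ≤ NN n (Equiv.swap (n:ℤ) (-(n:ℤ))) := by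
  have hn' : (1:ℤ) ≤ (n:ℤ) := by exact_mod_cast hn
  set T2 : Equiv.Perm ℤ := Equiv.swap (n:ℤ) (-(n:ℤ)) with hT2
  set A : Finset (ℤ × ℤ) := ((Finset.Icc (-(n:ℤ)+1) n).erase 0).image (fun b => (-(n:ℤ), b)) with hA
  set B : Finset (ℤ × ℤ) := ((Finset.Icc (-(n:ℤ)+1) ((n:ℤ)-1)).erase 0).image
    (fun a => (a, (n:ℤ))) with hB
  have hAsub : A ⊆ invSet n T2 := by
    intro p hp
    rw [hA, Finset.mem_image] at hp
    obtain ⟨b, hb, rfl⟩ := hp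
    rw [Finset.mem_erase, Finset.mem_Icc] at hb
    rw [mem_invSet]
    dsimp only
    have hv2 : T2 b < (n:ℤ) := by
      rw [hT2, T2_apply]; split_ifs <;> first | exact False.elim ‹False› | omega
    have hv1 : T2 (-(n:ℤ)) = (n:ℤ) := by
      rw [hT2, T2_apply]; split_ifs <;> first | exact False.elim ‹False› | omega
    refine ⟨by omega, by omega, by omega, by omega, by omega, hb.1, by omega, by rw [hv1]; exact hv2⟩
  have hBsub : B ⊆ invSet n T2 := by
    intro p hp
    rw [hB, Finset.mem_image] at hp
    obtain ⟨a, ha, rfl⟩ := hp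
    rw [Finset.mem_erase, Finset.mem_Icc] at ha
    rw [mem_invSet]
    dsimp only
    have hv2 : T2 (n:ℤ) = -(n:ℤ) := by rw [hT2, T2_apply]; split_ifs <;> first | exact False.elim ‹False› | omega
    have hv1 : T2 a = a := by rw [hT2, T2_apply]; split_ifs <;> first | exact False.elim ‹False› | omega
    exact ⟨by omega, by omega, by omega, by omega, ha.1, by omega, by omega,
      by rw [hv1, hv2]; omega⟩
  have hdisj : Disjoint A B := by
    rw [Finset.disjoint_left]
    rintro p hp hq
    rw [hA, Finset.mem_image] at hp
    rw [hB, Finset.mem_image] at hq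
    obtain ⟨b, hb, rfl⟩ := hp
    obtain ⟨a, ha, heq⟩ := hq
    rw [Finset.mem_erase, Finset.mem_Icc] at ha
    have : a = -(n:ℤ) := (Prod.mk.injEq _ _ _ _).mp heq |>.1
    omega
  have hcardA : A.card = 2 * n - 1 := by
    rw [hA, Finset.card_image_of_injective _ (fun x y h => ((Prod.mk.injEq _ _ _ _).mp h).2),
      Finset.card_erase_of_mem (by rw [Finset.mem_Icc]; omega), Int.card_Icc]
    omega
  have hcardB : B.card = 2 * n - 2 := by
    rw [hB, Finset.card_image_of_injective _ (fun x y h => ((Prod.mk.injEq _ _ _ _).mp h).1),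
      Finset.card_erase_of_mem (by rw [Finset.mem_Icc]; omega), Int.card_Icc]
    omega
  have hunion : (A ∪ B).card = 4 * n - 3 := by
    rw [Finset.card_union_of_disjoint hdisj, hcardA, hcardB]; omega
  have hinv : 4 * n - 3 ≤ (invSet n T2).card := by
    rw [← hunion]
    exact Finset.card_le_card (Finset.union_subset hAsub hBsub)
  have hneg : 1 ≤ (negSet n T2).card := by
    rw [Finset.one_le_card]
    refine ⟨(n:ℤ), ?_⟩
    simp only [negSet, Finset.mem_filter, Finset.mem_Icc]
    refine ⟨⟨hn', le_rfl⟩, ?_⟩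
    rw [hT2, T2_apply, if_pos rfl]; omega
  rw [NN]; omega

lemma NN_t1_ge (n : ℕ) (hn : 2 ≤ n) :
    4 * n - 2 ≤ NN n (Equiv.swap (-1 : ℤ) (n:ℤ) * Equiv.swap (1:ℤ) (-(n:ℤ))) := by
  have hn' : (2:ℤ) ≤ (n:ℤ) := by exact_mod_cast hn
  set T1 : Equiv.Perm ℤ := Equiv.swap (-1 : ℤ) (n:ℤ) * Equiv.swap (1:ℤ) (-(n:ℤ)) with hT1
  have happ : ∀ x : ℤ, T1 x = if x = 1 then -(n:ℤ) else if x = -(n:ℤ) then 1 else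
      if x = -1 then (n:ℤ) else if x = n then -1 else x := T1_apply n hn
  set Q1 : Finset (ℤ × ℤ) := (Finset.Icc (1:ℤ) n).image (fun b => ((-1:ℤ), b)) with hQ1
  set Q2 : Finset (ℤ × ℤ) :=
    (insert (1:ℤ) (insert (n:ℤ) (Finset.Icc (-(n:ℤ)+1) (-2)))).image
      (fun b => (-(n:ℤ), b)) with hQ2
  set Q3 : Finset (ℤ × ℤ) := (Finset.Icc (-(n:ℤ)+1) (-2)).image (fun a => (a, (1:ℤ))) with hQ3
  set Q4 : Finset (ℤ × ℤ) := (Finset.Icc (2:ℤ) ((n:ℤ)-1)).image (fun a => (a, (n:ℤ))) with hQ4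
  have hQ1sub : Q1 ⊆ invSet n T1 := by
    intro p hp
    rw [hQ1, Finset.mem_image] at hp
    obtain ⟨b, hb, rfl⟩ := hp
    rw [Finset.mem_Icc] at hb
    rw [mem_invSet]; dsimp only
    have h1 : T1 (-1:ℤ) = (n:ℤ) := by rw [happ]; split_ifs <;> first | exact False.elim ‹False› | omega
    have h2 : T1 b < (n:ℤ) := by rw [happ]; split_ifs <;> first | exact False.elim ‹False› | omega
    exact ⟨by omega, by omega, by omega, by omega, by omega, by omega, by omega, by omega⟩
  have hQ2sub : Q2 ⊆ invSet n T1 := by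
    intro p hp
    rw [hQ2, Finset.mem_image] at hp
    obtain ⟨b, hb, rfl⟩ := hp
    simp only [Finset.mem_insert, Finset.mem_Icc] at hb
    rw [mem_invSet]; dsimp only
    have h1 : T1 (-(n:ℤ)) = 1 := by rw [happ]; split_ifs <;> first | exact False.elim ‹False› | omega
    have h2 : T1 b < 1 := by rw [happ]; split_ifs <;> first | exact False.elim ‹False› | omega
    exact ⟨by omega, by omega, by omega, by omega, by omega, by omega, by omega, by omega⟩
  have hQ3sub : Q3 ⊆ invSet n T1 := by
    intro p hp
    rw [hQ3, Finset.mem_image] at hp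
    obtain ⟨a, ha, rfl⟩ := hp
    rw [Finset.mem_Icc] at ha
    rw [mem_invSet]; dsimp only
    have h1 : T1 a = a := by rw [happ]; split_ifs <;> first | exact False.elim ‹False› | omega
    have h2 : T1 (1:ℤ) = -(n:ℤ) := by rw [happ]; split_ifs <;> first | exact False.elim ‹False› | omega
    exact ⟨by omega, by omega, by omega, by omega, by omega, by omega, by omega, by omega⟩
  have hQ4sub : Q4 ⊆ invSet n T1 := by
    intro p hp
    rw [hQ4, Finset.mem_image] at hp
    obtain ⟨a, ha, rfl⟩ := hp
    rw [Finset.mem_Icc] at ha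
    rw [mem_invSet]; dsimp only
    have h1 : T1 a = a := by rw [happ]; split_ifs <;> first | exact False.elim ‹False› | omega
    have h2 : T1 (n:ℤ) = -1 := by rw [happ]; split_ifs <;> first | exact False.elim ‹False› | omega
    exact ⟨by omega, by omega, by omega, by omega, by omega, by omega, by omega, by omega⟩
  have inj1 : Function.Injective (fun b : ℤ => ((-1:ℤ), b)) :=
    fun x y h => ((Prod.mk.injEq _ _ _ _).mp h).2
  have inj2 : Function.Injective (fun b : ℤ => (-(n:ℤ), b)) :=
    fun x y h => ((Prod.mk.injEq _ _ _ _).mp h).2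
  have inj3 : Function.Injective (fun a : ℤ => (a, (1:ℤ))) :=
    fun x y h => ((Prod.mk.injEq _ _ _ _).mp h).1
  have inj4 : Function.Injective (fun a : ℤ => (a, (n:ℤ))) :=
    fun x y h => ((Prod.mk.injEq _ _ _ _).mp h).1
  have hc1 : Q1.card = n := by
    rw [hQ1, Finset.card_image_of_injective _ inj1, Int.card_Icc]; omega
  have hc2 : Q2.card = n := by
    rw [hQ2, Finset.card_image_of_injective _ inj2,
      Finset.card_insert_of_notMem (by simp only [Finset.mem_insert, Finset.mem_Icc]; omega),
      Finset.card_insert_of_notMem (by simp only [Finset.mem_Icc]; omega), Int.card_Icc]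
    omega
  have hc3 : Q3.card = n - 2 := by
    rw [hQ3, Finset.card_image_of_injective _ inj3, Int.card_Icc]; omega
  have hc4 : Q4.card = n - 2 := by
    rw [hQ4, Finset.card_image_of_injective _ inj4, Int.card_Icc]; omega
  have hd34 : Disjoint Q3 Q4 := by
    rw [Finset.disjoint_left]
    rintro p hp hq
    rw [hQ3, Finset.mem_image] at hp
    rw [hQ4, Finset.mem_image] at hq
    obtain ⟨a, ha, rfl⟩ := hp
    obtain ⟨a', ha', heq⟩ := hq
    rw [Finset.mem_Icc] at ha ha'
    have h1 := ((Prod.mk.injEq _ _ _ _).mp heq).1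
    omega
  have hd234 : Disjoint Q2 (Q3 ∪ Q4) := by
    rw [Finset.disjoint_left]
    rintro p hp hq
    rw [hQ2, Finset.mem_image] at hp
    obtain ⟨b, hb, rfl⟩ := hp
    rcases Finset.mem_union.mp hq with hq | hq
    · rw [hQ3, Finset.mem_image] at hq
      obtain ⟨a, ha, heq⟩ := hq
      rw [Finset.mem_Icc] at ha
      have h1 := ((Prod.mk.injEq _ _ _ _).mp heq).1
      omega
    · rw [hQ4, Finset.mem_image] at hq
      obtain ⟨a, ha, heq⟩ := hq
      rw [Finset.mem_Icc] at ha
      have h1 := ((Prod.mk.injEq _ _ _ _).mp heq).1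
      omega
  have hd1234 : Disjoint Q1 (Q2 ∪ (Q3 ∪ Q4)) := by
    rw [Finset.disjoint_left]
    rintro p hp hq
    rw [hQ1, Finset.mem_image] at hp
    obtain ⟨b, hb, rfl⟩ := hp
    rcases Finset.mem_union.mp hq with hq | hq
    · rw [hQ2, Finset.mem_image] at hq
      obtain ⟨a, ha, heq⟩ := hq
      have h1 := ((Prod.mk.injEq _ _ _ _).mp heq).1
      omega
    · rcases Finset.mem_union.mp hq with hq | hq
      · rw [hQ3, Finset.mem_image] at hq
        obtain ⟨a, ha, heq⟩ := hq
        rw [Finset.mem_Icc] at ha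
        have h1 := ((Prod.mk.injEq _ _ _ _).mp heq).1
        omega
      · rw [hQ4, Finset.mem_image] at hq
        obtain ⟨a, ha, heq⟩ := hq
        rw [Finset.mem_Icc] at ha
        have h1 := ((Prod.mk.injEq _ _ _ _).mp heq).1
        omega
  have hUcard : (Q1 ∪ (Q2 ∪ (Q3 ∪ Q4))).card = 4 * n - 4 := by
    rw [Finset.card_union_of_disjoint hd1234, Finset.card_union_of_disjoint hd234,
      Finset.card_union_of_disjoint hd34, hc1, hc2, hc3, hc4]
    omega
  have hinv : 4 * n - 4 ≤ (invSet n T1).card := by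
    rw [← hUcard]
    exact Finset.card_le_card (Finset.union_subset hQ1sub
      (Finset.union_subset hQ2sub (Finset.union_subset hQ3sub hQ4sub)))
  have hneg : 2 ≤ (negSet n T1).card := by
    have hsub : ({(1:ℤ), (n:ℤ)} : Finset ℤ) ⊆ negSet n T1 := by
      intro j hj
      simp only [Finset.mem_insert, Finset.mem_singleton] at hj
      simp only [negSet, Finset.mem_filter, Finset.mem_Icc]
      rcases hj with rfl | rfl
      · refine ⟨⟨le_rfl, by omega⟩, ?_⟩
        rw [happ]; split_ifs <;> first | exact False.elim ‹False› | omega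
      · refine ⟨⟨by omega, le_rfl⟩, ?_⟩
        rw [happ]; split_ifs <;> first | exact False.elim ‹False› | omega
    calc 2 = ({(1:ℤ), (n:ℤ)} : Finset ℤ).card := (Finset.card_pair (by omega)).symm
      _ ≤ (negSet n T1).card := Finset.card_le_card hsub
  rw [NN]; omega

lemma traj_high (c n : ℕ) (L : List ℕ) (hL : ∀ a ∈ L, a ≠ c ∧ a < n)
    (m : ℤ) (hm1 : (c:ℤ)+1 ≤ m) (hm2 : m ≤ n) :
    (c:ℤ)+1 ≤ prodG L m ∧ prodG L m ≤ n := by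
  induction L with
  | nil => exact ⟨hm1, hm2⟩
  | cons a L ih =>
    obtain ⟨hy1, hy2⟩ := ih (fun x hx => hL x (List.mem_cons_of_mem a hx))
    obtain ⟨hane, haltn⟩ := hL a (List.mem_cons_self (a := a) (l := L))
    have hane' : (a:ℤ) ≠ (c:ℤ) := by exact_mod_cast hane
    have haltn' : (a:ℤ) < (n:ℤ) := by exact_mod_cast haltn
    rw [prodG_cons, Equiv.Perm.mul_apply]
    set y := prodG L m with hy
    rw [gg_apply]
    split_ifs <;> omega

lemma traj_main (c : ℕ) (hc : 1 ≤ c) (L : List ℕ) (hnd : L.Nodup) (hcL : c ∉ L) :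
    (prodG L (c:ℤ) = -1 ∧ ∀ j : ℕ, j < c → j ∈ L) ∨
    (1 ≤ prodG L (c:ℤ) ∧ prodG L (c:ℤ) ≤ c ∧
      ∀ j : ℕ, prodG L (c:ℤ) ≤ (j:ℤ) → j < c → j ∈ L) := by
  induction L with
  | nil =>
    right
    simp only [prodG_nil, Equiv.Perm.one_apply]
    refine ⟨by exact_mod_cast hc, le_rfl, ?_⟩
    intro j hj hjc
    exfalso
    omega
  | cons a L ih =>
    have hnd' : L.Nodup := hnd.of_cons
    have haL : a ∉ L := (List.nodup_cons.mp hnd).1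
    have hca : c ≠ a := fun h => hcL (h ▸ List.mem_cons_self (a := a) (l := L))
    have hcL' : c ∉ L := fun h => hcL (List.mem_cons_of_mem a h)
    rw [prodG_cons, Equiv.Perm.mul_apply]
    rcases ih hnd' hcL' with ⟨hy, hful⟩ | ⟨hy1, hy2, hful⟩
    · -- y = -1 case
      left
      have hac : c < a := by
        rcases Nat.lt_or_ge a c with h | h
        · exact absurd (hful a h) haL
        · omega
      constructor
      · rw [hy]
        rw [gg_apply]
        have h1 : (c:ℤ) < (a:ℤ) := by exact_mod_cast hac
        have h2 : (1:ℤ) ≤ (c:ℤ) := by exact_mod_cast hc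
        split_ifs <;> first | exact False.elim ‹False› | omega
      · exact fun j hj => List.mem_cons_of_mem a (hful j hj)
    · -- positive case
      set y := prodG L (c:ℤ) with hydef
      have hcast : ∀ j : ℕ, (j:ℤ) < (c:ℤ) ↔ j < c := by intro j; exact_mod_cast Iff.rfl
      have haner : ¬ (y ≤ (a:ℤ) ∧ a < c) := by
        rintro ⟨h1, h2⟩
        exact haL (hful a h1 h2)
      have hanec : (a:ℤ) ≠ (c:ℤ) := by exact_mod_cast hca.symm
      rcases lt_or_ge (a:ℤ) y with hlow | hhigh
      · -- a < y
        rcases eq_or_lt_of_le (by omega : (a:ℤ) ≤ y - 1) with haeq | halt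
        · -- a = y - 1 : active move
          rcases Nat.eq_zero_or_pos a with ha0 | hapos
          · -- a = 0
            subst ha0
            simp only [Nat.cast_zero] at haeq
            have hy1' : y = 1 := by omega
            left
            constructor
            · rw [gg_apply, if_pos rfl, hy1']; norm_num
            · intro j hj
              rcases Nat.eq_zero_or_pos j with rfl | hjpos
              · exact List.mem_cons_self (a := 0) (l := L)
              · exact List.mem_cons_of_mem _ (hful j (by omega) hj)
          · -- a ≥ 1, moves y to y - 1 = a
            right
            have hga : gg a y = (a:ℤ) := by
              have ha1 : (1:ℤ) ≤ (a:ℤ) := by exact_mod_cast hapos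
              rw [gg_apply, if_neg (by omega)]
              split_ifs <;> omega
            rw [hga]
            refine ⟨by exact_mod_cast hapos, by omega, ?_⟩
            intro j hj1 hj2
            rcases Nat.eq_or_lt_of_le (by exact_mod_cast hj1 : a ≤ j) with rfl | hlt
            · exact List.mem_cons_self (a := a) (l := L)
            · exact List.mem_cons_of_mem _ (hful j (by omega) hj2)
        · -- a ≤ y - 2 : fixed
          right
          have hga : gg a y = y := by
            rw [gg_apply]
            rcases Nat.eq_zero_or_pos a with rfl | hapos
            · rw [if_pos rfl]; split_ifs <;> push_cast at halt ⊢ <;> omega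
            · have ha1 : (1:ℤ) ≤ (a:ℤ) := by exact_mod_cast hapos
              rw [if_neg (by omega)]
              split_ifs <;> omega
          rw [hga]
          exact ⟨hy1, hy2, fun j h1 h2 => List.mem_cons_of_mem _ (hful j h1 h2)⟩
      · -- a ≥ y, hence a ≥ c + 1 (since a ∉ [y, c-1] and a ≠ c)
        have hac : (c:ℤ) < (a:ℤ) := by
          rcases Nat.lt_or_ge a c with h | h
          · exfalso; exact haner ⟨hhigh, h⟩
          · have : (c:ℤ) ≤ (a:ℤ) := by exact_mod_cast h
            omega
        right
        have hga : gg a y = y := by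
          rw [gg_apply, if_neg (by omega)]
          split_ifs <;> omega
        rw [hga]
        exact ⟨hy1, hy2, fun j h1 h2 => List.mem_cons_of_mem _ (hful j h1 h2)⟩

lemma wordProdB_append (n : ℕ) (l l' : List (Fin n)) :
    wordProdB n (l ++ l') = wordProdB n l * wordProdB n l' := by
  simp [wordProdB, List.map_append]

lemma wordProdB_reverse (n : ℕ) (l : List (Fin n)) :
    wordProdB n l.reverse = (wordProdB n l)⁻¹ := by
  rw [wordProdB_eq, wordProdB_eq, List.map_reverse, prodG_reverse]

lemma wordProd_conj (n : ℕ) (l : List (Fin n)) (c : Fin n) :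
    wordProdB n (l ++ [c] ++ l.reverse) = wordProdB n l * genB n c * (wordProdB n l)⁻¹ := by
  rw [wordProdB_append, wordProdB_append, wordProdB_reverse,
    show wordProdB n [c] = genB n c from by simp [wordProdB]]

lemma toFinWord (n : ℕ) (L : List ℕ) (h : ∀ x ∈ L, x < n) :
    ∃ w : List (Fin n), wordProdB n w = prodG L ∧ w.length = L.length := by
  refine ⟨L.attach.map (fun x => (⟨x.1, h x.1 x.2⟩ : Fin n)), ?_, by simp⟩
  rw [wordProdB_eq, List.map_map]
  congr 1
  have : (Fin.val ∘ fun x : {x // x ∈ L} => (⟨x.1, h x.1 x.2⟩ : Fin n)) =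
      fun x : {x // x ∈ L} => x.1 := rfl
  rw [this]
  exact List.attach_map_subtype_val L

lemma len_one (n : ℕ) (hn : 1 ≤ n) : (wordOneB n).length = 2 * n - 1 := by
  simp only [wordOneB, List.length_append, List.length_reverse, List.length_dropLast,
    List.length_finRange]
  omega

lemma len_two (n : ℕ) (hn : 1 ≤ n) : (wordTwoB n).length = 2 * n - 1 := by
  simp only [wordTwoB, List.length_append, List.length_reverse, List.length_tail,
    List.length_finRange]
  omega

lemma NN_word_le (n : ℕ) (w : List (Fin n)) : NN n (wordProdB n w) ≤ 2 * w.length := by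
  rw [wordProdB_eq]
  have := NN_prodG_le n (w.map Fin.val)
  simpa [List.length_map] using this

lemma reduced_one (n : ℕ) (hn : 2 ≤ n) : ReducedB n (wordOneB n) := by
  intro w' hw'
  have h1 := NN_word_le n w'
  rw [hw', t1_eq n hn] at h1
  have h2 := NN_t1_ge n hn
  have h3 := len_one n (by omega)
  omega

lemma reduced_two (n : ℕ) (hn : 2 ≤ n) : ReducedB n (wordTwoB n) := by
  intro w' hw'
  have h1 := NN_word_le n w'
  rw [hw', t2_eq n (by omega)] at h1
  have h2 := NN_t2_ge n (by omega)
  have h3 := len_two n (by omega)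
  omega

lemma finRange_split_last (n : ℕ) (hn : 1 ≤ n) :
    ∃ (c : Fin n), (List.finRange n).dropLast ++ [c] = List.finRange n := by
  have hne : List.finRange n ≠ [] := by
    simp [List.finRange_eq_nil_iff]; omega
  exact ⟨(List.finRange n).getLast hne, List.dropLast_append_getLast hne⟩

lemma bool_one (n : ℕ) (hn : 2 ≤ n) : IsBooleanReflectionB n (wordProdB n (wordOneB n)) := by
  obtain ⟨c, hc⟩ := finRange_split_last n (by omega)
  have hword : wordOneB n = (List.finRange n).dropLast ++ [c] ++ ((List.finRange n).dropLast).reverse := by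
    rw [hc]; rfl
  constructor
  · exact ⟨(List.finRange n).dropLast, c, by rw [← wordProd_conj, ← hword]⟩
  · refine ⟨(List.finRange n).dropLast, c, ?_, ?_, ?_⟩
    · rw [hc]; exact List.nodup_finRange n
    · rw [← hword]; exact reduced_one n hn
    · rw [← hword]

lemma finRange_split_head (n : ℕ) (hn : 1 ≤ n) :
    ∃ (c : Fin n), c :: (List.finRange n).tail = List.finRange n ∧ c.val = 0 := by
  obtain ⟨m, rfl⟩ := Nat.exists_eq_add_of_le hn
  rw [Nat.add_comm 1 m]
  refine ⟨0, ?_, rfl⟩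
  rw [List.finRange_succ]
  rfl

lemma bool_two (n : ℕ) (hn : 2 ≤ n) : IsBooleanReflectionB n (wordProdB n (wordTwoB n)) := by
  obtain ⟨c, hc, hc0⟩ := finRange_split_head n (by omega)
  have hrev : ((List.finRange n).tail).reverse ++ [c] = (List.finRange n).reverse := by
    rw [← hc]; simp [List.reverse_cons]
  have hword : wordTwoB n =
      ((List.finRange n).tail).reverse ++ [c] ++ (((List.finRange n).tail).reverse).reverse := by
    rw [hrev, List.reverse_reverse]; rfl
  constructor
  · exact ⟨((List.finRange n).tail).reverse, c, by rw [← wordProd_conj, ← hword]⟩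
  · refine ⟨((List.finRange n).tail).reverse, c, ?_, ?_, ?_⟩
    · rw [hrev]; exact List.nodup_reverse.mpr (List.nodup_finRange n)
    · rw [← hword]; exact reduced_two n hn
    · rw [← hword]

lemma t1_ne_t2 (n : ℕ) (hn : 2 ≤ n) :
    wordProdB n (wordOneB n) ≠ wordProdB n (wordTwoB n) := by
  intro h
  rw [t1_eq n hn, t2_eq n (by omega)] at h
  have := DFunLike.congr_fun h (1:ℤ)
  rw [T1_apply n hn, T2_apply n] at this
  have hn' : (2:ℤ) ≤ (n:ℤ) := by exact_mod_cast hn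
  split_ifs at this <;> omega

lemma short_contra (n : ℕ) (w : List (Fin n)) (hredw : ReducedB n w)
    (hlenw : w.length = 2*n-1) (t : Equiv.Perm ℤ) (hprodw : wordProdB n w = t)
    (L : List ℕ) (hL : ∀ x ∈ L, x < n) (hprod : prodG L = t)
    (hshort : L.length < 2*n-1) : False := by
  obtain ⟨w', hw1, hw2⟩ := toFinWord n L hL
  have := hredw w' (by rw [hw1, hprod, hprodw])
  omega

lemma unique_bool (n : ℕ) (hn : 2 ≤ n) (t : Equiv.Perm ℤ)
    (hbool : IsBooleanReflectionB n t)
    (hmax : ∃ w : List (Fin n), ReducedB n w ∧ wordProdB n w = t ∧ w.length = 2 * n - 1) :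
    t = wordProdB n (wordOneB n) ∨ t = wordProdB n (wordTwoB n) := by
  obtain ⟨-, l, c, hnd, hredb, hprodb⟩ := hbool
  obtain ⟨w, hredw, hprodw, hlenw⟩ := hmax
  have hle1 : (l ++ [c] ++ l.reverse).length ≤ w.length :=
    hredb w (by rw [hprodw, hprodb])
  have hle2 : w.length ≤ (l ++ [c] ++ l.reverse).length :=
    hredw _ (by rw [hprodb, hprodw])
  have hlen : l.length = n - 1 := by
    simp only [List.length_append, List.length_reverse, List.length_cons,
      List.length_nil] at hle1 hle2
    omega
  have hcov : ∀ j : Fin n, j ∈ l ++ [c] := by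
    have hlc : (l ++ [c]).length = n := by
      simp only [List.length_append, List.length_cons, List.length_nil]
      omega
    have huniv : (l ++ [c]).toFinset = Finset.univ := by
      apply Finset.eq_univ_of_card
      rw [List.toFinset_card_of_nodup hnd, hlc, Fintype.card_fin]
    intro j
    rw [← List.mem_toFinset, huniv]
    exact Finset.mem_univ j
  have hcnl : c ∉ l := by
    intro hcl
    exact (List.nodup_append'.mp hnd).2.2 hcl (List.mem_singleton_self c)
  set L : List ℕ := l.map Fin.val with hLdef
  have hLnd : L.Nodup := ((List.nodup_append.mp hnd).1).map Fin.val_injective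
  have hLlt : ∀ a ∈ L, a < n := by
    intro a ha
    rw [hLdef, List.mem_map] at ha
    obtain ⟨j, -, rfl⟩ := ha
    exact j.isLt
  have hLne : ∀ a ∈ L, a ≠ c.val := by
    intro a ha heq
    rw [hLdef, List.mem_map] at ha
    obtain ⟨j, hj, rfl⟩ := ha
    exact hcnl ((Fin.val_injective heq) ▸ hj)
  have hσ : wordProdB n l = prodG L := wordProdB_eq n l
  have ht : t = prodG L * gg c.val * (prodG L)⁻¹ := by
    rw [← hprodb, wordProd_conj, hσ, genB_eq]
  set σ : Equiv.Perm ℤ := prodG L with hσdef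
  rcases Nat.eq_zero_or_pos c.val with hc0 | hc1
  · -- c = 0 : sign change
    have htraj := traj_high 0 n L
      (fun a ha => ⟨by have := hLne a ha; omega, hLlt a ha⟩) 1 (by norm_num)
      (by exact_mod_cast Nat.one_le_iff_ne_zero.mpr (by omega))
    set k : ℤ := σ 1 with hkdef
    have hodd : σ (-1) = -k := by
      rw [hkdef, hσdef, show (-1:ℤ) = -(1:ℤ) from rfl, prodG_odd]
    have ht' : t = Equiv.swap k (-k) := by
      rw [ht, hc0, conj_gg0, hodd]
    have hk1 : 1 ≤ k := by simpa using htraj.1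
    have hkn : k ≤ (n:ℤ) := htraj.2
    rcases eq_or_lt_of_le hkn with hk | hk
    · right
      rw [t2_eq n (by omega), ht', hk]
    · -- k < n : contradiction
      exfalso
      set k' : ℕ := k.toNat with hk'def
      have hkc : (k':ℤ) = k := Int.toNat_of_nonneg (by omega)
      have hk'1 : 1 ≤ k' := by omega
      have hk'n : k' < n := by omega
      apply short_contra n w hredw hlenw t hprodw
        ((List.range k').reverse ++ (List.range k').tail) ?_ ?_ ?_
      · intro x hx
        rcases List.mem_append.mp hx with hx | hx
        · have := List.mem_range.mp (List.mem_reverse.mp hx); omega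
        · have := List.mem_range.mp (List.mem_of_mem_tail hx); omega
      · rw [signWord k' hk'1, hkc, ht']
      · simp only [List.length_append, List.length_reverse, List.length_tail,
          List.length_range]
        omega
  · -- c ≥ 1
    set cc : ℕ := c.val with hccdef
    have hccn : cc < n := c.isLt
    have hbnd := traj_high cc n L (fun a ha => ⟨hLne a ha, hLlt a ha⟩) ((cc:ℤ)+1) le_rfl
      (by exact_mod_cast hccn)
    have hcLm : cc ∉ L := fun h => (hLne cc h) rfl
    have hma := traj_main cc hc1 L hLnd hcLm
    set a0 : ℤ := σ (cc:ℤ) with ha0def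
    set b : ℤ := σ ((cc:ℤ)+1) with hbdef
    have hodd1 : σ (-(cc:ℤ)) = -a0 := by rw [ha0def, hσdef, prodG_odd]
    have hodd2 : σ (-((cc:ℤ)+1)) = -b := by rw [hbdef, hσdef, prodG_odd]
    have ht' : t = Equiv.swap a0 b * Equiv.swap (-a0) (-b) := by
      rw [ht, conj_gg _ cc hc1, hodd1, hodd2]
    have hb1 : (cc:ℤ)+1 ≤ b := hbnd.1
    have hb2 : b ≤ (n:ℤ) := hbnd.2
    have hcc1 : (1:ℤ) ≤ (cc:ℤ) := by exact_mod_cast hc1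
    rcases hma with ⟨hm1, -⟩ | ⟨hp1, hp2, -⟩
    · -- a0 = -1
      rcases eq_or_lt_of_le hb2 with hbn | hbn
      · left
        rw [t1_eq n hn, ht', hm1, hbn, neg_neg]
      · -- b < n : contradiction
        exfalso
        set b' : ℕ := b.toNat with hb'def
        have hbc : (b':ℤ) = b := Int.toNat_of_nonneg (by omega)
        have hb'2 : 2 ≤ b' := by omega
        have hb'n : b' < n := by omega
        apply short_contra n w hredw hlenw t hprodw
          ((0 :: List.range' 2 (b'-2)).reverse ++ [1] ++ (0 :: List.range' 2 (b'-2))) ?_ ?_ ?_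
        · intro x hx
          have hx' : x = 0 ∨ x = 1 ∨ x ∈ List.range' 2 (b'-2) := by
            rcases List.mem_append.mp hx with hx | hx
            · rcases List.mem_append.mp hx with hx | hx
              · rcases List.mem_cons.mp (List.mem_reverse.mp hx) with h | h
                · left; exact h
                · right; right; exact h
              · right; left; exact List.mem_singleton.mp hx
            · rcases List.mem_cons.mp hx with h | h
              · left; exact h
              · right; right; exact h
          rcases hx' with rfl | rfl | hx'
          · omega
          · omega
          · have := List.mem_range'_1.mp hx'; omega
        · rw [negWord b' hb'2, hbc, ht', hm1, neg_neg]
        · simp only [List.length_append, List.length_reverse, List.length_cons,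
            List.length_range', List.length_nil]
          omega
    · -- 1 ≤ a0 ≤ cc : transposition, contradiction
      exfalso
      set a' : ℕ := a0.toNat with ha'def
      set b' : ℕ := b.toNat with hb'def
      have hac : (a':ℤ) = a0 := Int.toNat_of_nonneg (by omega)
      have hbc : (b':ℤ) = b := Int.toNat_of_nonneg (by omega)
      have ha'1 : 1 ≤ a' := by omega
      have hab : a' < b' := by omega
      have hb'n : b' ≤ n := by omega
      apply short_contra n w hredw hlenw t hprodw
        ((List.range' a' (b'-a')).reverse ++ (List.range' a' (b'-a')).tail) ?_ ?_ ?_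
      · intro x hx
        have hx' : x ∈ List.range' a' (b'-a') := by
          rcases List.mem_append.mp hx with hx | hx
          · exact List.mem_reverse.mp hx
          · exact List.mem_of_mem_tail hx
        have := List.mem_range'_1.mp hx'
        omega
      · rw [transWord a' (b'-a') ha'1 (by omega)]
        have hsum : (a':ℤ) + ((b'-a':ℕ):ℤ) = b := by omega
        rw [hsum, hac, ht']
      · simp only [List.length_append, List.length_reverse, List.length_tail,
          List.length_range']
        omega


theorem stmt6 (n : ℕ) (hn : 2 ≤ n) :
    ReducedB n (wordOneB n) ∧ ReducedB n (wordTwoB n) ∧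
    (wordOneB n).length = 2 * n - 1 ∧ (wordTwoB n).length = 2 * n - 1 ∧
    wordProdB n (wordOneB n) ≠ wordProdB n (wordTwoB n) ∧
    IsBooleanReflectionB n (wordProdB n (wordOneB n)) ∧
    IsBooleanReflectionB n (wordProdB n (wordTwoB n)) ∧
    (∀ t : Equiv.Perm ℤ, IsBooleanReflectionB n t →
      (∃ w : List (Fin n), ReducedB n w ∧ wordProdB n w = t ∧ w.length = 2 * n - 1) →
      (t = wordProdB n (wordOneB n) ∨ t = wordProdB n (wordTwoB n))) := by
  exact ⟨reduced_one n hn, reduced_two n hn, len_one n (by omega), len_two n (by omega),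
    t1_ne_t2 n hn, bool_one n hn, bool_two n hn, fun t hb hm => unique_bool n hn t hb hm⟩
end
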